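/- arXiv:2307.01340 — 6 statements merged into one kernel-verified Lean document; each statement's English description precedes it below -/
import Mathlib

section
/- For every s ∈ {0,1,…,N}, every fixed c ∈ ℝᴺ, and all r, m ∈ {1,…,n}, the curve-s Stäckel Hamiltonians are in involution with respect to the canonical Poisson bracket: Σ_{i=1}^{n} ( ∂h_r^{(s)}/∂λ_i · ∂h_m^{(s)}/∂μ_i − ∂h_r^{(s)}/∂μ_i · ∂h_m^{(s)}/∂λ_i ) = 0 at every point (λ, μ) with λ ∈ Ω. -/
open Finset Function

noncomputable section

/-- Evaluation of a Laurent polynomial `p ∈ ℝ[λ,λ⁻¹]` at a real number `x`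
(meaningful for `x ≠ 0`, using `zpow`). -/
def leval (p : LaurentPolynomial ℝ) (x : ℝ) : ℝ :=
  Finsupp.sum p.coeff fun k a => a * x ^ k

/-- The open set `Ω ⊂ ℝⁿ` of tuples with nonzero, pairwise distinct entries. -/
def Omega (n : ℕ) : Set (Fin n → ℝ) :=
  {lam | (∀ i, lam i ≠ 0) ∧ Function.Injective lam}

/-- `H` is the family of curve-`s` Stäckel Hamiltonians: it satisfies, at every point of
`Ω × ℝⁿ × ℝᴺ`, the curve-`s` separation relations
`σ(λᵢ)λᵢ⁻ˢ + Σ_{k=s+1}^{N} c_k λᵢ^{n+k-s-1} + Σ_{q=1}^{n} h_q λᵢ^{n-q}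
  + Σ_{k=1}^{s} c_k λᵢ^{k-s-1} = f(λᵢ) λᵢˢ μᵢ²`.
Here everything is 0-based: `H lam mu c q` is `h_{q+1}`, `c j` is `c_{j+1}`,
`lam i` is `λ_{i+1}`.  (These relations determine `H` uniquely on `Ω × ℝⁿ × ℝᴺ`,
by invertibility of the Vandermonde matrix.) -/
def SepSol (n N : ℕ) (f σ : LaurentPolynomial ℝ) (s : ℕ)
    (H : (Fin n → ℝ) → (Fin n → ℝ) → (Fin N → ℝ) → Fin n → ℝ) : Prop :=
  ∀ lam ∈ Omega n, ∀ (mu : Fin n → ℝ) (c : Fin N → ℝ), ∀ i : Fin n,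
    leval σ (lam i) * lam i ^ (-(s : ℤ))
      + (∑ j : Fin N,
          if s ≤ (j : ℕ) then c j * lam i ^ ((n : ℤ) + (j : ℕ) - (s : ℕ))
          else c j * lam i ^ (((j : ℕ) : ℤ) - (s : ℕ)))
      + (∑ q : Fin n, H lam mu c q * lam i ^ ((n : ℤ) - 1 - (q : ℕ)))
      = leval f (lam i) * lam i ^ (s : ℤ) * mu i ^ 2

/-- Partial derivative `∂h_r/∂λ_p`. -/
def pLam {n N : ℕ} (H : (Fin n → ℝ) → (Fin n → ℝ) → (Fin N → ℝ) → Fin n → ℝ)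
    (lam mu : Fin n → ℝ) (c : Fin N → ℝ) (r p : Fin n) : ℝ :=
  deriv (fun t => H (Function.update lam p t) mu c r) (lam p)

/-- Partial derivative `∂h_r/∂μ_p`. -/
def pMu {n N : ℕ} (H : (Fin n → ℝ) → (Fin n → ℝ) → (Fin N → ℝ) → Fin n → ℝ)
    (lam mu : Fin n → ℝ) (c : Fin N → ℝ) (r p : Fin n) : ℝ :=
  deriv (fun t => H lam (Function.update mu p t) c r) (mu p)

namespace StackelAux

def Svan (n : ℕ) (lam : Fin n → ℝ) : Matrix (Fin n) (Fin n) ℝ :=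
  Matrix.of fun i q => lam i ^ (n - 1 - (q : ℕ))

lemma Svan_apply (n : ℕ) (lam : Fin n → ℝ) (i q : Fin n) :
    Svan n lam i q = lam i ^ (n - 1 - (q : ℕ)) := rfl

lemma zpow_key {n : ℕ} (x : ℝ) (q : Fin n) :
    x ^ ((n : ℤ) - 1 - (q : ℕ)) = x ^ (n - 1 - (q : ℕ)) := by
  rw [show (n : ℤ) - 1 - (q : ℕ) = ((n - 1 - (q : ℕ) : ℕ) : ℤ) by
    have := q.isLt; omega, zpow_natCast]

lemma det_Svan_ne_zero {n : ℕ} {lam : Fin n → ℝ} (h : Function.Injective lam) :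
    (Svan n lam).det ≠ 0 := by
  have hS : Svan n lam = (Matrix.vandermonde lam).submatrix id ⇑(Fin.revPerm) := by
    ext i q
    simp only [Svan, Matrix.of_apply, Matrix.submatrix_apply, id_eq,
      Matrix.vandermonde_apply, Fin.revPerm_apply, Fin.val_rev]
    congr 1
    omega
  rw [hS, Matrix.det_permute']
  refine mul_ne_zero ?_ (Matrix.det_vandermonde_ne_zero_iff.mpr h)
  exact_mod_cast Int.cast_ne_zero.mpr (Units.ne_zero (Equiv.Perm.sign Fin.revPerm))

lemma solve_unique {n : ℕ} {lam : Fin n → ℝ} (h : Function.Injective lam)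
    {x b : Fin n → ℝ} (hx : (Svan n lam).mulVec x = b) :
    x = (Svan n lam)⁻¹.mulVec b := by
  have hd : IsUnit (Svan n lam).det := (det_Svan_ne_zero h).isUnit
  calc x = ((Svan n lam)⁻¹ * Svan n lam).mulVec x := by
        rw [Matrix.nonsing_inv_mul _ hd, Matrix.one_mulVec]
    _ = (Svan n lam)⁻¹.mulVec b := by rw [← Matrix.mulVec_mulVec, hx]

lemma prop_of_offdiag {n : ℕ} {lam : Fin n → ℝ} (h : Function.Injective lam)
    (x : Fin n → ℝ) (p : Fin n)
    (hx : ∀ i, i ≠ p → ∑ q, x q * lam i ^ (n - 1 - (q : ℕ)) = 0) :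
    ∃ A : ℝ, ∀ q, x q = A * (Svan n lam)⁻¹ q p := by
  set A : ℝ := ∑ q, x q * lam p ^ (n - 1 - (q : ℕ)) with hA
  refine ⟨A, fun q => ?_⟩
  have hb : (Svan n lam).mulVec x = fun i => if i = p then A else 0 := by
    funext i
    have h1 : (Svan n lam).mulVec x i = ∑ q, x q * lam i ^ (n - 1 - (q : ℕ)) := by
      simp [Matrix.mulVec, dotProduct, Svan_apply, mul_comm]
    rw [h1]
    by_cases hip : i = p
    · subst hip; simp [hA]
    · simp [hip, hx i hip]
  have h2 := solve_unique h hb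
  have hq := congrFun h2 q
  rw [hq]
  simp only [Matrix.mulVec, dotProduct, mul_ite, mul_zero]
  rw [Finset.sum_ite_eq' Finset.univ p (fun i => (Svan n lam)⁻¹ q i * A)]
  simp [mul_comm]

lemma sum_deriv_eq_zero {n : ℕ} (g : Fin n → ℝ → ℝ) (t0 : ℝ) (coef : Fin n → ℝ) (C : ℝ)
    (hdiff : ∀ q, DifferentiableAt ℝ (g q) t0)
    (hconst : ∀ᶠ t in nhds t0, ∑ q, g q t * coef q = C) :
    ∑ q, deriv (g q) t0 * coef q = 0 := by
  have h1 : HasDerivAt (fun t => ∑ q : Fin n, g q t * coef q)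
      (∑ q : Fin n, deriv (g q) t0 * coef q) t0 :=
    HasDerivAt.fun_sum fun q _ => ((hdiff q).hasDerivAt.mul_const (coef q))
  have h2 : deriv (fun t => ∑ q : Fin n, g q t * coef q) t0 = 0 := by
    have heq : (fun t => ∑ q : Fin n, g q t * coef q) =ᶠ[nhds t0] fun _ => C := hconst
    rw [heq.deriv_eq]
    exact deriv_const _ _
  rw [← h1.deriv]
  exact h2

lemma differentiableAt_det {n : ℕ} (M : ℝ → Matrix (Fin n) (Fin n) ℝ) (t0 : ℝ)
    (h : ∀ i j, DifferentiableAt ℝ (fun t => M t i j) t0) :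
    DifferentiableAt ℝ (fun t => (M t).det) t0 := by
  simp only [Matrix.det_apply']
  exact DifferentiableAt.fun_sum fun σ _ =>
    ((DifferentiableAt.fun_finsetProd fun i _ => h (σ i) i).const_mul _)

lemma differentiableAt_invEntry {n : ℕ} (M : ℝ → Matrix (Fin n) (Fin n) ℝ) (t0 : ℝ)
    (h : ∀ i j, DifferentiableAt ℝ (fun t => M t i j) t0)
    (hdet : (M t0).det ≠ 0) (q i : Fin n) :
    DifferentiableAt ℝ (fun t => (M t)⁻¹ q i) t0 := by
  have hd : DifferentiableAt ℝ (fun t => (M t).det) t0 := differentiableAt_det M t0 h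
  have ha : DifferentiableAt ℝ (fun t => (M t).adjugate q i) t0 := by
    simp only [Matrix.adjugate_apply]
    refine differentiableAt_det (fun t => (M t).updateRow i (Pi.single q 1)) t0 ?_
    intro a b
    by_cases hai : a = i
    · simp only [Matrix.updateRow_apply, hai, if_true]
      exact differentiableAt_const _
    · simp only [Matrix.updateRow_apply, hai, if_false]
      exact h a b
  have heq : (fun t => (M t)⁻¹ q i) = fun t => ((M t).det)⁻¹ * (M t).adjugate q i := by
    funext t
    rw [Matrix.inv_def, Ring.inverse_eq_inv]
    simp [Matrix.smul_apply]
  rw [heq]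
  exact (hd.inv hdet).mul ha

lemma differentiableAt_leval (p : LaurentPolynomial ℝ) {x : ℝ} (hx : x ≠ 0) :
    DifferentiableAt ℝ (leval p) x := by
  have h : leval p = fun y => ∑ k ∈ p.coeff.support, p.coeff k * y ^ k := rfl
  rw [h]
  exact DifferentiableAt.fun_sum fun k _ =>
    (differentiableAt_zpow.mpr (Or.inl hx)).const_mul _

/-- The right-hand side of the solved separation relations, as a function of `μ_i` and `λ_i`. -/
def beta (n N : ℕ) (f σ : LaurentPolynomial ℝ) (s : ℕ) (c : Fin N → ℝ) (muv y : ℝ) : ℝ :=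
  leval f y * y ^ (s : ℤ) * muv ^ 2 - leval σ y * y ^ (-(s : ℤ))
    - ∑ j : Fin N, (if s ≤ (j : ℕ) then c j * y ^ ((n : ℤ) + (j : ℕ) - (s : ℕ))
        else c j * y ^ (((j : ℕ) : ℤ) - (s : ℕ)))

lemma differentiableAt_beta {n N : ℕ} (f σ : LaurentPolynomial ℝ) (s : ℕ) (c : Fin N → ℝ)
    (muv : ℝ) {y : ℝ} (hy : y ≠ 0) :
    DifferentiableAt ℝ (beta n N f σ s c muv) y := by
  unfold beta
  refine DifferentiableAt.sub (DifferentiableAt.sub ?_ ?_) ?_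
  · exact ((differentiableAt_leval f hy).mul (differentiableAt_zpow.mpr (Or.inl hy))).mul_const _
  · exact (differentiableAt_leval σ hy).mul (differentiableAt_zpow.mpr (Or.inl hy))
  · refine DifferentiableAt.fun_sum fun j _ => ?_
    by_cases hj : s ≤ (j : ℕ) <;> simp only [hj, if_true, if_false] <;>
      exact (differentiableAt_zpow.mpr (Or.inl hy)).const_mul _

variable {n N : ℕ} {f σ : LaurentPolynomial ℝ} {s : ℕ}
  {H : (Fin n → ℝ) → (Fin n → ℝ) → (Fin N → ℝ) → Fin n → ℝ}

lemma sep_mulVec (hH : SepSol n N f σ s H) {lam : Fin n → ℝ} (hlam : lam ∈ Omega n)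
    (mu : Fin n → ℝ) (c : Fin N → ℝ) :
    (Svan n lam).mulVec (H lam mu c) = fun i => beta n N f σ s c (mu i) (lam i) := by
  funext i
  have h := hH lam hlam mu c i
  simp only [zpow_key] at h
  simp only [Matrix.mulVec, dotProduct, Svan_apply, beta]
  have h3 : ∑ q : Fin n, lam i ^ (n - 1 - (q : ℕ)) * H lam mu c q
      = ∑ q : Fin n, H lam mu c q * lam i ^ (n - 1 - (q : ℕ)) :=
    Finset.sum_congr rfl fun q _ => mul_comm _ _
  rw [h3]
  linarith

lemma eventually_update_mem {lam : Fin n → ℝ} (hlam : lam ∈ Omega n) (p : Fin n) :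
    ∀ᶠ t in nhds (lam p), Function.update lam p t ∈ Omega n := by
  obtain ⟨hne, hinj⟩ := hlam
  have h0 : ∀ᶠ t in nhds (lam p), t ≠ 0 := eventually_ne_nhds (hne p)
  have h1 : ∀ᶠ t in nhds (lam p), ∀ k, k ≠ p → t ≠ lam k := by
    rw [Filter.eventually_all]
    intro k
    by_cases hk : k = p
    · exact Filter.Eventually.of_forall fun t h => absurd hk h
    · exact (eventually_ne_nhds fun h => hk (hinj h).symm).mono fun t ht _ => ht
  filter_upwards [h0, h1] with t ht0 ht1
  refine ⟨fun i => ?_, fun a b hab => ?_⟩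
  · rw [Function.update_apply]
    split_ifs with h
    · exact ht0
    · exact hne i
  · by_cases ha : a = p <;> by_cases hb : b = p
    · rw [ha, hb]
    · subst ha
      rw [Function.update_self, Function.update_of_ne hb] at hab
      exact absurd hab (ht1 b hb)
    · subst hb
      rw [Function.update_self, Function.update_of_ne ha] at hab
      exact absurd hab.symm (ht1 a ha)
    · rw [Function.update_of_ne ha, Function.update_of_ne hb] at hab
      exact hinj hab

lemma pMu_prop (hH : SepSol n N f σ s H) {lam : Fin n → ℝ} (hlam : lam ∈ Omega n)
    (mu : Fin n → ℝ) (c : Fin N → ℝ) (p : Fin n) :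
    ∃ B : ℝ, ∀ q, pMu H lam mu c q p = B * (Svan n lam)⁻¹ q p := by
  obtain ⟨hne, hinj⟩ := id hlam
  set ψ : Fin n → ℝ → ℝ := fun q t =>
    (Svan n lam)⁻¹.mulVec
      (fun i => beta n N f σ s c (Function.update mu p t i) (lam i)) q with hψ
  have hHψ : ∀ t q, H lam (Function.update mu p t) c q = ψ q t := fun t q =>
    congrFun (solve_unique hinj (sep_mulVec hH hlam (Function.update mu p t) c)) q
  have hu : ∀ i, DifferentiableAt ℝ (fun t => Function.update mu p t i) (mu p) := by
    intro i
    by_cases h : i = p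
    · have h2 : (fun t => Function.update mu p t i) = fun t => t := by
        funext t; rw [h, Function.update_self]
      rw [h2]; exact differentiableAt_fun_id
    · have h2 : (fun t => Function.update mu p t i) = fun _ => mu i := by
        funext t; rw [Function.update_of_ne h]
      rw [h2]; exact differentiableAt_const _
  have hbd : ∀ i, DifferentiableAt ℝ
      (fun t => beta n N f σ s c (Function.update mu p t i) (lam i)) (mu p) := by
    intro i
    simp only [beta]
    refine DifferentiableAt.sub (DifferentiableAt.sub ?_ (differentiableAt_const _))
      (differentiableAt_const _)
    exact ((hu i).pow 2).const_mul _
  have hψdiff : ∀ q, DifferentiableAt ℝ (ψ q) (mu p) := by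
    intro q
    simp only [hψ, Matrix.mulVec, dotProduct]
    exact DifferentiableAt.fun_sum fun i _ => (hbd i).const_mul _
  have key : ∀ i, i ≠ p → ∑ q, deriv (ψ q) (mu p) * lam i ^ (n - 1 - (q : ℕ)) = 0 := by
    intro i hip
    refine sum_deriv_eq_zero ψ (mu p) _ (beta n N f σ s c (mu i) (lam i)) hψdiff
      (Filter.Eventually.of_forall fun t => ?_)
    have h1 := congrFun (sep_mulVec hH hlam (Function.update mu p t) c) i
    simp only [Matrix.mulVec, dotProduct, Svan_apply] at h1
    rw [Function.update_of_ne hip] at h1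
    rw [← h1]
    exact Finset.sum_congr rfl fun q _ => by rw [← hHψ t q, mul_comm]
  have hx : ∀ q, pMu H lam mu c q p = deriv (ψ q) (mu p) := by
    intro q
    unfold pMu
    congr 1
    funext t
    exact hHψ t q
  obtain ⟨B, hB⟩ := prop_of_offdiag hinj (fun q => deriv (ψ q) (mu p)) p key
  exact ⟨B, fun q => by rw [hx q]; exact hB q⟩

lemma pLam_prop (hH : SepSol n N f σ s H) {lam : Fin n → ℝ} (hlam : lam ∈ Omega n)
    (mu : Fin n → ℝ) (c : Fin N → ℝ) (p : Fin n) :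
    ∃ A : ℝ, ∀ q, pLam H lam mu c q p = A * (Svan n lam)⁻¹ q p := by
  obtain ⟨hne, hinj⟩ := id hlam
  set t0 := lam p with ht0
  set φ : Fin n → ℝ → ℝ := fun q t =>
    (Svan n (Function.update lam p t))⁻¹.mulVec
      (fun i => beta n N f σ s c (mu i) (Function.update lam p t i)) q with hφ
  have hev := eventually_update_mem hlam p
  have hHφ : ∀ᶠ t in nhds t0, ∀ q, H (Function.update lam p t) mu c q = φ q t := by
    filter_upwards [hev] with t ht q
    exact congrFun (solve_unique ht.2 (sep_mulVec hH ht mu c)) q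
  have hu : ∀ i, DifferentiableAt ℝ (fun t => Function.update lam p t i) t0 := by
    intro i
    by_cases h : i = p
    · have h2 : (fun t => Function.update lam p t i) = fun t => t := by
        funext t; rw [h, Function.update_self]
      rw [h2]; exact differentiableAt_fun_id
    · have h2 : (fun t => Function.update lam p t i) = fun _ => lam i := by
        funext t; rw [Function.update_of_ne h]
      rw [h2]; exact differentiableAt_const _
  have hupdt0 : Function.update lam p t0 = lam := Function.update_eq_self p lam
  have hentry : ∀ i q : Fin n,
      DifferentiableAt ℝ (fun t => Svan n (Function.update lam p t) i q) t0 := by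
    intro i q
    simp only [Svan_apply]
    exact (hu i).pow _
  have hdet0 : (Svan n (Function.update lam p t0)).det ≠ 0 := by
    rw [hupdt0]; exact det_Svan_ne_zero hinj
  have hbd : ∀ i, DifferentiableAt ℝ
      (fun t => beta n N f σ s c (mu i) (Function.update lam p t i)) t0 := by
    intro i
    have hvy : Function.update lam p t0 i ≠ 0 := by rw [hupdt0]; exact hne i
    exact DifferentiableAt.comp t0 (differentiableAt_beta f σ s c (mu i) hvy) (hu i)
  have hφdiff : ∀ q, DifferentiableAt ℝ (φ q) t0 := by
    intro q
    simp only [hφ, Matrix.mulVec, dotProduct]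
    refine DifferentiableAt.fun_sum fun i _ => DifferentiableAt.mul ?_ (hbd i)
    exact differentiableAt_invEntry (fun t => Svan n (Function.update lam p t)) t0 hentry hdet0 q i
  have key : ∀ i, i ≠ p → ∑ q, deriv (φ q) t0 * lam i ^ (n - 1 - (q : ℕ)) = 0 := by
    intro i hip
    refine sum_deriv_eq_zero φ t0 _ (beta n N f σ s c (mu i) (lam i)) hφdiff ?_
    filter_upwards [hev, hHφ] with t ht htq
    have h1 := congrFun (sep_mulVec hH ht mu c) i
    simp only [Matrix.mulVec, dotProduct, Svan_apply] at h1
    rw [Function.update_of_ne hip] at h1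
    rw [← h1]
    exact Finset.sum_congr rfl fun q _ => by rw [← htq q, mul_comm]
  have hx : ∀ q, pLam H lam mu c q p = deriv (φ q) t0 := by
    intro q
    have heq : (fun t => H (Function.update lam p t) mu c q) =ᶠ[nhds t0] φ q :=
      hHφ.mono fun t ht => ht q
    exact heq.deriv_eq
  obtain ⟨A, hA⟩ := prop_of_offdiag hinj (fun q => deriv (φ q) t0) p key
  exact ⟨A, fun q => by rw [hx q]; exact hA q⟩

end StackelAux

/-- for every `s ∈ {0,…,N}`, fixed `c`, and all `r, m ∈ {1,…,n}`, the curve-`s`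
Stäckel Hamiltonians are in involution w.r.t. the canonical Poisson bracket:
`Σᵢ (∂h_r^{(s)}/∂λᵢ ∂h_m^{(s)}/∂μᵢ - ∂h_r^{(s)}/∂μᵢ ∂h_m^{(s)}/∂λᵢ) = 0` on `Ω × ℝⁿ × ℝᴺ`. -/
theorem stackel_hamiltonians_in_involution
    (n N : ℕ) (hn : 1 ≤ n) (hN1 : 1 ≤ N) (hNn : N ≤ n)
    (f σ : LaurentPolynomial ℝ) (s : ℕ) (hsN : s ≤ N)
    (H : (Fin n → ℝ) → (Fin n → ℝ) → (Fin N → ℝ) → Fin n → ℝ)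
    (hH : SepSol n N f σ s H)
    (lam : Fin n → ℝ) (hlam : lam ∈ Omega n) (mu : Fin n → ℝ) (c : Fin N → ℝ)
    (r m : Fin n) :
    ∑ i : Fin n,
      (pLam H lam mu c r i * pMu H lam mu c m i
        - pMu H lam mu c r i * pLam H lam mu c m i) = 0 := by
  refine Finset.sum_eq_zero fun p _ => ?_
  obtain ⟨A, hA⟩ := StackelAux.pLam_prop hH hlam mu c p
  obtain ⟨B, hB⟩ := StackelAux.pMu_prop hH hlam mu c p
  rw [hA r, hA m, hB r, hB m]
  ring
end
end

section
/- Let 0 ≤ r < s ≤ N, let λ ∈ ℝ \ {0}, μ ∈ ℝ, h ∈ ℝⁿ, c ∈ ℝᴺ, and define μ̄ = λ^{r−s} μ, c̄_i = h_{n+r−i+1} for i = r+1,…,s, c̄_i = c_i for i ∈ {1,…,r} ∪ {s+1,…,N}, h̄_i = c_{s−i+1} for i = 1,…,s−r, and h̄_i = h_{i−(s−r)} for i = s−r+1,…,n. Then the curve-r equation σ(λ)λ^{−r} + Σ_{k=r+1}^{N} c_k λ^{n+k−r−1} + Σ_{q=1}^{n} h_q λ^{n−q} + Σ_{k=1}^{r}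 c_k λ^{k−r−1} = f(λ) λ^{r} μ² holds if and only if the curve-s equation σ(λ)λ^{−s} + Σ_{k=s+1}^{N} c̄_k λ^{n+k−s−1} + Σ_{q=1}^{n} h̄_q λ^{n−q} + Σ_{k=1}^{s} c̄_k λ^{k−s−1} = f(λ) λ^{s} μ̄² holds. -/
open Finset Function

noncomputable section

/-- the Miura map between the curve-`r` and the curve-`s` separation curves.
For `0 ≤ r < s ≤ N`, `λ ≠ 0`, with `μ̄ = λ^{r-s} μ` and the stated relabeling of the
parameters `c` and Hamiltonian values `h` (all 1-based in the paper, 0-based here), the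
curve-`r` equation holds iff the curve-`s` equation holds. -/
theorem miura_map_between_curves
    (n N : ℕ) (hn : 1 ≤ n) (hN1 : 1 ≤ N) (hNn : N ≤ n)
    (f σ : LaurentPolynomial ℝ)
    (r s : ℕ) (hrs : r < s) (hsN : s ≤ N)
    (lam : ℝ) (hlam : lam ≠ 0) (mu : ℝ)
    (h : Fin n → ℝ) (c : Fin N → ℝ)
    (mubar : ℝ) (hmubar : mubar = lam ^ ((r : ℤ) - (s : ℕ)) * mu)
    (cbar : Fin N → ℝ) (hbar : Fin n → ℝ)
    -- `c̄_i = h_{n+r-i+1}` for `i = r+1, …, s` (1-based):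
    (hcbar1 : ∀ (i : Fin N) (h1 : r ≤ (i : ℕ)) (h2 : (i : ℕ) < s),
      cbar i = h ⟨n + r - (i : ℕ) - 1, by omega⟩)
    -- `c̄_i = c_i` for `i ∈ {1, …, r} ∪ {s+1, …, N}` (1-based):
    (hcbar2 : ∀ i : Fin N, (i : ℕ) < r ∨ s ≤ (i : ℕ) → cbar i = c i)
    -- `h̄_i = c_{s-i+1}` for `i = 1, …, s-r` (1-based):
    (hhbar1 : ∀ (i : Fin n) (h1 : (i : ℕ) < s - r),
      hbar i = c ⟨s - (i : ℕ) - 1, by omega⟩)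
    -- `h̄_i = h_{i-(s-r)}` for `i = s-r+1, …, n` (1-based):
    (hhbar2 : ∀ (i : Fin n) (h1 : s - r ≤ (i : ℕ)),
      hbar i = h ⟨(i : ℕ) - (s - r), by have := i.isLt; omega⟩) :
    -- the curve-`r` equation:
    (leval σ lam * lam ^ (-(r : ℤ))
      + (∑ j : Fin N,
          if r ≤ (j : ℕ) then c j * lam ^ ((n : ℤ) + (j : ℕ) - (r : ℕ))
          else c j * lam ^ (((j : ℕ) : ℤ) - (r : ℕ)))
      + (∑ q : Fin n, h q * lam ^ ((n : ℤ) - 1 - (q : ℕ)))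
      = leval f lam * lam ^ (r : ℤ) * mu ^ 2)
    ↔
    -- the curve-`s` equation:
    (leval σ lam * lam ^ (-(s : ℤ))
      + (∑ j : Fin N,
          if s ≤ (j : ℕ) then cbar j * lam ^ ((n : ℤ) + (j : ℕ) - (s : ℕ))
          else cbar j * lam ^ (((j : ℕ) : ℤ) - (s : ℕ)))
      + (∑ q : Fin n, hbar q * lam ^ ((n : ℤ) - 1 - (q : ℕ)))
      = leval f lam * lam ^ (s : ℤ) * mubar ^ 2) := by
  
  classical
  have hxne : lam ^ ((r : ℤ) - (s : ℕ)) ≠ 0 := zpow_ne_zero _ hlam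
  -- coefficient functions extended to ℕ
  set C : ℕ → ℝ := fun j => if hj : j < N then c ⟨j, hj⟩ else 0 with hCdef
  set Cb : ℕ → ℝ := fun j => if hj : j < N then cbar ⟨j, hj⟩ else 0 with hCbdef
  set Hh : ℕ → ℝ := fun q => if hq : q < n then h ⟨q, hq⟩ else 0 with hHdef
  set Hb : ℕ → ℝ := fun q => if hq : q < n then hbar ⟨q, hq⟩ else 0 with hHbdef
  have hCb1 : ∀ j : ℕ, j < r ∨ s ≤ j → Cb j = C j := by
    intro j hj
    by_cases hjN : j < N
    · simp only [hCbdef, hCdef, dif_pos hjN]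
      exact hcbar2 ⟨j, hjN⟩ hj
    · simp [hCbdef, hCdef, dif_neg hjN]
  have hCb2 : ∀ j : ℕ, r ≤ j → j < s → Cb j = Hh (n + r - j - 1) := by
    intro j h1 h2
    have hjN : j < N := lt_of_lt_of_le h2 hsN
    have hx : n + r - j - 1 < n := by omega
    simp only [hCbdef, hHdef, dif_pos hjN, dif_pos hx]
    exact hcbar1 ⟨j, hjN⟩ h1 h2
  have hHb1 : ∀ q : ℕ, q < s - r → Hb q = C (s - q - 1) := by
    intro q h1
    have hqn : q < n := by omega
    have hx : s - q - 1 < N := by omega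
    simp only [hHbdef, hCdef, dif_pos hqn, dif_pos hx]
    exact hhbar1 ⟨q, hqn⟩ h1
  have hHb2 : ∀ q : ℕ, s - r ≤ q → q < n → Hb q = Hh (q - (s - r)) := by
    intro q h1 h2
    have hx : q - (s - r) < n := by omega
    simp only [hHbdef, hHdef, dif_pos h2, dif_pos hx]
    exact hhbar2 ⟨q, h2⟩ h1
  -- splitting lemmas
  have splitN : ∀ F : ℕ → ℝ, ∑ j ∈ Finset.range N, F j =
      ((∑ j ∈ Finset.Ico 0 r, F j) + ∑ j ∈ Finset.Ico r s, F j) + ∑ j ∈ Finset.Ico s N, F j := by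
    intro F
    rw [Finset.range_eq_Ico, ← Finset.sum_Ico_consecutive F (Nat.zero_le s) hsN,
      ← Finset.sum_Ico_consecutive F (Nat.zero_le r) (le_of_lt hrs)]
  have splitn : ∀ F : ℕ → ℝ, ∑ q ∈ Finset.range n, F q =
      (∑ q ∈ Finset.Ico 0 (s - r), F q) + ∑ q ∈ Finset.Ico (s - r) n, F q := by
    intro F
    rw [Finset.range_eq_Ico, ← Finset.sum_Ico_consecutive F (Nat.zero_le (s - r)) (by omega : s - r ≤ n)]
  have splitn' : ∀ F : ℕ → ℝ, ∑ q ∈ Finset.range n, F q =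
      (∑ q ∈ Finset.Ico 0 (n - (s - r)), F q) + ∑ q ∈ Finset.Ico (n - (s - r)) n, F q := by
    intro F
    rw [Finset.range_eq_Ico, ← Finset.sum_Ico_consecutive F (Nat.zero_le _) (Nat.sub_le n (s - r))]
  -- conversions of the Fin sums to range sums
  have tCs : (∑ j : Fin N, if s ≤ (j : ℕ) then cbar j * lam ^ ((n : ℤ) + (j : ℕ) - (s : ℕ))
        else cbar j * lam ^ (((j : ℕ) : ℤ) - (s : ℕ)))
      = ∑ j ∈ Finset.range N, (if s ≤ j then Cb j * lam ^ ((n : ℤ) + (j : ℤ) - (s : ℤ))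
        else Cb j * lam ^ ((j : ℤ) - (s : ℤ))) := by
    rw [← Fin.sum_univ_eq_sum_range (fun j => if s ≤ j then Cb j * lam ^ ((n : ℤ) + (j : ℤ) - (s : ℤ))
        else Cb j * lam ^ ((j : ℤ) - (s : ℤ))) N]
    refine Finset.sum_congr rfl fun j _ => ?_
    simp [hCbdef, j.isLt]
  have tCr : (∑ j : Fin N, if r ≤ (j : ℕ) then c j * lam ^ ((n : ℤ) + (j : ℕ) - (r : ℕ))
        else c j * lam ^ (((j : ℕ) : ℤ) - (r : ℕ)))
      = ∑ j ∈ Finset.range N, (if r ≤ j then C j * lam ^ ((n : ℤ) + (j : ℤ) - (r : ℤ))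
        else C j * lam ^ ((j : ℤ) - (r : ℤ))) := by
    rw [← Fin.sum_univ_eq_sum_range (fun j => if r ≤ j then C j * lam ^ ((n : ℤ) + (j : ℤ) - (r : ℤ))
        else C j * lam ^ ((j : ℤ) - (r : ℤ))) N]
    refine Finset.sum_congr rfl fun j _ => ?_
    simp [hCdef, j.isLt]
  have tHs : (∑ q : Fin n, hbar q * lam ^ ((n : ℤ) - 1 - (q : ℕ)))
      = ∑ q ∈ Finset.range n, Hb q * lam ^ ((n : ℤ) - 1 - (q : ℤ)) := by
    rw [← Fin.sum_univ_eq_sum_range (fun q => Hb q * lam ^ ((n : ℤ) - 1 - (q : ℤ))) n]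
    refine Finset.sum_congr rfl fun q _ => ?_
    simp [hHbdef, q.isLt]
  have tHr : (∑ q : Fin n, h q * lam ^ ((n : ℤ) - 1 - (q : ℕ)))
      = ∑ q ∈ Finset.range n, Hh q * lam ^ ((n : ℤ) - 1 - (q : ℤ)) := by
    rw [← Fin.sum_univ_eq_sum_range (fun q => Hh q * lam ^ ((n : ℤ) - 1 - (q : ℤ))) n]
    refine Finset.sum_congr rfl fun q _ => ?_
    simp [hHdef, q.isLt]
  -- the decompositions
  have dS1 : (∑ j ∈ Finset.range N, (if s ≤ j then Cb j * lam ^ ((n : ℤ) + (j : ℤ) - (s : ℤ))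
        else Cb j * lam ^ ((j : ℤ) - (s : ℤ))))
      = ((∑ j ∈ Finset.Ico 0 r, C j * lam ^ ((j : ℤ) - (s : ℤ)))
        + ∑ j ∈ Finset.Ico r s, Hh (n + r - j - 1) * lam ^ ((j : ℤ) - (s : ℤ)))
        + ∑ j ∈ Finset.Ico s N, C j * lam ^ ((n : ℤ) + (j : ℤ) - (s : ℤ)) := by
    refine (splitN _).trans ?_
    congr 1
    · congr 1
      · refine Finset.sum_congr rfl fun j hj => ?_
        simp only [Finset.mem_Ico] at hj
        rw [if_neg (by omega : ¬ s ≤ j), hCb1 j (Or.inl hj.2)]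
      · refine Finset.sum_congr rfl fun j hj => ?_
        simp only [Finset.mem_Ico] at hj
        rw [if_neg (by omega : ¬ s ≤ j), hCb2 j hj.1 hj.2]
    · refine Finset.sum_congr rfl fun j hj => ?_
      simp only [Finset.mem_Ico] at hj
      rw [if_pos hj.1, hCb1 j (Or.inr hj.1)]
  have dS2 : (∑ q ∈ Finset.range n, Hb q * lam ^ ((n : ℤ) - 1 - (q : ℤ)))
      = (∑ q ∈ Finset.Ico 0 (s - r), C (s - q - 1) * lam ^ ((n : ℤ) - 1 - (q : ℤ)))
        + ∑ q ∈ Finset.Ico (s - r) n, Hh (q - (s - r)) * lam ^ ((n : ℤ) - 1 - (q : ℤ)) := by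
    refine (splitn _).trans ?_
    congr 1
    · refine Finset.sum_congr rfl fun q hq => ?_
      simp only [Finset.mem_Ico] at hq
      rw [hHb1 q hq.2]
    · refine Finset.sum_congr rfl fun q hq => ?_
      simp only [Finset.mem_Ico] at hq
      rw [hHb2 q hq.1 hq.2]
  have pC : ∀ j ∈ Finset.range N,
      lam ^ ((r : ℤ) - (s : ℕ)) * (if r ≤ j then C j * lam ^ ((n : ℤ) + (j : ℤ) - (r : ℤ))
        else C j * lam ^ ((j : ℤ) - (r : ℤ)))
      = (if r ≤ j then C j * lam ^ ((n : ℤ) + (j : ℤ) - (s : ℤ))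
        else C j * lam ^ ((j : ℤ) - (s : ℤ))) := by
    intro j _
    by_cases hj : r ≤ j
    · rw [if_pos hj, if_pos hj, mul_left_comm, ← zpow_add₀ hlam,
        show ((r : ℤ) - (s : ℕ)) + ((n : ℤ) + (j : ℤ) - (r : ℤ)) = (n : ℤ) + (j : ℤ) - (s : ℤ) from by ring]
    · rw [if_neg hj, if_neg hj, mul_left_comm, ← zpow_add₀ hlam,
        show ((r : ℤ) - (s : ℕ)) + ((j : ℤ) - (r : ℤ)) = (j : ℤ) - (s : ℤ) from by ring]
  have pH : ∀ q ∈ Finset.range n,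
      lam ^ ((r : ℤ) - (s : ℕ)) * (Hh q * lam ^ ((n : ℤ) - 1 - (q : ℤ)))
      = Hh q * lam ^ ((n : ℤ) - 1 - (q : ℤ) + ((r : ℤ) - (s : ℤ))) := by
    intro q _
    rw [mul_left_comm, ← zpow_add₀ hlam,
      show ((r : ℤ) - (s : ℕ)) + ((n : ℤ) - 1 - (q : ℤ)) = (n : ℤ) - 1 - (q : ℤ) + ((r : ℤ) - (s : ℤ)) from by ring]
  have dS3 : lam ^ ((r : ℤ) - (s : ℕ)) * (∑ j ∈ Finset.range N,
        (if r ≤ j then C j * lam ^ ((n : ℤ) + (j : ℤ) - (r : ℤ)) else C j * lam ^ ((j : ℤ) - (r : ℤ))))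
      = ((∑ j ∈ Finset.Ico 0 r, C j * lam ^ ((j : ℤ) - (s : ℤ)))
        + ∑ j ∈ Finset.Ico r s, C j * lam ^ ((n : ℤ) + (j : ℤ) - (s : ℤ)))
        + ∑ j ∈ Finset.Ico s N, C j * lam ^ ((n : ℤ) + (j : ℤ) - (s : ℤ)) := by
    rw [Finset.mul_sum]
    refine (Finset.sum_congr rfl pC).trans ?_
    refine (splitN _).trans ?_
    congr 1
    · congr 1
      · refine Finset.sum_congr rfl fun j hj => ?_
        simp only [Finset.mem_Ico] at hj
        rw [if_neg (by omega : ¬ r ≤ j)]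
      · refine Finset.sum_congr rfl fun j hj => ?_
        simp only [Finset.mem_Ico] at hj
        rw [if_pos hj.1]
    · refine Finset.sum_congr rfl fun j hj => ?_
      simp only [Finset.mem_Ico] at hj
      rw [if_pos (by omega : r ≤ j)]
  have dS4 : lam ^ ((r : ℤ) - (s : ℕ)) * (∑ q ∈ Finset.range n, Hh q * lam ^ ((n : ℤ) - 1 - (q : ℤ)))
      = (∑ q ∈ Finset.Ico 0 (n - (s - r)), Hh q * lam ^ ((n : ℤ) - 1 - (q : ℤ) + ((r : ℤ) - (s : ℤ))))
        + ∑ q ∈ Finset.Ico (n - (s - r)) n, Hh q * lam ^ ((n : ℤ) - 1 - (q : ℤ) + ((r : ℤ) - (s : ℤ))) := by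
    rw [Finset.mul_sum]
    refine (Finset.sum_congr rfl pH).trans ?_
    exact splitn' _
  -- the three reindexings
  have x1 : (∑ j ∈ Finset.Ico r s, C j * lam ^ ((n : ℤ) + (j : ℤ) - (s : ℤ)))
      = ∑ q ∈ Finset.Ico 0 (s - r), C (s - q - 1) * lam ^ ((n : ℤ) - 1 - (q : ℤ)) := by
    rw [Finset.sum_Ico_eq_sum_range, Finset.sum_Ico_eq_sum_range]
    simp only [Nat.sub_zero, Nat.zero_add, zero_add]
    conv_lhs => rw [← Finset.sum_range_reflect]
    refine Finset.sum_congr rfl fun k hk => ?_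
    simp only [Finset.mem_range] at hk
    rw [show r + (s - r - 1 - k) = s - k - 1 by omega,
      show (n : ℤ) + ((s - k - 1 : ℕ) : ℤ) - (s : ℤ) = (n : ℤ) - 1 - ((k : ℕ) : ℤ) by omega]
  have x2 : (∑ q ∈ Finset.Ico (s - r) n, Hh (q - (s - r)) * lam ^ ((n : ℤ) - 1 - (q : ℤ)))
      = ∑ q ∈ Finset.Ico 0 (n - (s - r)), Hh q * lam ^ ((n : ℤ) - 1 - (q : ℤ) + ((r : ℤ) - (s : ℤ))) := by
    rw [Finset.sum_Ico_eq_sum_range, Finset.sum_Ico_eq_sum_range]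
    simp only [Nat.sub_zero, Nat.zero_add, zero_add]
    refine Finset.sum_congr rfl fun k hk => ?_
    simp only [Finset.mem_range] at hk
    rw [show s - r + k - (s - r) = k by omega,
      show (n : ℤ) - 1 - ((s - r + k : ℕ) : ℤ) = (n : ℤ) - 1 - ((k : ℕ) : ℤ) + ((r : ℤ) - (s : ℤ)) by omega]
  have x3 : (∑ j ∈ Finset.Ico r s, Hh (n + r - j - 1) * lam ^ ((j : ℤ) - (s : ℤ)))
      = ∑ q ∈ Finset.Ico (n - (s - r)) n, Hh q * lam ^ ((n : ℤ) - 1 - (q : ℤ) + ((r : ℤ) - (s : ℤ))) := by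
    rw [Finset.sum_Ico_eq_sum_range, Finset.sum_Ico_eq_sum_range,
      show n - (n - (s - r)) = s - r by omega]
    conv_lhs => rw [← Finset.sum_range_reflect]
    refine Finset.sum_congr rfl fun k hk => ?_
    simp only [Finset.mem_range] at hk
    rw [show n + r - (r + (s - r - 1 - k)) - 1 = n - (s - r) + k by omega,
      show ((r + (s - r - 1 - k) : ℕ) : ℤ) - (s : ℤ)
        = (n : ℤ) - 1 - ((n - (s - r) + k : ℕ) : ℤ) + ((r : ℤ) - (s : ℤ)) by omega]
  -- the main sum identity
  have hSum : (∑ j ∈ Finset.range N, (if s ≤ j then Cb j * lam ^ ((n : ℤ) + (j : ℤ) - (s : ℤ))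
        else Cb j * lam ^ ((j : ℤ) - (s : ℤ))))
      + (∑ q ∈ Finset.range n, Hb q * lam ^ ((n : ℤ) - 1 - (q : ℤ)))
      = lam ^ ((r : ℤ) - (s : ℕ)) * (∑ j ∈ Finset.range N,
          (if r ≤ j then C j * lam ^ ((n : ℤ) + (j : ℤ) - (r : ℤ)) else C j * lam ^ ((j : ℤ) - (r : ℤ))))
        + lam ^ ((r : ℤ) - (s : ℕ)) * (∑ q ∈ Finset.range n, Hh q * lam ^ ((n : ℤ) - 1 - (q : ℤ))) := by
    rw [dS1, dS2, dS3, dS4, x1, x2, x3]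
    ring
  -- the scalar identities
  have hσz : lam ^ (-(s : ℤ)) = lam ^ ((r : ℤ) - (s : ℕ)) * lam ^ (-(r : ℤ)) := by
    rw [← zpow_add₀ hlam]
    congr 1
    ring
  have hz : lam ^ (s : ℤ) * (lam ^ ((r : ℤ) - (s : ℕ)) * lam ^ ((r : ℤ) - (s : ℕ)))
      = lam ^ ((r : ℤ) - (s : ℕ)) * lam ^ (r : ℤ) := by
    rw [← zpow_add₀ hlam, ← zpow_add₀ hlam, ← zpow_add₀ hlam]
    congr 1
    ring
  have keyR : leval f lam * lam ^ (s : ℤ) * mubar ^ 2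
      = lam ^ ((r : ℤ) - (s : ℕ)) * (leval f lam * lam ^ (r : ℤ) * mu ^ 2) := by
    rw [hmubar]
    linear_combination (leval f lam * mu ^ 2) * hz
  rw [tCs, tHs, tCr, tHr, keyR]
  have keyL : leval σ lam * lam ^ (-(s : ℤ))
      + (∑ j ∈ Finset.range N, (if s ≤ j then Cb j * lam ^ ((n : ℤ) + (j : ℤ) - (s : ℤ))
          else Cb j * lam ^ ((j : ℤ) - (s : ℤ))))
      + (∑ q ∈ Finset.range n, Hb q * lam ^ ((n : ℤ) - 1 - (q : ℤ)))
      = lam ^ ((r : ℤ) - (s : ℕ)) * (leval σ lam * lam ^ (-(r : ℤ))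
        + (∑ j ∈ Finset.range N, (if r ≤ j then C j * lam ^ ((n : ℤ) + (j : ℤ) - (r : ℤ))
            else C j * lam ^ ((j : ℤ) - (r : ℤ))))
        + (∑ q ∈ Finset.range n, Hh q * lam ^ ((n : ℤ) - 1 - (q : ℤ)))) := by
    linear_combination hSum + leval σ lam * hσz
  rw [keyL]
  exact (mul_right_inj' hxne).symm
end
end

section
/- Let s ∈ {1,…,N}. For every (λ, μ, c) ∈ Ω × ℝⁿ × ℝᴺ, the curve-s Hamiltonians pull back under the Miura map M_{0→s} as: h_i^{(s)}( M_{0→s}(λ, μ, c) ) = c_{s−i+1} for i = 1,…,s, and h_i^{(s)}( M_{0→s}(λ, μ, c) ) = h_{i−s}(λ, μ, c) for i = s+1,…,n. -/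
open Finset Function

noncomputable section

/-- The extended phase space `ℝⁿ × ℝⁿ × ℝᴺ` (coordinates `(λ, μ, c)`). -/
abbrev PhaseP (n N : ℕ) := (Fin n → ℝ) × (Fin n → ℝ) × (Fin N → ℝ)

/-- The Miura map `M_{r→s}` on the extended phase space (for `r ≤ s ≤ N ≤ n`), built from
the curve-`r` Hamiltonians `Hr`:  `λ̄ᵢ = λᵢ`, `μ̄ᵢ = λᵢ^{r-s} μᵢ`,
`c̄ᵢ = h^{(r)}_{n+r-i+1}` for `i = r+1,…,s` and `c̄ᵢ = cᵢ` otherwise (1-based indexing;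
internally 0-based).  For `r = 0` this is `M_{0→s}`, and `M_{0→0}` is the identity. -/
def Mrs (n N : ℕ) (hn : 1 ≤ n) (r s : ℕ)
    (Hr : (Fin n → ℝ) → (Fin n → ℝ) → (Fin N → ℝ) → Fin n → ℝ)
    (x : PhaseP n N) : PhaseP n N :=
  (x.1, fun i => x.1 i ^ ((r : ℤ) - (s : ℕ)) * x.2.1 i,
    fun j : Fin N =>
      if h : r ≤ (j : ℕ) ∧ (j : ℕ) < s then
        Hr x.1 x.2.1 x.2.2 ⟨n + r - (j : ℕ) - 1, by obtain ⟨h1, h2⟩ := h; omega⟩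
      else x.2.2 j)

/-- auxiliary: Vandermonde kernel is trivial -/
lemma vand_zero {n : ℕ} (lam : Fin n → ℝ) (hinj : Function.Injective lam)
    (a : Fin n → ℝ)
    (h : ∀ i, ∑ q : Fin n, a q * lam i ^ ((n:ℤ) - 1 - (q:ℕ)) = 0) :
    ∀ q, a q = 0 := by
  set P : Polynomial ℝ := ∑ q : Fin n, Polynomial.monomial (n - 1 - (q:ℕ)) (a q) with hP
  have heval : ∀ i, P.eval (lam i) = 0 := by
    intro i
    rw [hP, Polynomial.eval_finset_sum]
    have := h i
    rw [← this]
    refine Finset.sum_congr rfl fun q _ => ?_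
    rw [Polynomial.eval_monomial]
    congr 1
    rw [← zpow_natCast]
    congr 1
    have := q.isLt
    omega
  intro q
  have h0 : 0 < n := q.pos
  have hdeg : P.natDegree < Fintype.card (Fin n) := by
    calc P.natDegree ≤ n - 1 := Polynomial.natDegree_sum_le_of_forall_le _ _ fun q _ =>
          le_trans (Polynomial.natDegree_monomial_le _) (by omega)
      _ < Fintype.card (Fin n) := by simp; omega
  have hP0 : P = 0 := Polynomial.eq_zero_of_natDegree_lt_card_of_eval_eq_zero P hinj heval hdeg
  have := congrArg (fun p => Polynomial.coeff p (n - 1 - (q:ℕ))) hP0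
  simp only [hP, Polynomial.finset_sum_coeff, Polynomial.coeff_monomial, Polynomial.coeff_zero] at this
  rw [Finset.sum_eq_single q] at this
  · simpa using this
  · intro b _ hb
    rw [if_neg]
    have := b.isLt; have := q.isLt
    intro hc; exact hb (Fin.ext (by omega))
  · simp

lemma hcand_b1 {q s N : ℕ} (hq : q < s) (hsN : s ≤ N) : s - q - 1 < N := by omega

lemma hcand_b2 {q s n : ℕ} (hq : q < n) : q - s < n := by omega

/-- auxiliary: the candidate pullback Hamiltonians -/
def hcand (n N s : ℕ) (hsN : s ≤ N)
    (H0 : (Fin n → ℝ) → (Fin n → ℝ) → (Fin N → ℝ) → Fin n → ℝ)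
    (lam mu : Fin n → ℝ) (c : Fin N → ℝ) : Fin n → ℝ := fun q =>
  if hq : (q : ℕ) < s then c ⟨s - (q : ℕ) - 1, hcand_b1 hq hsN⟩
  else H0 lam mu c ⟨(q : ℕ) - s, hcand_b2 q.isLt⟩

/-- auxiliary: reindexing bijection -/
def reEquiv (n N s : ℕ) (hs1 : 1 ≤ s) (hsN : s ≤ N) (hNn : N ≤ n) :
    (Fin N ⊕ Fin n) ≃ (Fin N ⊕ Fin n) where
  toFun := Sum.elim
    (fun j => if h : s ≤ (j : ℕ) then Sum.inl j
      else Sum.inr ⟨s - 1 - (j : ℕ), by omega⟩)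
    (fun q => if h : (q : ℕ) + s < n then Sum.inr ⟨(q : ℕ) + s, h⟩
      else Sum.inl ⟨n - 1 - (q : ℕ), by have := q.isLt; omega⟩)
  invFun := Sum.elim
    (fun j => if h : s ≤ (j : ℕ) then Sum.inl j
      else Sum.inr ⟨n - 1 - (j : ℕ), by omega⟩)
    (fun q => if h : (q : ℕ) < s then Sum.inl ⟨s - 1 - (q : ℕ), by omega⟩
      else Sum.inr ⟨(q : ℕ) - s, by have := q.isLt; omega⟩)
  left_inv := by
    rintro (j | q)
    · by_cases h : s ≤ (j : ℕ)
      · simp [h]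
      · simp only [Sum.elim_inl, dif_neg h, Sum.elim_inr]
        split_ifs with h2
        · simp only [Sum.inl.injEq]
          exact Fin.ext (by simp <;> omega)
        · exact absurd h2 (by simp <;> omega)
    · have hq := q.isLt
      by_cases h : (q : ℕ) + s < n
      · simp only [Sum.elim_inr, dif_pos h]
        split_ifs with h2
        · exact absurd h2 (by simp <;> omega)
        · simp only [Sum.inr.injEq]
          exact Fin.ext (by simp <;> omega)
      · simp only [Sum.elim_inr, dif_neg h, Sum.elim_inl]
        split_ifs with h2
        · exact absurd h2 (by simp <;> omega)
        · simp only [Sum.inr.injEq]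
          exact Fin.ext (by simp <;> omega)
  right_inv := by
    rintro (j | q)
    · have hj := j.isLt
      by_cases h : s ≤ (j : ℕ)
      · simp [h]
      · simp only [Sum.elim_inl, dif_neg h, Sum.elim_inr]
        split_ifs with h2
        · exact absurd h2 (by simp <;> omega)
        · simp only [Sum.inl.injEq]
          exact Fin.ext (by simp <;> omega)
    · have hq := q.isLt
      by_cases h : (q : ℕ) < s
      · simp only [Sum.elim_inr, dif_pos h, Sum.elim_inl]
        split_ifs with h2
        · exact absurd h2 (by simp <;> omega)
        · simp only [Sum.inr.injEq]
          exact Fin.ext (by simp <;> omega)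
      · simp only [Sum.elim_inr, dif_neg h]
        split_ifs with h2
        · simp only [Sum.inr.injEq]
          exact Fin.ext (by simp <;> omega)
        · exact absurd h2 (by simp <;> omega)

/-- pullback of the curve-`s` Hamiltonians under the Miura map `M_{0→s}`:
`h_i^{(s)} ∘ M_{0→s} = c_{s-i+1}` for `i = 1, …, s` and `h_i^{(s)} ∘ M_{0→s} = h_{i-s}`
for `i = s+1, …, n` (1-based; 0-based below). -/
theorem miura_pullback_of_hamiltonians
    (n N : ℕ) (hn : 1 ≤ n) (hN1 : 1 ≤ N) (hNn : N ≤ n)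
    (f σ : LaurentPolynomial ℝ) (s : ℕ) (hs1 : 1 ≤ s) (hsN : s ≤ N)
    (H0 Hs : (Fin n → ℝ) → (Fin n → ℝ) → (Fin N → ℝ) → Fin n → ℝ)
    (hH0 : SepSol n N f σ 0 H0) (hHs : SepSol n N f σ s Hs)
    (lam : Fin n → ℝ) (hlam : lam ∈ Omega n) (mu : Fin n → ℝ) (c : Fin N → ℝ) :
    (∀ (i : Fin n) (h1 : (i : ℕ) < s),
      Hs (Mrs n N hn 0 s H0 (lam, mu, c)).1 (Mrs n N hn 0 s H0 (lam, mu, c)).2.1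
          (Mrs n N hn 0 s H0 (lam, mu, c)).2.2 i
        = c ⟨s - (i : ℕ) - 1, by omega⟩)
    ∧ ∀ (i : Fin n) (h1 : s ≤ (i : ℕ)),
      Hs (Mrs n N hn 0 s H0 (lam, mu, c)).1 (Mrs n N hn 0 s H0 (lam, mu, c)).2.1
          (Mrs n N hn 0 s H0 (lam, mu, c)).2.2 i
        = H0 lam mu c ⟨(i : ℕ) - s, by have := i.isLt; omega⟩ := by
  obtain ⟨hne, hinj⟩ := hlam
  classical
  set mub : Fin n → ℝ := (Mrs n N hn 0 s H0 (lam, mu, c)).2.1 with hmub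
  set cb : Fin N → ℝ := (Mrs n N hn 0 s H0 (lam, mu, c)).2.2 with hcb
  set h' : Fin n → ℝ := hcand n N s hsN H0 lam mu c with hh'
  -- basic facts about cb and mub
  have hcb_ge : ∀ (j : Fin N), s ≤ (j : ℕ) → cb j = c j := by
    intro j hj
    rw [hcb]
    simp only [Mrs]
    rw [dif_neg (by omega)]
  have hcb_lt : ∀ (j : Fin N) (hj : (j : ℕ) < s),
      cb j = H0 lam mu c ⟨n - 1 - (j : ℕ), by have := j.isLt; omega⟩ := by
    intro j hj
    rw [hcb]
    simp only [Mrs]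
    rw [dif_pos ⟨Nat.zero_le _, hj⟩]
    congr 1
    exact Fin.ext (by simp <;> omega)
  have hmubi : ∀ i, mub i = lam i ^ (-(s : ℤ)) * mu i := by
    intro i
    rw [hmub]
    simp [Mrs]
  -- key claim: the candidate h' satisfies the curve-s separation relations at the new point
  have key : ∀ i : Fin n,
      leval σ (lam i) * lam i ^ (-(s : ℤ))
        + (∑ j : Fin N,
            if s ≤ (j : ℕ) then cb j * lam i ^ ((n : ℤ) + (j : ℕ) - (s : ℕ))
            else cb j * lam i ^ (((j : ℕ) : ℤ) - (s : ℕ)))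
        + (∑ q : Fin n, h' q * lam i ^ ((n : ℤ) - 1 - (q : ℕ)))
        = leval f (lam i) * lam i ^ (s : ℤ) * mub i ^ 2 := by
    intro i
    have hL : lam i ≠ 0 := hne i
    have e0 := hH0 lam ⟨hne, hinj⟩ mu c i
    simp only [Nat.cast_zero, neg_zero, zpow_zero, mul_one, sub_zero, Nat.zero_le, if_true] at e0
    have hone : lam i ^ (s : ℤ) * lam i ^ (-(s : ℤ)) = 1 := by
      rw [← zpow_add₀ hL]; simp
    have hR : leval f (lam i) * lam i ^ (s : ℤ) * mub i ^ 2
        = (leval f (lam i) * mu i ^ 2) * lam i ^ (-(s : ℤ)) := by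
      rw [hmubi i, mul_pow, sq (lam i ^ (-(s : ℤ)))]
      linear_combination (leval f (lam i) * mu i ^ 2 * lam i ^ (-(s : ℤ))) * hone
    rw [hR, ← e0, add_mul, add_mul, Finset.sum_mul, Finset.sum_mul, add_assoc, add_assoc]
    congr 1
    have hmatch : ∀ x : Fin N ⊕ Fin n,
        Sum.elim (fun j : Fin N => c j * lam i ^ ((n : ℤ) + ((j : ℕ) : ℤ)) * lam i ^ (-(s : ℤ)))
          (fun q : Fin n => H0 lam mu c q * lam i ^ ((n : ℤ) - 1 - (q : ℕ)) * lam i ^ (-(s : ℤ))) x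
        = Sum.elim (fun j : Fin N =>
            if s ≤ (j : ℕ) then cb j * lam i ^ ((n : ℤ) + (j : ℕ) - (s : ℕ))
            else cb j * lam i ^ (((j : ℕ) : ℤ) - (s : ℕ)))
          (fun q : Fin n => h' q * lam i ^ ((n : ℤ) - 1 - (q : ℕ)))
          (reEquiv n N s hs1 hsN hNn x) := by
      rintro (j | q)
      · have hj := j.isLt
        by_cases h : s ≤ (j : ℕ)
        · simp only [reEquiv, Equiv.coe_fn_mk, Sum.elim_inl, dif_pos h, if_pos h,
            hcb_ge j h, mul_assoc, ← zpow_add₀ hL]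
          congr 2
        · simp only [reEquiv, Equiv.coe_fn_mk, Sum.elim_inl, dif_neg h, Sum.elim_inr,
            hh', hcand]
          rw [dif_pos (show s - 1 - (j : ℕ) < s by omega), mul_assoc, ← zpow_add₀ hL]
          congr 1
          · congr 1
            exact Fin.ext (by simp <;> omega)
          · congr 1
            omega
      · have hq := q.isLt
        by_cases h : (q : ℕ) + s < n
        · simp only [reEquiv, Equiv.coe_fn_mk, Sum.elim_inr, dif_pos h,
            hh', hcand]
          rw [dif_neg (show ¬ ((q : ℕ) + s < s) by omega), mul_assoc, ← zpow_add₀ hL]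
          congr 1
          · congr 1
            exact Fin.ext (by simp <;> omega)
          · congr 1
            omega
        · simp only [reEquiv, Equiv.coe_fn_mk, Sum.elim_inr, dif_neg h, Sum.elim_inl]
          rw [if_neg (show ¬ (s ≤ n - 1 - (q : ℕ)) by omega),
            hcb_lt ⟨n - 1 - (q : ℕ), by omega⟩ (by simpa using by omega),
            mul_assoc, ← zpow_add₀ hL]
          congr 1
          · congr 1
            exact Fin.ext (by simp <;> omega)
          · congr 1
            omega
    have hsum := Fintype.sum_equiv (reEquiv n N s hs1 hsN hNn) _ _ hmatch
    rw [Fintype.sum_sum_type, Fintype.sum_sum_type] at hsum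
    simp only [Sum.elim_inl, Sum.elim_inr] at hsum
    exact hsum.symm
  -- now use uniqueness (Vandermonde) to identify Hs at the new point with h'
  have hΩ : lam ∈ Omega n := ⟨hne, hinj⟩
  have hzero : ∀ q, Hs lam mub cb q - h' q = 0 := by
    apply vand_zero lam hinj
    intro i
    have h1 := hHs lam hΩ mub cb i
    have h2 := key i
    simp only [sub_mul, Finset.sum_sub_distrib]
    have heq : (∑ q : Fin n, Hs lam mub cb q * lam i ^ ((n : ℤ) - 1 - (q : ℕ)))
        = ∑ q : Fin n, h' q * lam i ^ ((n : ℤ) - 1 - (q : ℕ)) := by linarith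
    rw [heq, sub_self]
  have main : ∀ q : Fin n, Hs lam mub cb q = h' q := fun q => sub_eq_zero.mp (hzero q)
  constructor
  · intro i h1
    have hm := main i
    rw [hh'] at hm
    simp only [hcand] at hm
    rw [dif_pos h1] at hm
    exact hm
  · intro i h1
    have hm := main i
    rw [hh'] at hm
    simp only [hcand] at hm
    rw [dif_neg (not_lt.2 h1)] at hm
    exact hm
end
end

section
/- Let s ∈ {1,…,N}. The Miura map M_{0→s} : Ω × ℝⁿ × ℝᴺ → Ω × ℝⁿ × ℝᴺ is a bijection, and its inverse sends (λ̄, μ̄, c̄) to (λ, μ, c) with λ_i = λ̄_i, μ_i = λ̄_i^{s} μ̄_i (i = 1,…,n), c_i = h_{s−i+1}^{(s)}(λ̄, μ̄, c̄) for i = 1,…,s, and c_i = c̄_i for i = s+1,…,N. -/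
open Finset Function

noncomputable section

/-! ### Auxiliary lemmas -/

private lemma sep_unique {n : ℕ} (hn : 0 < n) {lam : Fin n → ℝ} (hinj : Function.Injective lam)
    {d : Fin n → ℝ}
    (h : ∀ i, ∑ q : Fin n, d q * lam i ^ ((n : ℤ) - 1 - (q : ℕ)) = 0) :
    ∀ p, d p = 0 := by
  classical
  set P : Polynomial ℝ := ∑ q : Fin n, Polynomial.C (d q) * Polynomial.X ^ (n - 1 - (q : ℕ))
    with hP
  have hdeg : P.natDegree < n := by
    have : P.natDegree ≤ n - 1 := by
      apply Polynomial.natDegree_sum_le_of_forall_le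
      intro q _
      refine le_trans (Polynomial.natDegree_C_mul_le _ _) ?_
      simp [Polynomial.natDegree_X_pow]
    omega
  have heval : ∀ i, P.eval (lam i) = 0 := by
    intro i
    rw [hP, Polynomial.eval_finset_sum]
    rw [← h i]
    refine Finset.sum_congr rfl fun q _ => ?_
    have hq : (q : ℕ) < n := q.isLt
    rw [Polynomial.eval_mul, Polynomial.eval_C, Polynomial.eval_pow, Polynomial.eval_X]
    congr 1
    rw [show ((n : ℤ) - 1 - (q : ℕ)) = ((n - 1 - (q : ℕ) : ℕ) : ℤ) by omega, zpow_natCast]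
  have hP0 : P = 0 := by
    apply Polynomial.eq_zero_of_natDegree_lt_card_of_eval_eq_zero P hinj heval
    simpa using hdeg
  intro p
  have hcoeff : P.coeff (n - 1 - (p : ℕ)) = d p := by
    rw [hP, Polynomial.finset_sum_coeff]
    rw [Finset.sum_eq_single p]
    · simp [Polynomial.coeff_C_mul, Polynomial.coeff_X_pow]
    · intro q _ hqp
      have hq : (q : ℕ) < n := q.isLt
      have hp : (p : ℕ) < n := p.isLt
      have : ¬ (n - 1 - (p : ℕ) = n - 1 - (q : ℕ)) := by
        intro hc
        exact hqp (Fin.ext (by omega))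
      simp [Polynomial.coeff_C_mul, Polynomial.coeff_X_pow, this]
    · simp
  rw [← hcoeff, hP0, Polynomial.coeff_zero]

private lemma split_range {m k : ℕ} (h : m ≤ k) (F : ℕ → ℝ) :
    ∑ i ∈ range k, F i = (∑ i ∈ range m, F i) + ∑ i ∈ Ico m k, F i := by
  rw [range_eq_Ico, range_eq_Ico]
  exact (Finset.sum_Ico_consecutive (f := F) (Nat.zero_le m) h).symm

private lemma identity_II (n N s : ℕ) (hs : s ≤ N) (hN : N ≤ n) (x : ℝ) (C B : ℕ → ℝ) :
    (∑ q ∈ range n, (if q < s then C (s - 1 - q) else B (q - s)) * x ^ ((n : ℤ) - 1 - q))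
      + (∑ j ∈ range N,
          if s ≤ j then C j * x ^ ((n : ℤ) + j - s) else B (n - 1 - j) * x ^ ((j : ℤ) - s))
    = (∑ j ∈ range N, C j * x ^ ((n : ℤ) + j - s))
      + (∑ q ∈ range n, B q * x ^ ((n : ℤ) - 1 - q - s)) := by
  have hsn : s ≤ n := le_trans hs hN
  rw [split_range hsn (fun q => (if q < s then C (s - 1 - q) else B (q - s)) * x ^ ((n : ℤ) - 1 - q))]
  rw [split_range hs (fun j => if s ≤ j then C j * x ^ ((n : ℤ) + j - s) else B (n - 1 - j) * x ^ ((j : ℤ) - s))]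
  rw [split_range hs (fun j => C j * x ^ ((n : ℤ) + j - s))]
  rw [split_range (Nat.sub_le n s) (fun q => B q * x ^ ((n : ℤ) - 1 - q - s))]
  have e1 : (∑ q ∈ range s, (if q < s then C (s - 1 - q) else B (q - s)) * x ^ ((n : ℤ) - 1 - q))
      = ∑ j ∈ range s, C j * x ^ ((n : ℤ) + j - s) := by
    rw [← Finset.sum_range_reflect (fun j => C j * x ^ ((n : ℤ) + j - s)) s]
    refine Finset.sum_congr rfl fun q hq => ?_
    have hq' := Finset.mem_range.mp hq
    rw [if_pos hq', show ((n : ℤ) + ((s - 1 - q : ℕ) : ℤ) - s) = (n : ℤ) - 1 - q by omega]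
  have e2 : (∑ q ∈ Ico s n, (if q < s then C (s - 1 - q) else B (q - s)) * x ^ ((n : ℤ) - 1 - q))
      = ∑ q ∈ range (n - s), B q * x ^ ((n : ℤ) - 1 - q - s) := by
    rw [Finset.sum_Ico_eq_sum_range]
    refine Finset.sum_congr rfl fun q hq => ?_
    rw [if_neg (by omega), show s + q - s = q by omega,
      show ((n : ℤ) - 1 - ((s + q : ℕ) : ℤ)) = (n : ℤ) - 1 - q - s by omega]
  have e3 : (∑ j ∈ Ico s N,
        if s ≤ j then C j * x ^ ((n : ℤ) + j - s) else B (n - 1 - j) * x ^ ((j : ℤ) - s))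
      = ∑ j ∈ Ico s N, C j * x ^ ((n : ℤ) + j - s) := by
    refine Finset.sum_congr rfl fun j hj => ?_
    rw [if_pos (Finset.mem_Ico.mp hj).1]
  have e4 : (∑ j ∈ range s,
        if s ≤ j then C j * x ^ ((n : ℤ) + j - s) else B (n - 1 - j) * x ^ ((j : ℤ) - s))
      = ∑ q ∈ Ico (n - s) n, B q * x ^ ((n : ℤ) - 1 - q - s) := by
    have r1 : (∑ j ∈ range s,
          if s ≤ j then C j * x ^ ((n : ℤ) + j - s) else B (n - 1 - j) * x ^ ((j : ℤ) - s))
        = ∑ k ∈ range s, B (n - s + k) * x ^ (-1 - (k : ℤ)) := by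
      rw [← Finset.sum_range_reflect (fun k => B (n - s + k) * x ^ (-1 - (k : ℤ))) s]
      refine Finset.sum_congr rfl fun j hj => ?_
      have hj' := Finset.mem_range.mp hj
      rw [if_neg (by omega), show n - s + (s - 1 - j) = n - 1 - j by omega,
        show (-1 - ((s - 1 - j : ℕ) : ℤ)) = (j : ℤ) - s by omega]
    have r2 : (∑ q ∈ Ico (n - s) n, B q * x ^ ((n : ℤ) - 1 - q - s))
        = ∑ k ∈ range s, B (n - s + k) * x ^ (-1 - (k : ℤ)) := by
      rw [Finset.sum_Ico_eq_sum_range, show n - (n - s) = s by omega]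
      refine Finset.sum_congr rfl fun k hk => ?_
      have hk' := Finset.mem_range.mp hk
      rw [show ((n : ℤ) - 1 - ((n - s + k : ℕ) : ℤ) - s) = -1 - (k : ℤ) by omega]
    rw [r1, r2]
  rw [e1, e2, e3, e4]
  ring

private lemma identity_I (n N s : ℕ) (hs : s ≤ N) (hN : N ≤ n) (x : ℝ) (A G : ℕ → ℝ) :
    (∑ q ∈ range n, (if q < n - s then G (q + s) else A (n - 1 - q)) * x ^ ((n : ℤ) - 1 - q))
      + (∑ j ∈ range N, (if j < s then G (s - 1 - j) else A j) * x ^ ((n : ℤ) + j))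
    = (∑ j ∈ range N, if s ≤ j then A j * x ^ ((n : ℤ) + j) else A j * x ^ ((j : ℤ)))
      + (∑ q ∈ range n, G q * x ^ ((n : ℤ) - 1 - q + s)) := by
  have hsn : s ≤ n := le_trans hs hN
  rw [split_range (Nat.sub_le n s) (fun q => (if q < n - s then G (q + s) else A (n - 1 - q)) * x ^ ((n : ℤ) - 1 - q))]
  rw [split_range hs (fun j => (if j < s then G (s - 1 - j) else A j) * x ^ ((n : ℤ) + j))]
  rw [split_range hs (fun j => if s ≤ j then A j * x ^ ((n : ℤ) + j) else A j * x ^ ((j : ℤ)))]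
  rw [split_range hsn (fun q => G q * x ^ ((n : ℤ) - 1 - q + s))]
  have f1 : (∑ q ∈ range (n - s), (if q < n - s then G (q + s) else A (n - 1 - q)) * x ^ ((n : ℤ) - 1 - q))
      = ∑ q ∈ Ico s n, G q * x ^ ((n : ℤ) - 1 - q + s) := by
    rw [Finset.sum_Ico_eq_sum_range]
    refine Finset.sum_congr rfl fun q hq => ?_
    have hq' := Finset.mem_range.mp hq
    rw [if_pos hq', show q + s = s + q by omega,
      show ((n : ℤ) - 1 - ((s + q : ℕ) : ℤ) + s) = (n : ℤ) - 1 - q by omega]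
  have f2 : (∑ q ∈ Ico (n - s) n, (if q < n - s then G (q + s) else A (n - 1 - q)) * x ^ ((n : ℤ) - 1 - q))
      = ∑ j ∈ range s, A j * x ^ ((j : ℤ)) := by
    have r1 : (∑ q ∈ Ico (n - s) n, (if q < n - s then G (q + s) else A (n - 1 - q)) * x ^ ((n : ℤ) - 1 - q))
        = ∑ k ∈ range s, A (s - 1 - k) * x ^ (((s - 1 - k : ℕ) : ℤ)) := by
      rw [Finset.sum_Ico_eq_sum_range, show n - (n - s) = s by omega]
      refine Finset.sum_congr rfl fun k hk => ?_
      have hk' := Finset.mem_range.mp hk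
      rw [if_neg (by omega), show n - 1 - (n - s + k) = s - 1 - k by omega,
        show ((n : ℤ) - 1 - ((n - s + k : ℕ) : ℤ)) = ((s - 1 - k : ℕ) : ℤ) by omega]
    rw [r1, Finset.sum_range_reflect (fun j => A j * x ^ ((j : ℤ))) s]
  have f3 : (∑ j ∈ range s, (if j < s then G (s - 1 - j) else A j) * x ^ ((n : ℤ) + j))
      = ∑ q ∈ range s, G q * x ^ ((n : ℤ) - 1 - q + s) := by
    rw [← Finset.sum_range_reflect (fun q => G q * x ^ ((n : ℤ) - 1 - q + s)) s]
    refine Finset.sum_congr rfl fun j hj => ?_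
    have hj' := Finset.mem_range.mp hj
    rw [if_pos hj', show ((n : ℤ) - 1 - ((s - 1 - j : ℕ) : ℤ) + s) = (n : ℤ) + j by omega]
  have f4 : (∑ j ∈ Ico s N, (if j < s then G (s - 1 - j) else A j) * x ^ ((n : ℤ) + j))
      = ∑ j ∈ Ico s N, if s ≤ j then A j * x ^ ((n : ℤ) + j) else A j * x ^ ((j : ℤ)) := by
    refine Finset.sum_congr rfl fun j hj => ?_
    have hj' := (Finset.mem_Ico.mp hj).1
    rw [if_neg (by omega), if_pos hj']
  have f5 : (∑ j ∈ range s, if s ≤ j then A j * x ^ ((n : ℤ) + j) else A j * x ^ ((j : ℤ)))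
      = ∑ j ∈ range s, A j * x ^ ((j : ℤ)) := by
    refine Finset.sum_congr rfl fun j hj => ?_
    have hj' := Finset.mem_range.mp hj
    rw [if_neg (by omega)]
  rw [f1, f2, f3, f4, f5]
  ring

/-- Forward transfer: the values of `Hs` at the Miura image of `(lam, mu, c)`. -/
private lemma forward_values (n N : ℕ) (hn : 1 ≤ n) (hN1 : 1 ≤ N) (hNn : N ≤ n)
    (f σ : LaurentPolynomial ℝ) (s : ℕ) (hs1 : 1 ≤ s) (hsN : s ≤ N)
    (H0 Hs : (Fin n → ℝ) → (Fin n → ℝ) → (Fin N → ℝ) → Fin n → ℝ)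
    (hH0 : SepSol n N f σ 0 H0) (hHs : SepSol n N f σ s Hs)
    (lam : Fin n → ℝ) (hlam : lam ∈ Omega n) (mu : Fin n → ℝ) (c : Fin N → ℝ)
    (p : Fin n) :
    Hs lam (fun i => lam i ^ (-(s : ℤ)) * mu i)
        (fun j : Fin N =>
          if h : (j : ℕ) < s then H0 lam mu c ⟨n - 1 - (j : ℕ), by omega⟩ else c j) p
      = if h : (p : ℕ) < s then c ⟨s - 1 - (p : ℕ), by omega⟩
        else H0 lam mu c ⟨(p : ℕ) - s, by omega⟩ := by
  obtain ⟨hne, hinj⟩ := hlam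
  set mub : Fin n → ℝ := fun i => lam i ^ (-(s : ℤ)) * mu i with hmub
  set cb : Fin N → ℝ := fun j : Fin N =>
    if _ : (j : ℕ) < s then
      H0 lam mu c ⟨n - 1 - (j : ℕ), Nat.lt_of_le_of_lt (Nat.sub_le (n - 1) _) (by omega : n - 1 < n)⟩
    else c j with hcb
  set t : Fin n → ℝ := fun q =>
    if _ : (q : ℕ) < s then
      c ⟨s - 1 - (q : ℕ), Nat.lt_of_le_of_lt (Nat.sub_le (s - 1) _) (by omega : s - 1 < N)⟩
    else H0 lam mu c ⟨(q : ℕ) - s, Nat.lt_of_le_of_lt (Nat.sub_le _ _) q.isLt⟩ with ht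
  have key : ∀ q, Hs lam mub cb q - t q = 0 := by
    apply sep_unique (by omega) hinj
    intro i
    set x := lam i with hxdef
    have hx : x ≠ 0 := hne i
    simp only [sub_mul]
    rw [Finset.sum_sub_distrib, sub_eq_zero]
    -- abbreviations for the ℕ-indexed versions
    set C' : ℕ → ℝ := fun j => if h : j < N then c ⟨j, h⟩ else 0 with hC'
    set B' : ℕ → ℝ := fun q => if h : q < n then H0 lam mu c ⟨q, h⟩ else 0 with hB'
    -- Equation B : curve-s separation relation at (lam, mub, cb)
    have EqB := hHs lam ⟨hne, hinj⟩ mub cb i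
    -- Equation A : curve-0 separation relation at (lam, mu, c), simplified
    have EqA : leval σ x + (∑ j : Fin N, c j * x ^ ((n : ℤ) + (j : ℕ)))
        + (∑ q : Fin n, H0 lam mu c q * x ^ ((n : ℤ) - 1 - (q : ℕ)))
        = leval f x * mu i ^ 2 := by
      have h0 := hH0 lam ⟨hne, hinj⟩ mu c i
      simp only [Nat.cast_zero, neg_zero, zpow_zero, mul_one, Nat.zero_le, if_true,
        sub_zero] at h0
      exact h0
    -- multiply EqA by x ^ (-s)
    have hshift : ∀ (a : ℝ) (e : ℤ), a * x ^ e * x ^ (-(s : ℤ)) = a * x ^ (e - (s : ℕ)) := by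
      intro a e
      rw [mul_assoc, ← zpow_add₀ hx, ← sub_eq_add_neg]
    have EqA' : leval σ x * x ^ (-(s : ℤ)) + (∑ j : Fin N, c j * x ^ ((n : ℤ) + (j : ℕ) - (s : ℕ)))
        + (∑ q : Fin n, H0 lam mu c q * x ^ ((n : ℤ) - 1 - (q : ℕ) - (s : ℕ)))
        = leval f x * mu i ^ 2 * x ^ (-(s : ℤ)) := by
      have h1 := congrArg (fun y : ℝ => y * x ^ (-(s : ℤ))) EqA
      simp only [add_mul, Finset.sum_mul, hshift] at h1
      exact h1
    -- the RHS of EqB equals the RHS of EqA'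
    have hF : leval f x * x ^ ((s : ℕ) : ℤ) * mub i ^ 2 = leval f x * mu i ^ 2 * x ^ (-(s : ℤ)) := by
      have e1 : (x ^ (-(s : ℤ))) ^ 2 = x ^ (-(2 * (s : ℤ))) := by
        rw [sq, ← zpow_add₀ hx, show (-(s : ℤ)) + -(s : ℤ) = -(2 * (s : ℤ)) by ring]
      calc leval f x * x ^ ((s : ℕ) : ℤ) * mub i ^ 2
          = leval f x * mu i ^ 2 * (x ^ ((s : ℕ) : ℤ) * x ^ (-(2 * (s : ℤ)))) := by
            rw [hmub]; simp only [mul_pow]; rw [← hxdef, e1]; ring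
        _ = leval f x * mu i ^ 2 * x ^ (-(s : ℤ)) := by
            rw [← zpow_add₀ hx, show ((s : ℕ) : ℤ) + -(2 * (s : ℤ)) = -(s : ℤ) by ring]
    -- identity (II) instance, transported to Fin-indexed sums
    have conv1 : (∑ q : Fin n, t q * x ^ ((n : ℤ) - 1 - (q : ℕ)))
        = ∑ q ∈ range n, (if q < s then C' (s - 1 - q) else B' (q - s)) * x ^ ((n : ℤ) - 1 - q) := by
      rw [← Fin.sum_univ_eq_sum_range
        (fun q => (if q < s then C' (s - 1 - q) else B' (q - s)) * x ^ ((n : ℤ) - 1 - q)) n]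
      refine Finset.sum_congr rfl fun q _ => ?_
      simp only [ht, hC', hB']
      by_cases h : (q : ℕ) < s
      · rw [dif_pos h, if_pos h,
          dif_pos (Nat.lt_of_le_of_lt (Nat.sub_le (s - 1) (q : ℕ)) (by omega : s - 1 < N))]
      · rw [dif_neg h, if_neg h,
          dif_pos (Nat.lt_of_le_of_lt (Nat.sub_le (q : ℕ) s) q.isLt)]
    have conv2 : (∑ j : Fin N,
          if s ≤ (j : ℕ) then cb j * x ^ ((n : ℤ) + (j : ℕ) - (s : ℕ))
          else cb j * x ^ (((j : ℕ) : ℤ) - (s : ℕ)))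
        = ∑ j ∈ range N,
            if s ≤ j then C' j * x ^ ((n : ℤ) + j - s) else B' (n - 1 - j) * x ^ ((j : ℤ) - s) := by
      rw [← Fin.sum_univ_eq_sum_range
        (fun j => if s ≤ j then C' j * x ^ ((n : ℤ) + j - s)
          else B' (n - 1 - j) * x ^ ((j : ℤ) - s)) N]
      refine Finset.sum_congr rfl fun j _ => ?_
      simp only [hcb, hC', hB']
      by_cases h : s ≤ (j : ℕ)
      · rw [if_pos h, if_pos h, dif_neg (Nat.not_lt.mpr h), dif_pos j.isLt]
      · rw [if_neg h, if_neg h, dif_pos (Nat.not_le.mp h),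
          dif_pos (Nat.lt_of_le_of_lt (Nat.sub_le (n - 1) (j : ℕ)) (by omega : n - 1 < n))]
    have conv3 : (∑ j : Fin N, c j * x ^ ((n : ℤ) + (j : ℕ) - (s : ℕ)))
        = ∑ j ∈ range N, C' j * x ^ ((n : ℤ) + j - s) := by
      rw [← Fin.sum_univ_eq_sum_range (fun j => C' j * x ^ ((n : ℤ) + j - s)) N]
      refine Finset.sum_congr rfl fun j _ => ?_
      simp only [hC']
      rw [dif_pos j.isLt]
    have conv4 : (∑ q : Fin n, H0 lam mu c q * x ^ ((n : ℤ) - 1 - (q : ℕ) - (s : ℕ)))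
        = ∑ q ∈ range n, B' q * x ^ ((n : ℤ) - 1 - q - s) := by
      rw [← Fin.sum_univ_eq_sum_range (fun q => B' q * x ^ ((n : ℤ) - 1 - q - s)) n]
      refine Finset.sum_congr rfl fun q _ => ?_
      simp only [hB']
      rw [dif_pos q.isLt]
    have II : (∑ q : Fin n, t q * x ^ ((n : ℤ) - 1 - (q : ℕ)))
        + (∑ j : Fin N,
            if s ≤ (j : ℕ) then cb j * x ^ ((n : ℤ) + (j : ℕ) - (s : ℕ))
            else cb j * x ^ (((j : ℕ) : ℤ) - (s : ℕ)))
        = (∑ j : Fin N, c j * x ^ ((n : ℤ) + (j : ℕ) - (s : ℕ)))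
          + (∑ q : Fin n, H0 lam mu c q * x ^ ((n : ℤ) - 1 - (q : ℕ) - (s : ℕ))) := by
      rw [conv1, conv2, conv3, conv4]
      exact identity_II n N s hsN hNn x C' B'
    rw [← hxdef, hF] at EqB
    linarith [EqB, EqA', II]
  exact sub_eq_zero.mp (key p)

/-- Backward transfer: the values of `H0` at the image of the inverse Miura map. -/
private lemma backward_values (n N : ℕ) (hn : 1 ≤ n) (hN1 : 1 ≤ N) (hNn : N ≤ n)
    (f σ : LaurentPolynomial ℝ) (s : ℕ) (hs1 : 1 ≤ s) (hsN : s ≤ N)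
    (H0 Hs : (Fin n → ℝ) → (Fin n → ℝ) → (Fin N → ℝ) → Fin n → ℝ)
    (hH0 : SepSol n N f σ 0 H0) (hHs : SepSol n N f σ s Hs)
    (lam : Fin n → ℝ) (hlam : lam ∈ Omega n) (mub : Fin n → ℝ) (cb : Fin N → ℝ)
    (p : Fin n) :
    H0 lam (fun i => lam i ^ ((s : ℕ) : ℤ) * mub i)
        (fun j : Fin N =>
          if h : (j : ℕ) < s then
            Hs lam mub cb ⟨s - 1 - (j : ℕ),
              Nat.lt_of_le_of_lt (Nat.sub_le (s - 1) _) (by omega : s - 1 < n)⟩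
          else cb j) p
      = if h : (p : ℕ) < n - s then Hs lam mub cb ⟨(p : ℕ) + s, by omega⟩
        else cb ⟨n - 1 - (p : ℕ), by omega⟩ := by
  obtain ⟨hne, hinj⟩ := hlam
  set mu : Fin n → ℝ := fun i => lam i ^ ((s : ℕ) : ℤ) * mub i with hmu
  set c : Fin N → ℝ := fun j : Fin N =>
    if _ : (j : ℕ) < s then
      Hs lam mub cb ⟨s - 1 - (j : ℕ),
        Nat.lt_of_le_of_lt (Nat.sub_le (s - 1) _) (by omega : s - 1 < n)⟩
    else cb j with hc
  set t : Fin n → ℝ := fun q =>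
    if _ : (q : ℕ) < n - s then
      Hs lam mub cb ⟨(q : ℕ) + s, by omega⟩
    else cb ⟨n - 1 - (q : ℕ), by omega⟩ with ht
  have key : ∀ q, H0 lam mu c q - t q = 0 := by
    apply sep_unique (by omega) hinj
    intro i
    set x := lam i with hxdef
    have hx : x ≠ 0 := hne i
    simp only [sub_mul]
    rw [Finset.sum_sub_distrib, sub_eq_zero]
    set A' : ℕ → ℝ := fun j => if h : j < N then cb ⟨j, h⟩ else 0 with hA'
    set G' : ℕ → ℝ := fun q => if h : q < n then Hs lam mub cb ⟨q, h⟩ else 0 with hG'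
    -- Equation A : curve-0 separation relation at (lam, mu, c), simplified
    have EqA : leval σ x + (∑ j : Fin N, c j * x ^ ((n : ℤ) + (j : ℕ)))
        + (∑ q : Fin n, H0 lam mu c q * x ^ ((n : ℤ) - 1 - (q : ℕ)))
        = leval f x * mu i ^ 2 := by
      have h0 := hH0 lam ⟨hne, hinj⟩ mu c i
      simp only [Nat.cast_zero, neg_zero, zpow_zero, mul_one, Nat.zero_le, if_true,
        sub_zero] at h0
      exact h0
    -- Equation B : curve-s separation relation at (lam, mub, cb), multiplied by x ^ s
    have EqB := hHs lam ⟨hne, hinj⟩ mub cb i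
    rw [← hxdef] at EqB
    have hshift : ∀ (a : ℝ) (e : ℤ), a * x ^ e * x ^ ((s : ℕ) : ℤ) = a * x ^ (e + (s : ℕ)) := by
      intro a e
      rw [mul_assoc, ← zpow_add₀ hx]
    have EqB' : leval σ x
        + (∑ j : Fin N,
            if s ≤ (j : ℕ) then cb j * x ^ ((n : ℤ) + (j : ℕ) - (s : ℕ) + (s : ℕ))
            else cb j * x ^ ((((j : ℕ) : ℤ)) - (s : ℕ) + (s : ℕ)))
        + (∑ q : Fin n, Hs lam mub cb q * x ^ ((n : ℤ) - 1 - (q : ℕ) + (s : ℕ)))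
        = leval f x * x ^ ((s : ℤ)) * mub i ^ 2 * x ^ ((s : ℕ) : ℤ) := by
      have h1 := congrArg (fun y : ℝ => y * x ^ ((s : ℕ) : ℤ)) EqB
      simp only [add_mul, Finset.sum_mul, ite_mul, hshift] at h1
      rw [show (-(s : ℤ) + ((s : ℕ) : ℤ)) = 0 by omega, zpow_zero, mul_one] at h1
      exact h1
    have hF : leval f x * x ^ ((s : ℤ)) * mub i ^ 2 * x ^ ((s : ℕ) : ℤ)
        = leval f x * mu i ^ 2 := by
      rw [hmu]
      simp only [mul_pow]
      rw [sq (x ^ ((s : ℕ) : ℤ)), ← zpow_add₀ hx]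
      rw [show leval f x * x ^ ((s : ℤ)) * mub i ^ 2 * x ^ ((s : ℕ) : ℤ)
          = leval f x * (x ^ ((s : ℤ)) * x ^ ((s : ℕ) : ℤ)) * mub i ^ 2 by ring]
      rw [← zpow_add₀ hx]
      ring
    rw [hF] at EqB'
    -- transport identity (I)
    have conv1 : (∑ q : Fin n, t q * x ^ ((n : ℤ) - 1 - (q : ℕ)))
        = ∑ q ∈ range n, (if q < n - s then G' (q + s) else A' (n - 1 - q)) * x ^ ((n : ℤ) - 1 - q) := by
      rw [← Fin.sum_univ_eq_sum_range
        (fun q => (if q < n - s then G' (q + s) else A' (n - 1 - q)) * x ^ ((n : ℤ) - 1 - q)) n]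
      refine Finset.sum_congr rfl fun q _ => ?_
      simp only [ht, hA', hG']
      by_cases h : (q : ℕ) < n - s
      · rw [dif_pos h, if_pos h, dif_pos (show (q : ℕ) + s < n by omega)]
      · rw [dif_neg h, if_neg h, dif_pos (show n - 1 - (q : ℕ) < N by omega)]
    have conv2 : (∑ j : Fin N, c j * x ^ ((n : ℤ) + (j : ℕ)))
        = ∑ j ∈ range N, (if j < s then G' (s - 1 - j) else A' j) * x ^ ((n : ℤ) + j) := by
      rw [← Fin.sum_univ_eq_sum_range
        (fun j => (if j < s then G' (s - 1 - j) else A' j) * x ^ ((n : ℤ) + j)) N]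
      refine Finset.sum_congr rfl fun j _ => ?_
      simp only [hc, hA', hG']
      by_cases h : (j : ℕ) < s
      · rw [dif_pos h, if_pos h, dif_pos (show s - 1 - (j : ℕ) < n by omega)]
      · rw [dif_neg h, if_neg h, dif_pos j.isLt]
    have conv3 : (∑ j : Fin N,
          if s ≤ (j : ℕ) then cb j * x ^ ((n : ℤ) + (j : ℕ) - (s : ℕ) + (s : ℕ))
          else cb j * x ^ ((((j : ℕ) : ℤ)) - (s : ℕ) + (s : ℕ)))
        = ∑ j ∈ range N, if s ≤ j then A' j * x ^ ((n : ℤ) + j) else A' j * x ^ ((j : ℤ)) := by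
      rw [← Fin.sum_univ_eq_sum_range
        (fun j => if s ≤ j then A' j * x ^ ((n : ℤ) + j) else A' j * x ^ ((j : ℤ))) N]
      refine Finset.sum_congr rfl fun j _ => ?_
      simp only [hA']
      by_cases h : s ≤ (j : ℕ)
      · rw [if_pos h, if_pos h, dif_pos j.isLt,
          show ((n : ℤ) + (j : ℕ) - (s : ℕ) + (s : ℕ)) = (n : ℤ) + (j : ℕ) by omega]
      · rw [if_neg h, if_neg h, dif_pos j.isLt,
          show ((((j : ℕ) : ℤ)) - (s : ℕ) + (s : ℕ)) = (((j : ℕ) : ℤ)) by omega]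
    have conv4 : (∑ q : Fin n, Hs lam mub cb q * x ^ ((n : ℤ) - 1 - (q : ℕ) + (s : ℕ)))
        = ∑ q ∈ range n, G' q * x ^ ((n : ℤ) - 1 - q + s) := by
      rw [← Fin.sum_univ_eq_sum_range (fun q => G' q * x ^ ((n : ℤ) - 1 - q + s)) n]
      refine Finset.sum_congr rfl fun q _ => ?_
      simp only [hG']
      rw [dif_pos q.isLt]
    have II : (∑ q : Fin n, t q * x ^ ((n : ℤ) - 1 - (q : ℕ)))
        + (∑ j : Fin N, c j * x ^ ((n : ℤ) + (j : ℕ)))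
        = (∑ j : Fin N,
            if s ≤ (j : ℕ) then cb j * x ^ ((n : ℤ) + (j : ℕ) - (s : ℕ) + (s : ℕ))
            else cb j * x ^ ((((j : ℕ) : ℤ)) - (s : ℕ) + (s : ℕ)))
          + (∑ q : Fin n, Hs lam mub cb q * x ^ ((n : ℤ) - 1 - (q : ℕ) + (s : ℕ))) := by
      rw [conv1, conv2, conv3, conv4]
      exact identity_I n N s hsN hNn x A' G'
    linarith [EqA, EqB', II]
  exact sub_eq_zero.mp (key p)

/-- the Miura map `M_{0→s}` is a bijection of `Ω × ℝⁿ × ℝᴺ` onto itself, and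
its inverse is `(λ̄, μ̄, c̄) ↦ (λ, μ, c)` with `λ_i = λ̄_i`, `μ_i = λ̄_iˢ μ̄_i`,
`c_i = h^{(s)}_{s-i+1}(λ̄, μ̄, c̄)` for `i = 1, …, s` and `c_i = c̄_i` for `i = s+1, …, N`
(1-based; 0-based below). -/

theorem miura_map_bijective_with_explicit_inverse
    (n N : ℕ) (hn : 1 ≤ n) (hN1 : 1 ≤ N) (hNn : N ≤ n)
    (f σ : LaurentPolynomial ℝ) (s : ℕ) (hs1 : 1 ≤ s) (hsN : s ≤ N)
    (H0 Hs : (Fin n → ℝ) → (Fin n → ℝ) → (Fin N → ℝ) → Fin n → ℝ)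
    (hH0 : SepSol n N f σ 0 H0) (hHs : SepSol n N f σ s Hs) :
    Set.BijOn (Mrs n N hn 0 s H0)
        {x : PhaseP n N | x.1 ∈ Omega n} {x : PhaseP n N | x.1 ∈ Omega n}
    ∧ Set.InvOn
        (fun x : PhaseP n N =>
          (x.1, fun i => x.1 i ^ (s : ℤ) * x.2.1 i,
            fun j : Fin N =>
              if h1 : (j : ℕ) < s then Hs x.1 x.2.1 x.2.2 ⟨s - (j : ℕ) - 1, by omega⟩
              else x.2.2 j))
        (Mrs n N hn 0 s H0)
        {x : PhaseP n N | x.1 ∈ Omega n} {x : PhaseP n N | x.1 ∈ Omega n} := by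
  have hn0 : 0 < n := hn
  set S : Set (PhaseP n N) := {x : PhaseP n N | x.1 ∈ Omega n} with hS
  set M : PhaseP n N → PhaseP n N := Mrs n N hn 0 s H0 with hM
  set Ginv : PhaseP n N → PhaseP n N := fun x : PhaseP n N =>
    (x.1, fun i => x.1 i ^ (s : ℤ) * x.2.1 i,
      fun j : Fin N =>
        if h1 : (j : ℕ) < s then Hs x.1 x.2.1 x.2.2 ⟨s - (j : ℕ) - 1, by omega⟩
        else x.2.2 j) with hG
  have hleft : Set.LeftInvOn Ginv M S := by
    rintro ⟨lam, mu, c⟩ hx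
    have hxO : lam ∈ Omega n := hx
    obtain ⟨hne, hinj⟩ := hxO
    have hMx : M (lam, mu, c)
        = (lam, fun i => lam i ^ (-(s : ℤ)) * mu i,
            fun j : Fin N =>
              if _ : (j : ℕ) < s then
                H0 lam mu c ⟨n - 1 - (j : ℕ),
                  Nat.lt_of_le_of_lt (Nat.sub_le (n - 1) _) (by omega : n - 1 < n)⟩
              else c j) := by
      rw [hM]
      simp only [Mrs]
      refine Prod.ext rfl (Prod.ext ?_ ?_)
      · funext i
        norm_num
      · funext j
        dsimp only
        by_cases h : (j : ℕ) < s
        · rw [dif_pos ⟨Nat.zero_le _, h⟩, dif_pos h]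
          congr 1
          exact Fin.ext (by simp only []; omega)
        · rw [dif_neg (fun hc => h hc.2), dif_neg h]
    rw [hMx, hG]
    refine Prod.ext rfl (Prod.ext ?_ ?_)
    · funext i
      dsimp only
      rw [← mul_assoc, ← zpow_add₀ (hne i), add_neg_cancel, zpow_zero, one_mul]
    · funext j
      dsimp only
      by_cases h : (j : ℕ) < s
      · rw [dif_pos h,
          forward_values n N hn hN1 hNn f σ s hs1 hsN H0 Hs hH0 hHs lam ⟨hne, hinj⟩ mu c,
          dif_pos (show s - (j : ℕ) - 1 < s by omega)]
        congr 1
        exact Fin.ext (by simp only []; omega)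
      · rw [dif_neg h, dif_neg h]
  have hright : Set.RightInvOn Ginv M S := by
    rintro ⟨lam, mub, cb⟩ hx
    have hxO : lam ∈ Omega n := hx
    obtain ⟨hne, hinj⟩ := hxO
    have hGy : Ginv (lam, mub, cb)
        = (lam, fun i => lam i ^ ((s : ℕ) : ℤ) * mub i,
            fun j : Fin N =>
              if _ : (j : ℕ) < s then
                Hs lam mub cb ⟨s - 1 - (j : ℕ),
                  Nat.lt_of_le_of_lt (Nat.sub_le (s - 1) _) (by omega : s - 1 < n)⟩
              else cb j) := by
      rw [hG]
      refine Prod.ext rfl (Prod.ext rfl ?_)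
      funext j
      dsimp only
      by_cases h : (j : ℕ) < s
      · rw [dif_pos h, dif_pos h]
        congr 1
        exact Fin.ext (by simp only []; omega)
      · rw [dif_neg h, dif_neg h]
    rw [hGy, hM]
    simp only [Mrs]
    refine Prod.ext rfl (Prod.ext ?_ ?_)
    · funext i
      dsimp only
      rw [← mul_assoc, ← zpow_add₀ (hne i),
        show (((0 : ℕ) : ℤ) - (s : ℕ)) + ((s : ℕ) : ℤ) = 0 by omega, zpow_zero, one_mul]
    · funext j
      dsimp only
      by_cases h : (j : ℕ) < s
      · rw [dif_pos ⟨Nat.zero_le _, h⟩,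
          backward_values n N hn hN1 hNn f σ s hs1 hsN H0 Hs hH0 hHs lam ⟨hne, hinj⟩ mub cb,
          dif_neg (show ¬ ((⟨n + 0 - (j : ℕ) - 1, by omega⟩ : Fin n) : ℕ) < n - s by
            simp only []; omega)]
        congr 1
        exact Fin.ext (by simp only []; omega)
      · rw [dif_neg (fun hc => h hc.2), dif_neg h]
  have hmapsF : Set.MapsTo M S S := fun x hx => hx
  have hmapsG : Set.MapsTo Ginv S S := fun x hx => hx
  exact ⟨Set.InvOn.bijOn ⟨hleft, hright⟩ hmapsF hmapsG, hleft, hright⟩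
end
end

section
/- (Theorem 1 of the paper.) Let s ∈ {1,…,N}. For every r ∈ {1,…,n} and every x ∈ Ω × ℝⁿ × ℝᴺ, the differential of the Miura map M_{0→s} maps the r-th Hamiltonian vector field of the curve-0 system to that of the curve-s system: D M_{0→s}(x) · X_r^{(0)}(x) = X_r^{(s)}( M_{0→s}(x) ). -/
open Finset Function

noncomputable section

/-- The Hamiltonian vector field `X_r^{(s)}` of the curve-`s` system: its components in the
coordinates `(λ, μ, c)` are `(∂h_r/∂μ_1, …, ∂h_r/∂μ_n, -∂h_r/∂λ_1, …, -∂h_r/∂λ_n, 0, …, 0)`. -/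
def XF {n N : ℕ} (H : (Fin n → ℝ) → (Fin n → ℝ) → (Fin N → ℝ) → Fin n → ℝ)
    (r : Fin n) (x : PhaseP n N) : PhaseP n N :=
  (fun i => deriv (fun t => H x.1 (Function.update x.2.1 i t) x.2.2 r) (x.2.1 i),
   fun i => - deriv (fun t => H (Function.update x.1 i t) x.2.1 x.2.2 r) (x.1 i),
   0)


namespace MiuraAux


variable {n N : ℕ}

def den (lam : Fin n → ℝ) (j : Fin n) : ℝ := ∏ m ∈ univ.erase j, (lam j - lam m)

def Dcoef (lam : Fin n → ℝ) (q j : Fin n) : ℝ :=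
  (den lam j)⁻¹ * ∑ t ∈ (univ.erase j).powersetCard (q : ℕ), ∏ m ∈ t, (-lam m)

lemma den_ne_zero {lam : Fin n → ℝ} (hinj : Injective lam) (j : Fin n) : den lam j ≠ 0 := by
  refine Finset.prod_ne_zero_iff.mpr fun m hm => ?_
  have hmj : m ≠ j := (Finset.mem_erase.mp hm).1
  exact sub_ne_zero_of_ne fun h => hmj (hinj h).symm

lemma prod_expand (lam : Fin n → ℝ) (E : Finset (Fin n)) (x : ℝ) :
    ∏ m ∈ E, (x - lam m)
      = ∑ q ∈ range (E.card + 1), (∑ t ∈ E.powersetCard q, ∏ m ∈ t, (-lam m)) * x ^ (E.card - q) := by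
  have h1 : ∏ m ∈ E, (x - lam m) = ∏ m ∈ E, ((-lam m) + x) := by
    exact Finset.prod_congr rfl fun m _ => by ring
  rw [h1, Finset.prod_add, Finset.sum_powerset]
  refine Finset.sum_congr rfl fun q hq => ?_
  rw [Finset.sum_mul]
  refine Finset.sum_congr rfl fun t ht => ?_
  have ht' := Finset.mem_powersetCard.mp ht
  rw [Finset.prod_const]
  congr 2
  rw [Finset.card_sdiff_of_subset ht'.1, ht'.2]

lemma sum_Dcoef {lam : Fin n → ℝ} (hinj : Injective lam) (i j : Fin n) :
    ∑ q : Fin n, Dcoef lam q j * lam i ^ ((n : ℤ) - 1 - (q : ℕ))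
      = if i = j then 1 else 0 := by
  have hn1 : 1 ≤ n := j.pos
  have hcard : (univ.erase j).card = n - 1 := by
    rw [Finset.card_erase_of_mem (Finset.mem_univ j), Finset.card_univ, Fintype.card_fin]
  have hz : ∀ q : Fin n, (lam i : ℝ) ^ ((n : ℤ) - 1 - (q : ℕ)) = lam i ^ (n - 1 - (q : ℕ)) := by
    intro q
    have hq := q.isLt
    have : ((n : ℤ) - 1 - (q : ℕ)) = ((n - 1 - (q : ℕ) : ℕ) : ℤ) := by omega
    rw [this, zpow_natCast]
  have key : ∑ q : Fin n, Dcoef lam q j * lam i ^ ((n : ℤ) - 1 - (q : ℕ))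
      = (den lam j)⁻¹ * ∏ m ∈ univ.erase j, (lam i - lam m) := by
    rw [prod_expand lam (univ.erase j) (lam i), hcard]
    have hrange : n - 1 + 1 = n := by omega
    rw [hrange, Finset.mul_sum, ← Fin.sum_univ_eq_sum_range
      (fun q => (den lam j)⁻¹ * ((∑ t ∈ (univ.erase j).powersetCard q, ∏ m ∈ t, (-lam m)) * lam i ^ (n - 1 - q))) n]
    refine Finset.sum_congr rfl fun q _ => ?_
    rw [hz q, Dcoef]
    ring
  rw [key]
  by_cases hij : i = j
  · subst hij
    simp only [if_pos rfl]
    exact inv_mul_cancel₀ (den_ne_zero hinj i)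
  · rw [if_neg hij]
    have hi : i ∈ univ.erase j := Finset.mem_erase.mpr ⟨hij, Finset.mem_univ i⟩
    rw [Finset.prod_eq_zero hi (by ring), mul_zero]

lemma solve_rel {lam : Fin n → ℝ} (hinj : Injective lam) {h b : Fin n → ℝ}
    (hrel : ∀ i, ∑ q : Fin n, h q * lam i ^ ((n : ℤ) - 1 - (q : ℕ)) = b i) (q : Fin n) :
    h q = ∑ j, Dcoef lam q j * b j := by
  classical
  set V : Matrix (Fin n) (Fin n) ℝ := Matrix.of (fun i p => lam i ^ ((n : ℤ) - 1 - (p : ℕ))) with hV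
  set D : Matrix (Fin n) (Fin n) ℝ := Matrix.of (fun p j => Dcoef lam p j) with hD
  have hVD : V * D = 1 := by
    ext i j
    rw [Matrix.mul_apply, Matrix.one_apply]
    have : ∀ p : Fin n, V i p * D p j = Dcoef lam p j * lam i ^ ((n : ℤ) - 1 - (p : ℕ)) := by
      intro p; simp only [hV, hD, Matrix.of_apply]; ring
    rw [Finset.sum_congr rfl fun p _ => this p, sum_Dcoef hinj i j]
  have hDV : D * V = 1 := mul_eq_one_comm.mp hVD
  have hVh : V.mulVec h = b := by
    funext i
    rw [← hrel i, Matrix.mulVec]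
    simp only [dotProduct, hV, Matrix.of_apply]
    exact Finset.sum_congr rfl fun p _ => by ring
  have : D.mulVec (V.mulVec h) = h := by
    rw [Matrix.mulVec_mulVec, hDV, Matrix.one_mulVec]
  conv_lhs => rw [← this]
  rw [hVh, Matrix.mulVec]
  simp only [dotProduct, hD, Matrix.of_apply]



variable {n N : ℕ}

/-- general-domain product differentiability -/
lemma diffAt_prod {E : Type*} [NormedAddCommGroup E] [NormedSpace ℝ E]
    {ι : Type*} (u : Finset ι) {f : ι → E → ℝ} {x : E}
    (h : ∀ i ∈ u, DifferentiableAt ℝ (f i) x) :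
    DifferentiableAt ℝ (fun y => ∏ i ∈ u, f i y) x := by
  classical
  induction u using Finset.induction with
  | empty => simpa using differentiableAt_const (1 : ℝ)
  | insert _ _ hni ih =>
    rename_i a s
    simp only [Finset.prod_insert hni]
    exact (h a (Finset.mem_insert_self a s)).mul
      (ih fun i hi => h i (Finset.mem_insert_of_mem hi))

lemma differentiableAt_leval (p : LaurentPolynomial ℝ) {x : ℝ} (hx : x ≠ 0) :
    DifferentiableAt ℝ (leval p) x := by
  have : leval p = fun x => ∑ k ∈ p.coeff.support, p.coeff k * x ^ k := rfl
  rw [this]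
  exact DifferentiableAt.fun_sum fun k _ =>
    (differentiableAt_zpow.mpr (Or.inl hx)).const_mul (p.coeff k)

def Bsing (n N : ℕ) (f σ : LaurentPolynomial ℝ) (s : ℕ) (t ν : ℝ) (d : Fin N → ℝ) : ℝ :=
  leval f t * t ^ (s : ℤ) * ν ^ 2 - leval σ t * t ^ (-(s : ℤ))
    - ∑ j : Fin N, (if s ≤ (j : ℕ) then d j * t ^ ((n : ℤ) + (j : ℕ) - (s : ℕ))
        else d j * t ^ (((j : ℕ) : ℤ) - (s : ℕ)))

variable (n N) in
def HE (f σ : LaurentPolynomial ℝ) (s : ℕ)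
    (lam nu : Fin n → ℝ) (d : Fin N → ℝ) (q : Fin n) : ℝ :=
  ∑ j, Dcoef lam q j * Bsing n N f σ s (lam j) (nu j) d



lemma HE_rel {f σ : LaurentPolynomial ℝ} {s : ℕ} {lam nu : Fin n → ℝ} {d : Fin N → ℝ}
    (hinj : Injective lam) (i : Fin n) :
    ∑ q : Fin n, HE n N f σ s lam nu d q * lam i ^ ((n : ℤ) - 1 - (q : ℕ))
      = Bsing n N f σ s (lam i) (nu i) d := by
  have h1 : ∀ q : Fin n, HE n N f σ s lam nu d q * lam i ^ ((n : ℤ) - 1 - (q : ℕ))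
      = ∑ j, Bsing n N f σ s (lam j) (nu j) d * (Dcoef lam q j * lam i ^ ((n : ℤ) - 1 - (q : ℕ))) := by
    intro q
    rw [HE, Finset.sum_mul]
    exact Finset.sum_congr rfl fun j _ => by ring
  rw [Finset.sum_congr rfl fun q _ => h1 q, Finset.sum_comm]
  have h2 : ∀ j : Fin n, ∑ q : Fin n,
      Bsing n N f σ s (lam j) (nu j) d * (Dcoef lam q j * lam i ^ ((n : ℤ) - 1 - (q : ℕ)))
      = Bsing n N f σ s (lam j) (nu j) d * (if i = j then 1 else 0) := by
    intro j
    rw [← Finset.mul_sum, sum_Dcoef hinj i j]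
  rw [Finset.sum_congr rfl fun j _ => h2 j]
  simp [mul_ite]

lemma sep_to_B {f σ : LaurentPolynomial ℝ} {s : ℕ}
    {H : (Fin n → ℝ) → (Fin n → ℝ) → (Fin N → ℝ) → Fin n → ℝ}
    (hH : SepSol n N f σ s H) {lam : Fin n → ℝ} (hlam : lam ∈ Omega n)
    (mu : Fin n → ℝ) (c : Fin N → ℝ) (i : Fin n) :
    ∑ q : Fin n, H lam mu c q * lam i ^ ((n : ℤ) - 1 - (q : ℕ))
      = Bsing n N f σ s (lam i) (mu i) c := by
  have := hH lam hlam mu c i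
  rw [Bsing]
  linarith

lemma Hval {f σ : LaurentPolynomial ℝ} {s : ℕ}
    {H : (Fin n → ℝ) → (Fin n → ℝ) → (Fin N → ℝ) → Fin n → ℝ}
    (hH : SepSol n N f σ s H) {lam : Fin n → ℝ} (hlam : lam ∈ Omega n)
    (mu : Fin n → ℝ) (c : Fin N → ℝ) (q : Fin n) :
    H lam mu c q = HE n N f σ s lam mu c q :=
  solve_rel hlam.2 (fun i => sep_to_B hH hlam mu c i) q

section Diff

variable {f σ : LaurentPolynomial ℝ} {s : ℕ}

lemma diffAt_Dcoef {lam : Fin n → ℝ} (hinj : Injective lam) (q j : Fin n) :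
    DifferentiableAt ℝ (fun l : Fin n → ℝ => Dcoef l q j) lam := by
  have hden : DifferentiableAt ℝ (fun l : Fin n → ℝ => den l j) lam := by
    have : (fun l : Fin n → ℝ => den l j)
        = fun l => ∏ m ∈ univ.erase j, (l j - l m) := rfl
    rw [this]
    have hp : ∀ m : Fin n, DifferentiableAt ℝ (fun l : Fin n → ℝ => l m) lam := fun m =>
      (ContinuousLinearMap.proj m : (Fin n → ℝ) →L[ℝ] ℝ).differentiableAt
    exact diffAt_prod _ fun m _ => (hp j).sub (hp m)
  have : (fun l : Fin n → ℝ => Dcoef l q j)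
      = fun l => (den l j)⁻¹ * ∑ t ∈ (univ.erase j).powersetCard (q : ℕ), ∏ m ∈ t, (-l m) := rfl
  rw [this]
  refine DifferentiableAt.mul (hden.inv (den_ne_zero hinj j)) ?_
  have hp : ∀ m : Fin n, DifferentiableAt ℝ (fun l : Fin n → ℝ => l m) lam := fun m =>
    (ContinuousLinearMap.proj m : (Fin n → ℝ) →L[ℝ] ℝ).differentiableAt
  exact DifferentiableAt.fun_sum fun t _ => diffAt_prod _ fun m _ => (hp m).neg

lemma diffAt_pL {x : PhaseP n N} (j : Fin n) :
    DifferentiableAt ℝ (fun y : PhaseP n N => y.1 j) x :=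
  ((ContinuousLinearMap.proj j).comp
    (ContinuousLinearMap.fst ℝ (Fin n → ℝ) ((Fin n → ℝ) × (Fin N → ℝ)))).differentiableAt

lemma diffAt_pM {x : PhaseP n N} (j : Fin n) :
    DifferentiableAt ℝ (fun y : PhaseP n N => y.2.1 j) x :=
  ((ContinuousLinearMap.proj j).comp
    ((ContinuousLinearMap.fst ℝ (Fin n → ℝ) (Fin N → ℝ)).comp
      (ContinuousLinearMap.snd ℝ (Fin n → ℝ) ((Fin n → ℝ) × (Fin N → ℝ))))).differentiableAt

lemma diffAt_pC {x : PhaseP n N} (k : Fin N) :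
    DifferentiableAt ℝ (fun y : PhaseP n N => y.2.2 k) x :=
  ((ContinuousLinearMap.proj k).comp
    ((ContinuousLinearMap.snd ℝ (Fin n → ℝ) (Fin N → ℝ)).comp
      (ContinuousLinearMap.snd ℝ (Fin n → ℝ) ((Fin n → ℝ) × (Fin N → ℝ))))).differentiableAt

lemma diffAt_Bsing_comp (j : Fin n) {x : PhaseP n N} (hx : x.1 j ≠ 0) :
    DifferentiableAt ℝ (fun y : PhaseP n N => Bsing n N f σ s (y.1 j) (y.2.1 j) y.2.2) x := by
  have hzp : ∀ e : ℤ, DifferentiableAt ℝ (fun y : PhaseP n N => y.1 j ^ e) x := fun e =>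
    (differentiableAt_zpow.mpr (Or.inl hx)).comp (g := fun u : ℝ => u ^ e) x (diffAt_pL j)
  have h1 : DifferentiableAt ℝ (fun y : PhaseP n N => leval f (y.1 j)) x :=
    (differentiableAt_leval f hx).comp (g := leval f) x (diffAt_pL j)
  have h2 : DifferentiableAt ℝ (fun y : PhaseP n N => leval σ (y.1 j)) x :=
    (differentiableAt_leval σ hx).comp (g := leval σ) x (diffAt_pL j)
  have h3 : DifferentiableAt ℝ (fun y : PhaseP n N =>
      ∑ k : Fin N, (if s ≤ (k : ℕ) then y.2.2 k * y.1 j ^ ((n : ℤ) + (k : ℕ) - (s : ℕ))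
        else y.2.2 k * y.1 j ^ (((k : ℕ) : ℤ) - (s : ℕ)))) x := by
    refine DifferentiableAt.fun_sum fun k _ => ?_
    by_cases hk : s ≤ (k : ℕ)
    · simp only [if_pos hk]
      exact (diffAt_pC k).mul (hzp _)
    · simp only [if_neg hk]
      exact (diffAt_pC k).mul (hzp _)
  exact (((h1.mul (hzp _)).mul ((diffAt_pM j).pow 2)).sub (h2.mul (hzp _))).sub h3

lemma diffAt_HE_comp {x : PhaseP n N} (hx : x.1 ∈ Omega n) (q : Fin n) :
    DifferentiableAt ℝ (fun y : PhaseP n N => HE n N f σ s y.1 y.2.1 y.2.2 q) x := by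
  have : (fun y : PhaseP n N => HE n N f σ s y.1 y.2.1 y.2.2 q)
      = fun y => ∑ j, Dcoef y.1 q j * Bsing n N f σ s (y.1 j) (y.2.1 j) y.2.2 := rfl
  rw [this]
  refine DifferentiableAt.fun_sum fun j _ => DifferentiableAt.mul ?_ (diffAt_Bsing_comp j (hx.1 j))
  exact (diffAt_Dcoef hx.2 q j).comp x differentiableAt_fst

lemma hasDerivAt_curve (x : PhaseP n N) (e : PhaseP n N) (t₀ t : ℝ) :
    HasDerivAt (fun u : ℝ => x + (u - t₀) • e) e t := by
  have h1 : HasDerivAt (fun u : ℝ => u - t₀) 1 t := (hasDerivAt_id t).sub_const t₀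
  simpa using (h1.smul_const e).const_add x

lemma curveL_eq (x : PhaseP n N) (i : Fin n) (t : ℝ) :
    x + (t - x.1 i) • ((Pi.single i 1, 0, 0) : PhaseP n N)
      = (update x.1 i t, x.2.1, x.2.2) := by
  refine Prod.ext ?_ (Prod.ext ?_ ?_)
  · funext j
    simp only [Prod.fst_add, Prod.smul_fst, Pi.add_apply, Pi.smul_apply, Pi.single_apply,
      smul_eq_mul, Function.update_apply]
    by_cases hji : j = i
    · subst hji; simp
    · simp [hji]
  · simp
  · simp

lemma curveM_eq (x : PhaseP n N) (i : Fin n) (t : ℝ) :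
    x + (t - x.2.1 i) • ((0, Pi.single i 1, 0) : PhaseP n N)
      = (x.1, update x.2.1 i t, x.2.2) := by
  refine Prod.ext ?_ (Prod.ext ?_ ?_)
  · simp
  · funext j
    simp only [Prod.snd_add, Prod.fst_add, Prod.smul_snd, Prod.smul_fst, Pi.add_apply,
      Pi.smul_apply, Pi.single_apply, smul_eq_mul, Function.update_apply]
    by_cases hji : j = i
    · subst hji; simp
    · simp [hji]
  · simp

lemma curveC_eq (x : PhaseP n N) (k : Fin N) (t : ℝ) :
    x + (t - x.2.2 k) • ((0, 0, Pi.single k 1) : PhaseP n N)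
      = (x.1, x.2.1, update x.2.2 k t) := by
  refine Prod.ext ?_ (Prod.ext ?_ ?_)
  · simp
  · simp
  · funext j
    simp only [Prod.snd_add, Prod.smul_snd, Pi.add_apply,
      Pi.smul_apply, Pi.single_apply, smul_eq_mul, Function.update_apply]
    by_cases hji : j = k
    · subst hji; simp
    · simp [hji]

variable {F : PhaseP n N → ℝ} {L : PhaseP n N →L[ℝ] ℝ} {x : PhaseP n N}

lemma hasDerivAt_updL (hF : HasFDerivAt F L x) (i : Fin n) :
    HasDerivAt (fun t => F (update x.1 i t, x.2.1, x.2.2))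
      (L ((Pi.single i 1, 0, 0) : PhaseP n N)) (x.1 i) := by
  have hF' : HasFDerivAt F L ((fun u : ℝ => x + (u - x.1 i) • ((Pi.single i 1, 0, 0) : PhaseP n N)) (x.1 i)) := by
    simpa using hF
  have h := hF'.comp_hasDerivAt (x.1 i)
    (hasDerivAt_curve x ((Pi.single i 1, 0, 0) : PhaseP n N) (x.1 i) (x.1 i))
  have heq : (F ∘ fun u : ℝ => x + (u - x.1 i) • ((Pi.single i 1, 0, 0) : PhaseP n N))
      = fun t => F (update x.1 i t, x.2.1, x.2.2) :=
    funext fun t => by rw [Function.comp_apply, curveL_eq]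
  rwa [heq] at h

lemma hasDerivAt_updM (hF : HasFDerivAt F L x) (i : Fin n) :
    HasDerivAt (fun t => F (x.1, update x.2.1 i t, x.2.2))
      (L ((0, Pi.single i 1, 0) : PhaseP n N)) (x.2.1 i) := by
  have hF' : HasFDerivAt F L ((fun u : ℝ => x + (u - x.2.1 i) • ((0, Pi.single i 1, 0) : PhaseP n N)) (x.2.1 i)) := by
    simpa using hF
  have h := hF'.comp_hasDerivAt (x.2.1 i)
    (hasDerivAt_curve x ((0, Pi.single i 1, 0) : PhaseP n N) (x.2.1 i) (x.2.1 i))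
  have heq : (F ∘ fun u : ℝ => x + (u - x.2.1 i) • ((0, Pi.single i 1, 0) : PhaseP n N))
      = fun t => F (x.1, update x.2.1 i t, x.2.2) :=
    funext fun t => by rw [Function.comp_apply, curveM_eq]
  rwa [heq] at h

lemma hasDerivAt_updC (hF : HasFDerivAt F L x) (k : Fin N) :
    HasDerivAt (fun t => F (x.1, x.2.1, update x.2.2 k t))
      (L ((0, 0, Pi.single k 1) : PhaseP n N)) (x.2.2 k) := by
  have hF' : HasFDerivAt F L ((fun u : ℝ => x + (u - x.2.2 k) • ((0, 0, Pi.single k 1) : PhaseP n N)) (x.2.2 k)) := by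
    simpa using hF
  have h := hF'.comp_hasDerivAt (x.2.2 k)
    (hasDerivAt_curve x ((0, 0, Pi.single k 1) : PhaseP n N) (x.2.2 k) (x.2.2 k))
  have heq : (F ∘ fun u : ℝ => x + (u - x.2.2 k) • ((0, 0, Pi.single k 1) : PhaseP n N))
      = fun t => F (x.1, x.2.1, update x.2.2 k t) :=
    funext fun t => by rw [Function.comp_apply, curveC_eq]
  rwa [heq] at h

lemma vec_decomp (v : PhaseP n N) :
    v = (∑ i, v.1 i • ((Pi.single i 1, 0, 0) : PhaseP n N))
      + (∑ i, v.2.1 i • ((0, Pi.single i 1, 0) : PhaseP n N))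
      + (∑ k, v.2.2 k • ((0, 0, Pi.single k 1) : PhaseP n N)) := by
  refine Prod.ext ?_ (Prod.ext ?_ ?_)
  · simp only [Prod.fst_add, Prod.fst_sum, Prod.smul_fst, smul_zero,
      Finset.sum_const_zero, add_zero, zero_add]
    funext j
    simp [Finset.sum_apply, Pi.single_apply, mul_ite]
  · simp only [Prod.snd_add, Prod.snd_sum, Prod.fst_add, Prod.fst_sum,
      Prod.smul_snd, Prod.smul_fst, smul_zero,
      Finset.sum_const_zero, add_zero, zero_add]
    funext j
    simp [Finset.sum_apply, Pi.single_apply, mul_ite]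
  · simp only [Prod.snd_add, Prod.snd_sum, Prod.smul_snd, smul_zero,
      Finset.sum_const_zero, add_zero, zero_add]
    funext j
    simp [Finset.sum_apply, Pi.single_apply, mul_ite]

lemma fderiv_apply_partials (hF : DifferentiableAt ℝ F x) (v : PhaseP n N) :
    fderiv ℝ F x v
      = (∑ i, v.1 i * deriv (fun t => F (update x.1 i t, x.2.1, x.2.2)) (x.1 i))
        + (∑ i, v.2.1 i * deriv (fun t => F (x.1, update x.2.1 i t, x.2.2)) (x.2.1 i))
        + (∑ k, v.2.2 k * deriv (fun t => F (x.1, x.2.1, update x.2.2 k t)) (x.2.2 k)) := by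
  classical
  have hL := hF.hasFDerivAt
  have h1 : ∀ i : Fin n, deriv (fun t => F (update x.1 i t, x.2.1, x.2.2)) (x.1 i)
      = fderiv ℝ F x ((Pi.single i 1, 0, 0) : PhaseP n N) := fun i => (hasDerivAt_updL hL i).deriv
  have h2 : ∀ i : Fin n, deriv (fun t => F (x.1, update x.2.1 i t, x.2.2)) (x.2.1 i)
      = fderiv ℝ F x ((0, Pi.single i 1, 0) : PhaseP n N) := fun i => (hasDerivAt_updM hL i).deriv
  have h3 : ∀ k : Fin N, deriv (fun t => F (x.1, x.2.1, update x.2.2 k t)) (x.2.2 k)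
      = fderiv ℝ F x ((0, 0, Pi.single k 1) : PhaseP n N) := fun k => (hasDerivAt_updC hL k).deriv
  simp only [h1, h2, h3]
  conv_lhs => rw [vec_decomp v]
  rw [map_add, map_add, map_sum, map_sum, map_sum]
  simp only [map_smul, smul_eq_mul]

lemma isOpen_Omega : IsOpen (Omega n) := by
  have h1 : Omega n = (⋂ i : Fin n, {lam : Fin n → ℝ | lam i ≠ 0}) ∩
      (⋂ p : {p : Fin n × Fin n // p.1 ≠ p.2}, {lam : Fin n → ℝ | lam p.1.1 ≠ lam p.1.2}) := by
    ext lam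
    simp only [Omega, Set.mem_inter_iff, Set.mem_iInter, Set.mem_setOf_eq]
    constructor
    · rintro ⟨ha, hb⟩
      exact ⟨ha, fun p heq => p.2 (hb heq)⟩
    · rintro ⟨ha, hb⟩
      refine ⟨ha, fun a b hab => ?_⟩
      by_contra hne
      exact hb ⟨(a, b), hne⟩ hab
  rw [h1]
  refine IsOpen.inter (isOpen_iInter_of_finite fun i => ?_) (isOpen_iInter_of_finite fun p => ?_)
  · exact isOpen_ne_fun (continuous_apply i) continuous_const
  · exact isOpen_ne_fun (continuous_apply p.1.1) (continuous_apply p.1.2)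

lemma continuous_update_fn (lam : Fin n → ℝ) (i : Fin n) :
    Continuous fun t : ℝ => update lam i t := by
  refine continuous_pi fun j => ?_
  by_cases hji : j = i
  · subst hji
    simpa only [update_self] using continuous_id'
  · simpa only [update_of_ne hji] using continuous_const

lemma eventually_update_mem {lam : Fin n → ℝ} (hlam : lam ∈ Omega n) (i : Fin n) :
    ∀ᶠ t in nhds (lam i), update lam i t ∈ Omega n := by
  have hmem : lam i ∈ (fun t : ℝ => update lam i t) ⁻¹' Omega n := by
    simp only [Set.mem_preimage, update_eq_self]
    exact hlam
  have := (isOpen_Omega.preimage (continuous_update_fn lam i)).mem_nhds hmem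
  exact Filter.eventually_of_mem this fun t ht => ht

variable (n N) in
def Kcal (f σ : LaurentPolynomial ℝ) (s : ℕ) (lam nu : Fin n → ℝ) (d : Fin N → ℝ) (i : Fin n) : ℝ :=
  deriv (fun t => Bsing n N f σ s t (nu i) d) (lam i)
    - ∑ p : Fin n, HE n N f σ s lam nu d p
        * ((((n : ℤ) - 1 - (p : ℕ) : ℤ) : ℝ) * lam i ^ ((n : ℤ) - 1 - (p : ℕ) - 1))

lemma hasDerivAt_Bsing_nu (s : ℕ) (t ν : ℝ) (d : Fin N → ℝ) :
    HasDerivAt (fun w => Bsing n N f σ s t w d) (leval f t * t ^ (s : ℤ) * (2 * ν)) ν := by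
  have h1 : HasDerivAt (fun w : ℝ => leval f t * t ^ (s : ℤ) * w ^ 2)
      (leval f t * t ^ (s : ℤ) * (2 * ν)) ν := by
    have := (hasDerivAt_pow 2 ν).const_mul (leval f t * t ^ (s : ℤ))
    refine this.congr_deriv ?_
    norm_num
  exact (h1.sub_const _).sub_const _

lemma hasDerivAt_HE_mu (f σ : LaurentPolynomial ℝ) (s : ℕ)
    (lam nu : Fin n → ℝ) (d : Fin N → ℝ) (q i : Fin n) :
    HasDerivAt (fun t => HE n N f σ s lam (update nu i t) d q)
      (Dcoef lam q i * (leval f (lam i) * lam i ^ (s : ℤ) * (2 * nu i))) (nu i) := by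
  have hfun : (fun t => HE n N f σ s lam (update nu i t) d q)
      = fun t => ∑ j, Dcoef lam q j * Bsing n N f σ s (lam j) (update nu i t j) d := rfl
  rw [hfun]
  have key : ∀ j : Fin n,
      HasDerivAt (fun t => Dcoef lam q j * Bsing n N f σ s (lam j) (update nu i t j) d)
        (if j = i then Dcoef lam q i * (leval f (lam i) * lam i ^ (s : ℤ) * (2 * nu i)) else 0)
        (nu i) := by
    intro j
    by_cases hji : j = i
    · subst hji
      simp only [if_pos rfl]
      have h2 : (fun t => Dcoef lam q j * Bsing n N f σ s (lam j) (update nu j t j) d)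
          = fun t => Dcoef lam q j * Bsing n N f σ s (lam j) t d := by
        funext t; rw [update_self]
      rw [h2]
      exact (hasDerivAt_Bsing_nu (f := f) (σ := σ) s (lam j) (nu j) d).const_mul _
    · have h2 : (fun t => Dcoef lam q j * Bsing n N f σ s (lam j) (update nu i t j) d)
          = fun _ => Dcoef lam q j * Bsing n N f σ s (lam j) (nu j) d := by
        funext t; rw [update_of_ne hji]
      rw [h2, if_neg hji]
      exact hasDerivAt_const _ _
  have := HasDerivAt.fun_sum (u := univ) fun j _ => key j
  simpa [Finset.sum_ite_eq'] using this

lemma diffAt_HE_lam_curve {f σ : LaurentPolynomial ℝ} {s : ℕ}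
    {lam nu : Fin n → ℝ} {d : Fin N → ℝ} (hlam : lam ∈ Omega n) (i p : Fin n) :
    DifferentiableAt ℝ (fun t => HE n N f σ s (update lam i t) nu d p) (lam i) := by
  have hF : DifferentiableAt ℝ (fun y : PhaseP n N => HE n N f σ s y.1 y.2.1 y.2.2 p)
      ((lam, nu, d) : PhaseP n N) := diffAt_HE_comp hlam p
  exact (hasDerivAt_updL (x := ((lam, nu, d) : PhaseP n N)) hF.hasFDerivAt i).differentiableAt

lemma deriv_HE_lam {f σ : LaurentPolynomial ℝ} {s : ℕ}
    {lam nu : Fin n → ℝ} {d : Fin N → ℝ} (hlam : lam ∈ Omega n) (q i : Fin n) :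
    deriv (fun t => HE n N f σ s (update lam i t) nu d q) (lam i)
      = Dcoef lam q i * Kcal n N f σ s lam nu d i := by
  classical
  set u : Fin n → ℝ := fun p => deriv (fun t => HE n N f σ s (update lam i t) nu d p) (lam i)
    with hu
  have hdiff : ∀ p : Fin n,
      DifferentiableAt ℝ (fun t => HE n N f σ s (update lam i t) nu d p) (lam i) :=
    fun p => diffAt_HE_lam_curve hlam i p
  have hrel : ∀ i' : Fin n, ∑ p : Fin n, u p * lam i' ^ ((n : ℤ) - 1 - (p : ℕ))
      = (if i' = i then Kcal n N f σ s lam nu d i else 0) := by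
    intro i'
    by_cases hii : i' = i
    · subst hii
      rw [if_pos rfl]
      set Ψ : ℝ → ℝ := fun t => ∑ p : Fin n,
        HE n N f σ s (update lam i' t) nu d p * t ^ ((n : ℤ) - 1 - (p : ℕ)) with hΨ
      have hev : Ψ =ᶠ[nhds (lam i')] fun t => Bsing n N f σ s t (nu i') d := by
        filter_upwards [eventually_update_mem hlam i'] with t ht
        have := HE_rel (f := f) (σ := σ) (s := s) (nu := nu) (d := d) ht.2 i'
        simpa [update_self] using this
      have hΨd : HasDerivAt Ψ (∑ p : Fin n,
          (u p * lam i' ^ ((n : ℤ) - 1 - (p : ℕ))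
            + HE n N f σ s lam nu d p
              * ((((n : ℤ) - 1 - (p : ℕ) : ℤ) : ℝ) * lam i' ^ ((n : ℤ) - 1 - (p : ℕ) - 1)))) (lam i') := by
        refine HasDerivAt.fun_sum fun p _ => ?_
        have h1 : HasDerivAt (fun t => HE n N f σ s (update lam i' t) nu d p) (u p) (lam i') :=
          (hdiff p).hasDerivAt
        have h2 : HasDerivAt (fun t : ℝ => t ^ ((n : ℤ) - 1 - (p : ℕ)))
            ((((n : ℤ) - 1 - (p : ℕ) : ℤ) : ℝ) * lam i' ^ ((n : ℤ) - 1 - (p : ℕ) - 1)) (lam i') :=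
          hasDerivAt_zpow _ _ (Or.inl (hlam.1 i'))
        have := h1.fun_mul h2
        simpa [update_eq_self] using this
      have hder : deriv Ψ (lam i') = deriv (fun t => Bsing n N f σ s t (nu i') d) (lam i') :=
        hev.deriv_eq
      have := hΨd.deriv
      rw [hder] at this
      rw [Kcal]
      rw [Finset.sum_add_distrib] at this
      linarith [this]
    · rw [if_neg hii]
      set Ψ : ℝ → ℝ := fun t => ∑ p : Fin n,
        HE n N f σ s (update lam i t) nu d p * lam i' ^ ((n : ℤ) - 1 - (p : ℕ)) with hΨ
      have hev : Ψ =ᶠ[nhds (lam i)] fun _ => Bsing n N f σ s (lam i') (nu i') d := by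
        filter_upwards [eventually_update_mem hlam i] with t ht
        have := HE_rel (f := f) (σ := σ) (s := s) (nu := nu) (d := d) ht.2 i'
        simpa [update_of_ne hii] using this
      have hΨd : HasDerivAt Ψ (∑ p : Fin n, u p * lam i' ^ ((n : ℤ) - 1 - (p : ℕ))) (lam i) := by
        refine HasDerivAt.fun_sum fun p _ => ?_
        exact ((hdiff p).hasDerivAt).mul_const _
      have hder : deriv Ψ (lam i) = deriv (fun _ : ℝ => Bsing n N f σ s (lam i') (nu i') d) (lam i) :=
        hev.deriv_eq
      rw [deriv_const] at hder
      have := hΨd.deriv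
      rw [hder] at this
      exact this.symm
  have := solve_rel hlam.2 hrel q
  rw [hu] at this
  simpa [mul_ite, Finset.sum_ite_eq'] using this

end Diff


lemma key_reindex {n N s : ℕ} (hsN : s ≤ N) (hNn : N ≤ n)
    (A B : ℕ → ℝ) (t : ℝ) (ht : t ≠ 0) :
    (∑ q ∈ range n, (if q < s then B (s - 1 - q) else A (q - s)) * t ^ ((n : ℤ) - 1 - (q : ℤ)))
      + ∑ k ∈ range N, (if s ≤ k then 0 else A (n - 1 - k) * t ^ ((k : ℤ) - (s : ℤ)))
    = t ^ (-(s : ℤ)) * (∑ q ∈ range n, A q * t ^ ((n : ℤ) - 1 - (q : ℤ)))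
      + ∑ k ∈ range N, (if s ≤ k then 0 else B k * t ^ ((n : ℤ) + (k : ℤ) - (s : ℤ))) := by
  have hsn : s ≤ n := le_trans hsN hNn
  have hA : (∑ q ∈ range n, (if q < s then B (s - 1 - q) else A (q - s)) * t ^ ((n : ℤ) - 1 - (q : ℤ)))
      = (∑ k ∈ range s, B k * t ^ ((n : ℤ) + (k : ℤ) - (s : ℤ)))
        + ∑ p ∈ range (n - s), A p * t ^ ((n : ℤ) - 1 - (p : ℤ) - (s : ℤ)) := by
    rw [← Finset.sum_range_add_sum_Ico _ hsn]
    congr 1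
    · rw [← Finset.sum_range_reflect (fun k => B k * t ^ ((n : ℤ) + (k : ℤ) - (s : ℤ))) s]
      refine Finset.sum_congr rfl fun q hq => ?_
      have hq' := Finset.mem_range.mp hq
      rw [if_pos hq']
      have he : (n : ℤ) - 1 - (q : ℤ) = (n : ℤ) + ((s - 1 - q : ℕ) : ℤ) - (s : ℤ) := by omega
      rw [he]
    · rw [Finset.sum_Ico_eq_sum_range]
      refine Finset.sum_congr rfl fun p hp => ?_
      have hp' := Finset.mem_range.mp hp
      rw [if_neg (by omega)]
      have h1 : s + p - s = p := by omega
      have he : (n : ℤ) - 1 - ((s + p : ℕ) : ℤ) = (n : ℤ) - 1 - (p : ℤ) - (s : ℤ) := by omega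
      rw [h1, he]
  have hC : t ^ (-(s : ℤ)) * (∑ q ∈ range n, A q * t ^ ((n : ℤ) - 1 - (q : ℤ)))
      = (∑ p ∈ range (n - s), A p * t ^ ((n : ℤ) - 1 - (p : ℤ) - (s : ℤ)))
        + ∑ j ∈ range s, A (n - 1 - j) * t ^ ((j : ℤ) - (s : ℤ)) := by
    rw [Finset.mul_sum]
    have h1 : ∀ q ∈ range n, t ^ (-(s : ℤ)) * (A q * t ^ ((n : ℤ) - 1 - (q : ℤ)))
        = A q * t ^ ((n : ℤ) - 1 - (q : ℤ) - (s : ℤ)) := by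
      intro q _
      rw [show ((n : ℤ) - 1 - (q : ℤ) - (s : ℤ)) = (-(s : ℤ)) + ((n : ℤ) - 1 - (q : ℤ)) by ring,
        zpow_add₀ ht]
      ring
    rw [Finset.sum_congr rfl h1,
      ← Finset.sum_range_add_sum_Ico _ (by omega : n - s ≤ n)]
    congr 1
    rw [Finset.sum_Ico_eq_sum_range,
      ← Finset.sum_range_reflect (fun j => A (n - 1 - j) * t ^ ((j : ℤ) - (s : ℤ))) s,
      show n - (n - s) = s by omega]
    refine Finset.sum_congr rfl fun j hj => ?_
    have hj' := Finset.mem_range.mp hj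
    have h2 : n - 1 - (s - 1 - j) = n - s + j := by omega
    have he : (n : ℤ) - 1 - ((n - s + j : ℕ) : ℤ) - (s : ℤ) = ((s - 1 - j : ℕ) : ℤ) - (s : ℤ) := by
      omega
    rw [h2, he]
  have hB : (∑ k ∈ range N, (if s ≤ k then 0 else A (n - 1 - k) * t ^ ((k : ℤ) - (s : ℤ))))
      = ∑ j ∈ range s, A (n - 1 - j) * t ^ ((j : ℤ) - (s : ℤ)) := by
    rw [← Finset.sum_range_add_sum_Ico _ hsN]
    have h2 : (∑ k ∈ Ico s N, (if s ≤ k then (0 : ℝ) else A (n - 1 - k) * t ^ ((k : ℤ) - (s : ℤ)))) = 0 :=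
      Finset.sum_eq_zero fun k hk => if_pos (Finset.mem_Ico.mp hk).1
    rw [h2, add_zero]
    exact Finset.sum_congr rfl fun k hk => if_neg (by simpa using Finset.mem_range.mp hk)
  have hD : (∑ k ∈ range N, (if s ≤ k then 0 else B k * t ^ ((n : ℤ) + (k : ℤ) - (s : ℤ))))
      = ∑ k ∈ range s, B k * t ^ ((n : ℤ) + (k : ℤ) - (s : ℤ)) := by
    rw [← Finset.sum_range_add_sum_Ico _ hsN]
    have h2 : (∑ k ∈ Ico s N, (if s ≤ k then (0 : ℝ) else B k * t ^ ((n : ℤ) + (k : ℤ) - (s : ℤ)))) = 0 :=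
      Finset.sum_eq_zero fun k hk => if_pos (Finset.mem_Ico.mp hk).1
    rw [h2, add_zero]
    exact Finset.sum_congr rfl fun k hk => if_neg (by simpa using Finset.mem_range.mp hk)
  rw [hA, hC, hB, hD]
  ring

def ext {m : ℕ} (h : Fin m → ℝ) : ℕ → ℝ := fun p => if hp : p < m then h ⟨p, hp⟩ else 0

lemma ext_coe {m : ℕ} (h : Fin m → ℝ) (k : Fin m) : ext h (k : ℕ) = h k := by
  simp [ext, k.isLt]

variable (n N) in
def candF (s : ℕ) (h : Fin n → ℝ) (c : Fin N → ℝ) : Fin n → ℝ :=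
  fun q => if (q : ℕ) < s then ext c (s - 1 - (q : ℕ)) else ext h ((q : ℕ) - s)

variable (n N) in
def cbarF (s : ℕ) (h : Fin n → ℝ) (c : Fin N → ℝ) : Fin N → ℝ :=
  fun k => if (k : ℕ) < s then ext h (n - 1 - (k : ℕ)) else c k

section Master

variable {f σ : LaurentPolynomial ℝ} {s : ℕ}

lemma master (hsN : s ≤ N) (hNn : N ≤ n) (lami mui : ℝ) (hlami : lami ≠ 0)
    (h : Fin n → ℝ) (c : Fin N → ℝ) (t : ℝ) (ht : t ≠ 0) :
    (∑ q : Fin n, candF n N s h c q * t ^ ((n : ℤ) - 1 - (q : ℕ)))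
      - Bsing n N f σ s t (lami ^ (((0 : ℕ) : ℤ) - (s : ℕ)) * mui) (cbarF n N s h c)
    = t ^ (-(s : ℤ)) * ((∑ q : Fin n, h q * t ^ ((n : ℤ) - 1 - (q : ℕ)))
          - Bsing n N f σ 0 t mui c)
      - leval f t * mui ^ 2 * t ^ (-(s : ℤ)) * ((t * lami⁻¹) ^ (2 * s) - 1) := by
  classical
  have hcand : (∑ q : Fin n, candF n N s h c q * t ^ ((n : ℤ) - 1 - (q : ℕ)))
      = ∑ q ∈ range n, (if q < s then ext c (s - 1 - q) else ext h (q - s)) * t ^ ((n : ℤ) - 1 - (q : ℤ)) :=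
    Fin.sum_univ_eq_sum_range
      (fun q => (if q < s then ext c (s - 1 - q) else ext h (q - s)) * t ^ ((n : ℤ) - 1 - (q : ℤ))) n
  have hh : (∑ q : Fin n, h q * t ^ ((n : ℤ) - 1 - (q : ℕ)))
      = ∑ q ∈ range n, ext h q * t ^ ((n : ℤ) - 1 - (q : ℤ)) := by
    rw [← Fin.sum_univ_eq_sum_range (fun q => ext h q * t ^ ((n : ℤ) - 1 - (q : ℤ))) n]
    exact Finset.sum_congr rfl fun q _ => by rw [ext_coe]
  have hcsums : (∑ j : Fin N, (if s ≤ (j : ℕ) then cbarF n N s h c j * t ^ ((n : ℤ) + (j : ℕ) - (s : ℕ))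
        else cbarF n N s h c j * t ^ (((j : ℕ) : ℤ) - (s : ℕ))))
      = (∑ k ∈ range N, (if s ≤ k then ext c k * t ^ ((n : ℤ) + (k : ℤ) - (s : ℤ)) else 0))
        + ∑ k ∈ range N, (if s ≤ k then 0 else ext h (n - 1 - k) * t ^ ((k : ℤ) - (s : ℤ))) := by
    rw [← Finset.sum_add_distrib,
      ← Fin.sum_univ_eq_sum_range (fun k => (if s ≤ k then ext c k * t ^ ((n : ℤ) + (k : ℤ) - (s : ℤ)) else 0)
        + (if s ≤ k then 0 else ext h (n - 1 - k) * t ^ ((k : ℤ) - (s : ℤ)))) N]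
    refine Finset.sum_congr rfl fun k _ => ?_
    by_cases hk : s ≤ (k : ℕ)
    · simp only [cbarF, if_pos hk, if_neg (not_lt.mpr hk), ext_coe, add_zero]
    · simp only [cbarF, if_neg hk, if_pos (not_le.mp hk), zero_add]
  have hcsum0 : (∑ j : Fin N, (if (0 : ℕ) ≤ (j : ℕ) then c j * t ^ ((n : ℤ) + (j : ℕ) - ((0 : ℕ) : ℕ))
        else c j * t ^ (((j : ℕ) : ℤ) - ((0 : ℕ) : ℕ))))
      = ∑ k ∈ range N, ext c k * t ^ ((n : ℤ) + (k : ℤ)) := by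
    rw [← Fin.sum_univ_eq_sum_range (fun k => ext c k * t ^ ((n : ℤ) + (k : ℤ))) N]
    refine Finset.sum_congr rfl fun k _ => ?_
    rw [if_pos (Nat.zero_le _), ext_coe]
    norm_num
  have hkey := key_reindex (n := n) (N := N) (s := s) hsN hNn (ext h) (ext c) t ht
  have hc0 : t ^ (-(s : ℤ)) * (∑ k ∈ range N, ext c k * t ^ ((n : ℤ) + (k : ℤ)))
      = (∑ k ∈ range N, (if s ≤ k then ext c k * t ^ ((n : ℤ) + (k : ℤ) - (s : ℤ)) else 0))
        + ∑ k ∈ range N, (if s ≤ k then 0 else ext c k * t ^ ((n : ℤ) + (k : ℤ) - (s : ℤ))) := by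
    rw [Finset.mul_sum, ← Finset.sum_add_distrib]
    refine Finset.sum_congr rfl fun k _ => ?_
    have he : t ^ (-(s : ℤ)) * (ext c k * t ^ ((n : ℤ) + (k : ℤ)))
        = ext c k * t ^ ((n : ℤ) + (k : ℤ) - (s : ℤ)) := by
      rw [zpow_sub₀ ht, zpow_neg]
      ring
    rw [he]
    by_cases hk : s ≤ k
    · rw [if_pos hk, if_pos hk, add_zero]
    · rw [if_neg hk, if_neg hk, zero_add]
  have hts : t ^ (s : ℤ) = t ^ (s : ℕ) := zpow_natCast t s
  have htns : t ^ (-(s : ℤ)) = (t ^ (s : ℕ))⁻¹ := by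
    rw [zpow_neg, hts]
  have hl1 : lami ^ (((0 : ℕ) : ℤ) - (s : ℕ)) = (lami ^ (s : ℕ))⁻¹ := by
    have : (((0 : ℕ) : ℤ) - (s : ℕ)) = -(s : ℤ) := by simp
    rw [this, zpow_neg, zpow_natCast]
  have hf : leval f t * t ^ ((s : ℕ) : ℤ) * (lami ^ (((0 : ℕ) : ℤ) - (s : ℕ)) * mui) ^ 2
      = t ^ (-(s : ℤ)) * (leval f t * t ^ (((0 : ℕ) : ℕ) : ℤ) * mui ^ 2)
        + leval f t * mui ^ 2 * t ^ (-(s : ℤ)) * ((t * lami⁻¹) ^ (2 * s) - 1) := by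
    have hts' : t ^ (s : ℕ) ≠ 0 := pow_ne_zero _ ht
    have hls' : lami ^ (s : ℕ) ≠ 0 := pow_ne_zero _ hlami
    have e2 : (t * lami⁻¹) ^ (2 * s) = (t ^ s) ^ 2 * (((lami ^ s) ^ 2)⁻¹) := by
      rw [mul_pow, inv_pow, ← pow_mul, ← pow_mul, mul_comm 2 s]
    rw [hl1, hts, htns, e2]
    norm_num
    field_simp
    ring
  have hσ2 : leval σ t * t ^ (-((s : ℕ) : ℤ))
      = t ^ (-(s : ℤ)) * (leval σ t * t ^ (-(((0 : ℕ) : ℕ) : ℤ))) := by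
    norm_num
    ring
  rw [Bsing, Bsing, hcand, hh, hcsums, hcsum0]
  linear_combination hkey - hf + hσ2 - hc0
lemma diffAt_Bsing_t {t : ℝ} (ht : t ≠ 0) (ν : ℝ) (d : Fin N → ℝ) :
    DifferentiableAt ℝ (fun u => Bsing n N f σ s u ν d) t := by
  have hzp : ∀ e : ℤ, DifferentiableAt ℝ (fun u : ℝ => u ^ e) t :=
    fun e => differentiableAt_zpow.mpr (Or.inl ht)
  refine DifferentiableAt.sub (DifferentiableAt.sub ?_ ?_) ?_
  · exact ((differentiableAt_leval f ht).mul (hzp _)).mul_const _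
  · exact (differentiableAt_leval σ ht).mul (hzp _)
  · refine DifferentiableAt.fun_sum fun k _ => ?_
    by_cases hk : s ≤ (k : ℕ)
    · simp only [if_pos hk]
      exact (hzp _).const_mul _
    · simp only [if_neg hk]
      exact (hzp _).const_mul _

lemma star_eq (hsN : s ≤ N) (hNn : N ≤ n) {lam mu : Fin n → ℝ} {c : Fin N → ℝ}
    (hlam : lam ∈ Omega n) (q : Fin n) :
    HE n N f σ s lam (fun i => lam i ^ (((0 : ℕ) : ℤ) - (s : ℕ)) * mu i)
        (cbarF n N s (HE n N f σ 0 lam mu c) c) q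
      = candF n N s (HE n N f σ 0 lam mu c) c q := by
  have hrel : ∀ i, ∑ p : Fin n,
      candF n N s (HE n N f σ 0 lam mu c) c p * lam i ^ ((n : ℤ) - 1 - (p : ℕ))
      = Bsing n N f σ s (lam i)
          (lam i ^ (((0 : ℕ) : ℤ) - (s : ℕ)) * mu i)
          (cbarF n N s (HE n N f σ 0 lam mu c) c) := by
    intro i
    have hm := master (f := f) (σ := σ) hsN hNn (lam i) (mu i) (hlam.1 i)
      (HE n N f σ 0 lam mu c) c (lam i) (hlam.1 i)
    have hA0 : (∑ p : Fin n, HE n N f σ 0 lam mu c p * lam i ^ ((n : ℤ) - 1 - (p : ℕ)))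
        - Bsing n N f σ 0 (lam i) (mu i) c = 0 := by
      rw [HE_rel hlam.2 i, sub_self]
    have hW : ((lam i * (lam i)⁻¹) ^ (2 * s) - 1 : ℝ) = 0 := by
      rw [mul_inv_cancel₀ (hlam.1 i), one_pow, sub_self]
    rw [hA0, hW, mul_zero, mul_zero, sub_zero] at hm
    linarith [hm]
  have h1 := solve_rel hlam.2 hrel q
  rw [h1]
  rfl

lemma K_transform (hsN : s ≤ N) (hNn : N ≤ n) {lam mu : Fin n → ℝ} {c : Fin N → ℝ}
    (hlam : lam ∈ Omega n) (i : Fin n) :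
    Kcal n N f σ s lam (fun i' => lam i' ^ (((0 : ℕ) : ℤ) - (s : ℕ)) * mu i')
        (cbarF n N s (HE n N f σ 0 lam mu c) c) i
      = lam i ^ (-(s : ℤ)) * Kcal n N f σ 0 lam mu c i
        + 2 * (s : ℝ) * leval f (lam i) * mu i ^ 2 * (lam i ^ (-(s : ℤ)) * (lam i)⁻¹) := by
  classical
  have hne : lam i ≠ 0 := hlam.1 i
  set h : Fin n → ℝ := HE n N f σ 0 lam mu c with hdef
  set ν : Fin n → ℝ := fun i' => lam i' ^ (((0 : ℕ) : ℤ) - (s : ℕ)) * mu i' with hν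
  set cb : Fin N → ℝ := cbarF n N s h c with hcb
  -- LHS function and derivative
  set AsL : ℝ → ℝ := fun t => (∑ p : Fin n, candF n N s h c p * t ^ ((n : ℤ) - 1 - (p : ℕ)))
    - Bsing n N f σ s t (ν i) cb with hAsL
  have hBs : DifferentiableAt ℝ (fun u => Bsing n N f σ s u (ν i) cb) (lam i) :=
    diffAt_Bsing_t hne _ _
  have hAs : HasDerivAt AsL
      ((∑ p : Fin n, candF n N s h c p
          * ((((n : ℤ) - 1 - (p : ℕ) : ℤ) : ℝ) * lam i ^ ((n : ℤ) - 1 - (p : ℕ) - 1)))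
        - deriv (fun u => Bsing n N f σ s u (ν i) cb) (lam i)) (lam i) := by
    refine HasDerivAt.sub (HasDerivAt.fun_sum fun p _ => ?_) hBs.hasDerivAt
    exact (hasDerivAt_zpow _ _ (Or.inl hne)).const_mul _
  -- RHS function and derivative
  set A0 : ℝ → ℝ := fun t => (∑ p : Fin n, h p * t ^ ((n : ℤ) - 1 - (p : ℕ)))
    - Bsing n N f σ 0 t (mu i) c with hA0def
  have hB0 : DifferentiableAt ℝ (fun u => Bsing n N f σ 0 u (mu i) c) (lam i) :=
    diffAt_Bsing_t hne _ _
  have hA0d : HasDerivAt A0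
      ((∑ p : Fin n, h p
          * ((((n : ℤ) - 1 - (p : ℕ) : ℤ) : ℝ) * lam i ^ ((n : ℤ) - 1 - (p : ℕ) - 1)))
        - deriv (fun u => Bsing n N f σ 0 u (mu i) c) (lam i)) (lam i) := by
    refine HasDerivAt.sub (HasDerivAt.fun_sum fun p _ => ?_) hB0.hasDerivAt
    exact (hasDerivAt_zpow _ _ (Or.inl hne)).const_mul _
  have hA0z : A0 (lam i) = 0 := by
    rw [hA0def]
    simp only [hdef]
    rw [HE_rel hlam.2 i, sub_self]
  set G : ℝ → ℝ := fun t => leval f t * mu i ^ 2 * t ^ (-(s : ℤ)) with hG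
  have hGd : DifferentiableAt ℝ G (lam i) := by
    rw [hG]
    exact ((differentiableAt_leval f hne).mul_const _).mul
      (differentiableAt_zpow.mpr (Or.inl hne))
  set W : ℝ → ℝ := fun t => (t * (lam i)⁻¹) ^ (2 * s) - 1 with hW
  have hWd : HasDerivAt W
      (((2 * s : ℕ) : ℝ) * (lam i * (lam i)⁻¹) ^ (2 * s - 1) * (1 * (lam i)⁻¹)) (lam i) := by
    rw [hW]
    exact (((hasDerivAt_id (lam i)).mul_const _).pow _).sub_const _
  have hWz : W (lam i) = 0 := by
    rw [hW]
    simp [mul_inv_cancel₀ hne]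
  have hWd' : HasDerivAt W (2 * (s : ℝ) * (lam i)⁻¹) (lam i) := by
    have h1 : (((2 * s : ℕ) : ℝ) * (lam i * (lam i)⁻¹) ^ (2 * s - 1) * (1 * (lam i)⁻¹))
        = 2 * (s : ℝ) * (lam i)⁻¹ := by
      rw [mul_inv_cancel₀ hne, one_pow]
      push_cast
      ring
    rw [← h1]
    exact hWd
  set RHSf : ℝ → ℝ := fun t => t ^ (-(s : ℤ)) * A0 t - G t * W t with hRHSf
  have hRd : HasDerivAt RHSf
      (((((-(s : ℤ)) : ℤ) : ℝ) * lam i ^ (-(s : ℤ) - 1)) * A0 (lam i)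
          + lam i ^ (-(s : ℤ)) * ((∑ p : Fin n, h p
              * ((((n : ℤ) - 1 - (p : ℕ) : ℤ) : ℝ) * lam i ^ ((n : ℤ) - 1 - (p : ℕ) - 1)))
            - deriv (fun u => Bsing n N f σ 0 u (mu i) c) (lam i))
        - (deriv G (lam i) * W (lam i) + G (lam i) * (2 * (s : ℝ) * (lam i)⁻¹))) (lam i) := by
    refine HasDerivAt.sub ?_ (hGd.hasDerivAt.mul hWd')
    exact (hasDerivAt_zpow _ _ (Or.inl hne)).mul hA0d
  -- the two functions agree near lam i
  have hev : AsL =ᶠ[nhds (lam i)] RHSf := by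
    filter_upwards [eventually_ne_nhds hne] with t ht
    rw [hAsL, hRHSf, hA0def, hG, hW]
    exact master (f := f) (σ := σ) hsN hNn (lam i) (mu i) hne h c t ht
  have heq : ((∑ p : Fin n, candF n N s h c p
          * ((((n : ℤ) - 1 - (p : ℕ) : ℤ) : ℝ) * lam i ^ ((n : ℤ) - 1 - (p : ℕ) - 1)))
        - deriv (fun u => Bsing n N f σ s u (ν i) cb) (lam i))
      = ((((-(s : ℤ)) : ℤ) : ℝ) * lam i ^ (-(s : ℤ) - 1)) * A0 (lam i)
          + lam i ^ (-(s : ℤ)) * ((∑ p : Fin n, h p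
              * ((((n : ℤ) - 1 - (p : ℕ) : ℤ) : ℝ) * lam i ^ ((n : ℤ) - 1 - (p : ℕ) - 1)))
            - deriv (fun u => Bsing n N f σ 0 u (mu i) c) (lam i))
        - (deriv G (lam i) * W (lam i) + G (lam i) * (2 * (s : ℝ) * (lam i)⁻¹)) := by
    rw [← hAs.deriv, hev.deriv_eq, hRd.deriv]
  rw [hA0z, hWz, mul_zero, zero_add, mul_zero, zero_add] at heq
  -- unfold Kcal and conclude
  have hstar : ∀ p : Fin n, HE n N f σ s lam ν cb p = candF n N s h c p := fun p =>
    star_eq hsN hNn hlam p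
  have hK : Kcal n N f σ s lam ν cb i
      = deriv (fun u => Bsing n N f σ s u (ν i) cb) (lam i)
        - ∑ p : Fin n, candF n N s h c p
            * ((((n : ℤ) - 1 - (p : ℕ) : ℤ) : ℝ) * lam i ^ ((n : ℤ) - 1 - (p : ℕ) - 1)) := by
    rw [Kcal]
    congr 1
    exact Finset.sum_congr rfl fun p _ => by rw [hstar p]
  have hK0 : Kcal n N f σ 0 lam mu c i
      = deriv (fun u => Bsing n N f σ 0 u (mu i) c) (lam i)
        - ∑ p : Fin n, h p
            * ((((n : ℤ) - 1 - (p : ℕ) : ℤ) : ℝ) * lam i ^ ((n : ℤ) - 1 - (p : ℕ) - 1)) := rfl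
  have hGval : G (lam i) = leval f (lam i) * mu i ^ 2 * lam i ^ (-(s : ℤ)) := rfl
  rw [hGval] at heq
  rw [hK, hK0]
  linear_combination -heq

def pLclm (i : Fin n) : PhaseP n N →L[ℝ] ℝ :=
  (ContinuousLinearMap.proj i).comp
    (ContinuousLinearMap.fst ℝ (Fin n → ℝ) ((Fin n → ℝ) × (Fin N → ℝ)))

def pMclm (i : Fin n) : PhaseP n N →L[ℝ] ℝ :=
  (ContinuousLinearMap.proj i).comp
    ((ContinuousLinearMap.fst ℝ (Fin n → ℝ) (Fin N → ℝ)).comp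
      (ContinuousLinearMap.snd ℝ (Fin n → ℝ) ((Fin n → ℝ) × (Fin N → ℝ))))

def pCclm (k : Fin N) : PhaseP n N →L[ℝ] ℝ :=
  (ContinuousLinearMap.proj k).comp
    ((ContinuousLinearMap.snd ℝ (Fin n → ℝ) (Fin N → ℝ)).comp
      (ContinuousLinearMap.snd ℝ (Fin n → ℝ) ((Fin n → ℝ) × (Fin N → ℝ))))

@[simp] lemma pLclm_apply (i : Fin n) (y : PhaseP n N) : pLclm i y = y.1 i := rfl
@[simp] lemma pMclm_apply (i : Fin n) (y : PhaseP n N) : pMclm i y = y.2.1 i := rfl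
@[simp] lemma pCclm_apply (k : Fin N) (y : PhaseP n N) : pCclm k y = y.2.2 k := rfl

end Master

end MiuraAux

open MiuraAux

/-- Theorem 1 of the paper: for `s ∈ {1,…,N}`, the differential of the Miura
map `M_{0→s}` maps the `r`-th Hamiltonian vector field of the curve-0 system to that of the
curve-`s` system: `D M_{0→s}(x) · X_r^{(0)}(x) = X_r^{(s)}(M_{0→s}(x))`. -/
theorem miura_map_intertwines_vector_fields
    (n N : ℕ) (hn : 1 ≤ n) (hN1 : 1 ≤ N) (hNn : N ≤ n)
    (f σ : LaurentPolynomial ℝ) (s : ℕ) (hs1 : 1 ≤ s) (hsN : s ≤ N)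
    (H0 Hs : (Fin n → ℝ) → (Fin n → ℝ) → (Fin N → ℝ) → Fin n → ℝ)
    (hH0 : SepSol n N f σ 0 H0) (hHs : SepSol n N f σ s Hs)
    (x : PhaseP n N) (hx : x.1 ∈ Omega n) (r : Fin n) :
    fderiv ℝ (Mrs n N hn 0 s H0) x (XF H0 r x) = XF Hs r (Mrs n N hn 0 s H0 x) := by
  classical
  obtain ⟨lam, mu, c⟩ := x
  replace hx : lam ∈ Omega n := hx
  have hne : ∀ i : Fin n, lam i ≠ 0 := hx.1
  -- the explicit Hamiltonians
  have hval0 : ∀ (l m : Fin n → ℝ) (d : Fin N → ℝ), l ∈ Omega n → ∀ q : Fin n,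
      H0 l m d q = HE n N f σ 0 l m d q := fun l m d hl q => Hval hH0 hl m d q
  have hvals : ∀ (l m : Fin n → ℝ) (d : Fin N → ℝ), l ∈ Omega n → ∀ q : Fin n,
      Hs l m d q = HE n N f σ s l m d q := fun l m d hl q => Hval hHs hl m d q
  -- the explicit Miura map, componentwise
  set F3 : Fin N → PhaseP n N → ℝ := fun j y =>
    if (j : ℕ) < s then HE n N f σ 0 y.1 y.2.1 y.2.2 ⟨n - 1 - (j : ℕ), by omega⟩
    else y.2.2 j with hF3
  set Mexp : PhaseP n N → PhaseP n N := fun y =>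
    (y.1, fun i => y.1 i ^ (((0 : ℕ) : ℤ) - (s : ℕ)) * y.2.1 i, fun j => F3 j y) with hMexp
  have hopen : IsOpen {y : PhaseP n N | y.1 ∈ Omega n} :=
    isOpen_Omega.preimage continuous_fst
  have hMeq : ∀ y : PhaseP n N, y.1 ∈ Omega n → Mrs n N hn 0 s H0 y = Mexp y := by
    intro y hy
    refine Prod.ext rfl (Prod.ext rfl ?_)
    funext j
    show (if h : 0 ≤ (j : ℕ) ∧ (j : ℕ) < s then
        H0 y.1 y.2.1 y.2.2 ⟨n + 0 - (j : ℕ) - 1, by omega⟩ else y.2.2 j) = F3 j y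
    by_cases hj : (j : ℕ) < s
    · rw [dif_pos ⟨Nat.zero_le _, hj⟩, hF3]
      simp only [if_pos hj]
      rw [hval0 _ _ _ hy]
      congr 1
      exact Fin.ext (by simp; omega)
    · rw [dif_neg (fun hc => hj hc.2), hF3]
      simp only [if_neg hj]
  have hMev : Mrs n N hn 0 s H0 =ᶠ[nhds ((lam, mu, c) : PhaseP n N)] Mexp := by
    filter_upwards [hopen.mem_nhds hx] with y hy
    exact hMeq y hy
  have hfder : fderiv ℝ (Mrs n N hn 0 s H0) (lam, mu, c) = fderiv ℝ Mexp (lam, mu, c) :=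
    hMev.fderiv_eq
  have hMx : Mrs n N hn 0 s H0 (lam, mu, c) = Mexp (lam, mu, c) := hMeq _ hx
  -- XF with explicit Hamiltonians
  have hXF0 : XF H0 r (lam, mu, c) = XF (HE n N f σ 0) r (lam, mu, c) := by
    refine Prod.ext ?_ (Prod.ext ?_ rfl)
    · funext i
      show deriv (fun t => H0 lam (update mu i t) c r) (mu i)
        = deriv (fun t => HE n N f σ 0 lam (update mu i t) c r) (mu i)
      congr 1
      funext t
      exact hval0 _ _ _ hx r
    · funext i
      show -deriv (fun t => H0 (update lam i t) mu c r) (lam i)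
        = -deriv (fun t => HE n N f σ 0 (update lam i t) mu c r) (lam i)
      congr 1
      refine Filter.EventuallyEq.deriv_eq ?_
      filter_upwards [eventually_update_mem hx i] with t ht
      exact hval0 _ _ _ ht r
  -- the image point
  have hyΩ : (Mexp (lam, mu, c)).1 ∈ Omega n := hx
  have hXFs : XF Hs r (Mexp (lam, mu, c)) = XF (HE n N f σ s) r (Mexp (lam, mu, c)) := by
    refine Prod.ext ?_ (Prod.ext ?_ rfl)
    · funext i
      show deriv (fun t => Hs (Mexp (lam, mu, c)).1 (update (Mexp (lam, mu, c)).2.1 i t)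
          (Mexp (lam, mu, c)).2.2 r) ((Mexp (lam, mu, c)).2.1 i) = _
      congr 1
      funext t
      exact hvals _ _ _ hyΩ r
    · funext i
      show -deriv (fun t => Hs (update (Mexp (lam, mu, c)).1 i t) (Mexp (lam, mu, c)).2.1
          (Mexp (lam, mu, c)).2.2 r) ((Mexp (lam, mu, c)).1 i) = _
      congr 1
      refine Filter.EventuallyEq.deriv_eq ?_
      filter_upwards [eventually_update_mem hyΩ i] with t ht
      exact hvals _ _ _ ht r
  rw [hfder, hMx, hXF0, hXFs]
  -- now everything is explicit
  set v : PhaseP n N := XF (HE n N f σ 0) r (lam, mu, c) with hv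
  have hva : ∀ i, v.1 i
      = Dcoef lam r i * (leval f (lam i) * lam i ^ (((0 : ℕ) : ℕ) : ℤ) * (2 * mu i)) := by
    intro i
    exact (hasDerivAt_HE_mu f σ 0 lam mu c r i).deriv
  have hvb : ∀ i, v.2.1 i
      = -(Dcoef lam r i * Kcal n N f σ 0 lam mu c i) := by
    intro i
    show -deriv (fun t => HE n N f σ 0 (update lam i t) mu c r) (lam i) = _
    rw [deriv_HE_lam hx r i]
  have hvc : v.2.2 = 0 := rfl
  -- differentiability of the components of Mexp
  have hd2 : ∀ i : Fin n, DifferentiableAt ℝ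
      (fun y : PhaseP n N => y.1 i ^ (((0 : ℕ) : ℤ) - (s : ℕ)) * y.2.1 i) (lam, mu, c) :=
    fun i => ((differentiableAt_zpow.mpr (Or.inl (hne i))).comp (g := fun u : ℝ => u ^ (((0 : ℕ) : ℤ) - (s : ℕ))) ((lam, mu, c) : PhaseP n N) (diffAt_pL i)).mul (diffAt_pM i)
  have hd3 : ∀ j : Fin N, DifferentiableAt ℝ (F3 j) (lam, mu, c) := by
    intro j
    by_cases hj : (j : ℕ) < s
    · have : F3 j = fun y : PhaseP n N =>
          HE n N f σ 0 y.1 y.2.1 y.2.2 ⟨n - 1 - (j : ℕ), by omega⟩ := by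
        funext y; rw [hF3]; simp only [if_pos hj]
      rw [this]
      exact diffAt_HE_comp hx _
    · have : F3 j = fun y : PhaseP n N => y.2.2 j := by
        funext y; rw [hF3]; simp only [if_neg hj]
      rw [this]
      exact diffAt_pC j
  -- explicit derivative of Mexp
  have hM : HasFDerivAt Mexp
      ((ContinuousLinearMap.fst ℝ (Fin n → ℝ) ((Fin n → ℝ) × (Fin N → ℝ))).prod
        ((ContinuousLinearMap.pi fun i => fderiv ℝ
            (fun y : PhaseP n N => y.1 i ^ (((0 : ℕ) : ℤ) - (s : ℕ)) * y.2.1 i) (lam, mu, c)).prod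
          (ContinuousLinearMap.pi fun j => fderiv ℝ (F3 j) (lam, mu, c)))) (lam, mu, c) := by
    refine HasFDerivAt.prodMk hasFDerivAt_fst (HasFDerivAt.prodMk ?_ ?_)
    · exact hasFDerivAt_pi.mpr fun i => (hd2 i).hasFDerivAt
    · exact hasFDerivAt_pi.mpr fun j => (hd3 j).hasFDerivAt
  rw [hM.fderiv]
  -- componentwise comparison
  refine Prod.ext ?_ (Prod.ext ?_ ?_)
  · -- first component
    show v.1 = fun i => deriv (fun t => HE n N f σ s (Mexp (lam, mu, c)).1
        (update (Mexp (lam, mu, c)).2.1 i t) (Mexp (lam, mu, c)).2.2 r) ((Mexp (lam, mu, c)).2.1 i)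
    funext i
    rw [hva i, (hasDerivAt_HE_mu f σ s (Mexp (lam, mu, c)).1 (Mexp (lam, mu, c)).2.1
      (Mexp (lam, mu, c)).2.2 r i).deriv]
    show Dcoef lam r i * (leval f (lam i) * lam i ^ (((0 : ℕ) : ℕ) : ℤ) * (2 * mu i))
      = Dcoef lam r i * (leval f (lam i) * lam i ^ ((s : ℕ) : ℤ)
          * (2 * (lam i ^ (((0 : ℕ) : ℤ) - (s : ℕ)) * mu i)))
    have hzz : lam i ^ ((s : ℕ) : ℤ) * lam i ^ (((0 : ℕ) : ℤ) - (s : ℕ))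
        = lam i ^ ((((0 : ℕ) : ℕ) : ℤ)) := by
      rw [← zpow_add₀ (hne i)]
      congr 1
      omega
    linear_combination (-(Dcoef lam r i * leval f (lam i) * 2 * mu i)) * hzz
  · -- second component
    funext i
    show (ContinuousLinearMap.pi fun i' => fderiv ℝ
        (fun y : PhaseP n N => y.1 i' ^ (((0 : ℕ) : ℤ) - (s : ℕ)) * y.2.1 i') (lam, mu, c)) v i
      = (XF (HE n N f σ s) r (Mexp (lam, mu, c))).2.1 i
    have hy3 : (Mexp (lam, mu, c)).2.2 = cbarF n N s (HE n N f σ 0 lam mu c) c := by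
      funext j
      show F3 j (lam, mu, c) = _
      rw [hF3, cbarF]
      by_cases hj : (j : ℕ) < s
      · simp only [if_pos hj]
        simp only [MiuraAux.ext]
        rw [dif_pos (by omega : n - 1 - (j : ℕ) < n)]
      · simp only [if_neg hj]
    have hRHS : (XF (HE n N f σ s) r (Mexp (lam, mu, c))).2.1 i
        = -(Dcoef lam r i * (lam i ^ (-(s : ℤ)) * Kcal n N f σ 0 lam mu c i
            + 2 * (s : ℝ) * leval f (lam i) * mu i ^ 2 * (lam i ^ (-(s : ℤ)) * (lam i)⁻¹))) := by
      show -deriv (fun t => HE n N f σ s (update lam i t)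
          (Mexp (lam, mu, c)).2.1 (Mexp (lam, mu, c)).2.2 r) (lam i) = _
      rw [deriv_HE_lam hx r i]
      have h21 : (Mexp (lam, mu, c)).2.1 = fun i' => lam i' ^ (((0 : ℕ) : ℤ) - (s : ℕ)) * mu i' := rfl
      rw [h21, hy3, K_transform (f := f) (σ := σ) hsN hNn hx i]
    rw [hRHS, ContinuousLinearMap.pi_apply]
    -- explicit derivative of the i-th scalar component
    have hz : HasDerivAt (fun u : ℝ => u ^ (((0 : ℕ) : ℤ) - (s : ℕ)))
        (((((0 : ℕ) : ℤ) - (s : ℕ) : ℤ) : ℝ) * lam i ^ ((((0 : ℕ) : ℤ) - (s : ℕ)) - 1)) (lam i) :=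
      hasDerivAt_zpow _ _ (Or.inl (hne i))
    have h1 : HasFDerivAt (fun y : PhaseP n N => y.1 i ^ (((0 : ℕ) : ℤ) - (s : ℕ)))
        ((((((0 : ℕ) : ℤ) - (s : ℕ) : ℤ) : ℝ) * lam i ^ ((((0 : ℕ) : ℤ) - (s : ℕ)) - 1)) • pLclm i)
        (lam, mu, c) :=
      by have := hz.comp_hasFDerivAt ((lam, mu, c) : PhaseP n N) (pLclm i).hasFDerivAt; exact this
    have h2 : HasFDerivAt (fun y : PhaseP n N => y.2.1 i) (pMclm i) (lam, mu, c) :=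
      (pMclm i).hasFDerivAt
    have hmul := h1.fun_mul h2
    rw [hmul.fderiv]
    simp only [ContinuousLinearMap.add_apply, ContinuousLinearMap.smul_apply,
      pLclm_apply, pMclm_apply, smul_eq_mul]
    rw [hva i, hvb i]
    have he1 : (((0 : ℕ) : ℤ) - (s : ℕ)) = -(s : ℤ) := by omega
    have he3 : lam i ^ ((((0 : ℕ) : ℕ) : ℤ)) = 1 := by norm_num
    rw [he1, zpow_sub_one₀ (hne i) (-(s : ℤ)), he3]
    push_cast
    ring
  · -- third component
    funext j
    show (ContinuousLinearMap.pi fun j' => fderiv ℝ (F3 j') (lam, mu, c)) v j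
      = (XF (HE n N f σ s) r (Mexp (lam, mu, c))).2.2 j
    rw [ContinuousLinearMap.pi_apply]
    have hRHS0 : (XF (HE n N f σ s) r (Mexp (lam, mu, c))).2.2 j = 0 := rfl
    rw [hRHS0]
    by_cases hj : (j : ℕ) < s
    · have hF3j : F3 j = fun y : PhaseP n N =>
          HE n N f σ 0 y.1 y.2.1 y.2.2 ⟨n - 1 - (j : ℕ), by omega⟩ := by
        funext y; rw [hF3]; simp only [if_pos hj]
      rw [hF3j]
      set p : Fin n := ⟨n - 1 - (j : ℕ), by omega⟩ with hp
      rw [fderiv_apply_partials (diffAt_HE_comp hx p) v]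
      have hld : ∀ i : Fin n, deriv (fun t => HE n N f σ 0 (update lam i t) mu c p) (lam i)
          = Dcoef lam p i * Kcal n N f σ 0 lam mu c i := fun i => deriv_HE_lam hx p i
      have hmd : ∀ i : Fin n, deriv (fun t => HE n N f σ 0 lam (update mu i t) c p) (mu i)
          = Dcoef lam p i * (leval f (lam i) * lam i ^ (((0 : ℕ) : ℕ) : ℤ) * (2 * mu i)) :=
        fun i => (hasDerivAt_HE_mu f σ 0 lam mu c p i).deriv
      dsimp only
      rw [show (v.2.2 : Fin N → ℝ) = 0 from rfl]
      simp only [Pi.zero_apply, zero_mul, Finset.sum_const_zero, add_zero]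
      simp only [hld, hmd]
      rw [← Finset.sum_add_distrib]
      refine Finset.sum_eq_zero fun i _ => ?_
      rw [hva i, hvb i]
      ring
    · have hF3j : F3 j = fun y : PhaseP n N => y.2.2 j := by
        funext y; rw [hF3]; simp only [if_neg hj]
      rw [hF3j]
      have hC : HasFDerivAt (fun y : PhaseP n N => y.2.2 j) (pCclm j) (lam, mu, c) :=
        (pCclm j).hasFDerivAt
      rw [hC.fderiv]
      show v.2.2 j = 0
      rw [show (v.2.2 : Fin N → ℝ) = 0 from rfl]
      simp
end
end

section
/- Let 0 ≤ r < s ≤ N. Then M_{r→s} = M_{0→s} ∘ (M_{0→r})^{−1} as maps Ω × ℝⁿ × ℝᴺ → Ω × ℝⁿ × ℝᴺ, where M_{0→r} is a bijection and M_{0→0} is the identity. -/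
open Finset Function

noncomputable section

/-- Uniqueness of solutions of Vandermonde-type systems on `Ω`. -/
lemma sep_unique_s8 {n : ℕ} {lam : Fin n → ℝ} (hlam : lam ∈ Omega n)
    {a b : Fin n → ℝ}
    (h : ∀ i, ∑ q : Fin n, a q * lam i ^ ((n:ℤ) - 1 - (q:ℕ))
            = ∑ q : Fin n, b q * lam i ^ ((n:ℤ) - 1 - (q:ℕ))) : a = b := by
  rcases Nat.eq_zero_or_pos n with hn | hn
  · subst hn; funext q; exact q.elim0
  set p : Polynomial ℝ :=
    ∑ q : Fin n, Polynomial.C (a q - b q) * Polynomial.X ^ (n - 1 - (q:ℕ)) with hp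
  have key : ∀ (i q : Fin n), lam i ^ ((n:ℤ) - 1 - (q:ℕ)) = lam i ^ (n - 1 - (q:ℕ)) := by
    intro i q
    have hq := q.isLt
    have : ((n - 1 - (q:ℕ) : ℕ) : ℤ) = (n:ℤ) - 1 - (q:ℕ) := by omega
    rw [← this, zpow_natCast]
  have heval : ∀ i, p.eval (lam i) = 0 := by
    intro i
    have h2 : ∀ q : Fin n, (a q - b q) * lam i ^ (n - 1 - (q:ℕ))
        = a q * lam i ^ ((n:ℤ) - 1 - (q:ℕ)) - b q * lam i ^ ((n:ℤ) - 1 - (q:ℕ)) := by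
      intro q; rw [key i q, sub_mul]
    simp only [hp, Polynomial.eval_finset_sum, Polynomial.eval_mul, Polynomial.eval_C,
      Polynomial.eval_pow, Polynomial.eval_X]
    rw [Finset.sum_congr rfl fun q _ => h2 q, Finset.sum_sub_distrib, h i, sub_self]
  have hdeg : p.natDegree < Fintype.card (Fin n) := by
    rw [Fintype.card_fin]
    refine lt_of_le_of_lt (Polynomial.natDegree_sum_le_of_forall_le _ _ fun q _ =>
      le_trans (Polynomial.natDegree_C_mul_X_pow_le _ _) (by omega)) (by omega : n - 1 < n)
  have hp0 : p = 0 :=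
    Polynomial.eq_zero_of_natDegree_lt_card_of_eval_eq_zero p hlam.2 heval hdeg
  funext q0
  have hco := congrArg (fun P => Polynomial.coeff P (n - 1 - (q0:ℕ))) hp0
  simp only [hp, Polynomial.finset_sum_coeff, Polynomial.coeff_C_mul, Polynomial.coeff_X_pow,
    Polynomial.coeff_zero] at hco
  have h3 : ∀ q : Fin n, ((a q - b q) * if n - 1 - (q0:ℕ) = n - 1 - (q:ℕ) then (1:ℝ) else 0)
      = if q = q0 then a q - b q else 0 := by
    intro q
    have h1 := q.isLt; have h2 := q0.isLt
    by_cases hq : q = q0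
    · subst hq; simp
    · have hne : ¬ (n - 1 - (q0:ℕ) = n - 1 - (q:ℕ)) := by
        intro hE; exact hq (Fin.ext (by omega))
      simp [hq, hne]
  rw [Finset.sum_congr rfl fun q _ => h3 q, Finset.sum_ite_eq' Finset.univ q0] at hco
  simp only [Finset.mem_univ, if_true] at hco
  exact sub_eq_zero.mp hco

lemma mzc {t A B : ℝ} {e1 e2 : ℤ} (hA : A = B) (he : e1 = e2) : A * t ^ e1 = B * t ^ e2 := by
  rw [hA, he]

lemma transfer_fwd {n N r : ℕ} (hrN : r ≤ N) (hNn : N ≤ n) (t : ℝ)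
    (u : Fin n → ℝ) (v : Fin N → ℝ) :
    (∑ q : Fin n, (if h : (q : ℕ) < r then v ⟨r - 1 - (q:ℕ), by omega⟩
          else u ⟨(q:ℕ) - r, by have := q.isLt; omega⟩) * t ^ ((n:ℤ) - 1 - (q:ℕ)))
      + (∑ j : Fin N, if r ≤ (j:ℕ) then v j * t ^ ((n:ℤ) + (j:ℕ) - (r:ℕ))
          else u ⟨n - 1 - (j:ℕ), by have := j.isLt; omega⟩ * t ^ (((j:ℕ):ℤ) - (r:ℕ)))
    = (∑ j : Fin N, v j * t ^ ((n:ℤ) + (j:ℕ) - (r:ℕ)))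
      + ∑ q : Fin n, u q * t ^ ((n:ℤ) - 1 - (q:ℕ) - (r:ℕ)) := by
  classical
  set F : Fin n ⊕ Fin N → ℝ := Sum.elim
    (fun q => (if h : (q : ℕ) < r then v ⟨r - 1 - (q:ℕ), by omega⟩
          else u ⟨(q:ℕ) - r, by have := q.isLt; omega⟩) * t ^ ((n:ℤ) - 1 - (q:ℕ)))
    (fun j => if r ≤ (j:ℕ) then v j * t ^ ((n:ℤ) + (j:ℕ) - (r:ℕ))
          else u ⟨n - 1 - (j:ℕ), by have := j.isLt; omega⟩ * t ^ (((j:ℕ):ℤ) - (r:ℕ))) with hF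
  set G : Fin n ⊕ Fin N → ℝ := Sum.elim
    (fun q => u q * t ^ ((n:ℤ) - 1 - (q:ℕ) - (r:ℕ)))
    (fun j => v j * t ^ ((n:ℤ) + (j:ℕ) - (r:ℕ))) with hG
  set π : Fin n ⊕ Fin N → Fin n ⊕ Fin N := Sum.elim
    (fun q => if h : (q:ℕ) < r then Sum.inr ⟨r - 1 - (q:ℕ), by omega⟩
          else Sum.inl ⟨(q:ℕ) - r, by have := q.isLt; omega⟩)
    (fun j => if h : (j:ℕ) < r then Sum.inl ⟨n - 1 - (j:ℕ), by have := j.isLt; omega⟩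
          else Sum.inr j) with hπ
  set π' : Fin n ⊕ Fin N → Fin n ⊕ Fin N := Sum.elim
    (fun q => if h : (q:ℕ) < n - r then Sum.inl ⟨(q:ℕ) + r, by omega⟩
          else Sum.inr ⟨n - 1 - (q:ℕ), by have := q.isLt; omega⟩)
    (fun j => if h : (j:ℕ) < r then Sum.inl ⟨r - 1 - (j:ℕ), by omega⟩
          else Sum.inr j) with hπ'
  have hbij : Function.Bijective π := by
    have hli : ∀ z, π' (π z) = z := by
      rintro (q | j)
      · by_cases h : (q:ℕ) < r
        · have hq := q.isLt
          simp only [hπ, hπ', Sum.elim_inl, Sum.elim_inr, dif_pos h,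
            dif_pos (show (r - 1 - (q:ℕ) : ℕ) < r by omega)]
          exact congrArg Sum.inl (Fin.ext (by simp only [Fin.val_mk]; omega))
        · have hq := q.isLt
          simp only [hπ, hπ', Sum.elim_inl, dif_neg h,
            dif_pos (show ((q:ℕ) - r : ℕ) < n - r by omega)]
          exact congrArg Sum.inl (Fin.ext (by simp only [Fin.val_mk]; omega))
      · by_cases h : (j:ℕ) < r
        · have hj := j.isLt
          simp only [hπ, hπ', Sum.elim_inl, Sum.elim_inr, dif_pos h,
            dif_neg (show ¬ ((n - 1 - (j:ℕ) : ℕ) < n - r) by omega)]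
          exact congrArg Sum.inr (Fin.ext (by simp only [Fin.val_mk]; omega))
        · simp only [hπ, hπ', Sum.elim_inr, dif_neg h]
    have hri : ∀ z, π (π' z) = z := by
      rintro (q | j)
      · by_cases h : (q:ℕ) < n - r
        · have hq := q.isLt
          simp only [hπ, hπ', Sum.elim_inl, dif_pos h,
            dif_neg (show ¬ ((q:ℕ) + r < r) by omega)]
          exact congrArg Sum.inl (Fin.ext (by simp only [Fin.val_mk]; omega))
        · have hq := q.isLt
          simp only [hπ, hπ', Sum.elim_inl, Sum.elim_inr, dif_neg h,
            dif_pos (show (n - 1 - (q:ℕ) : ℕ) < r by omega)]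
          exact congrArg Sum.inl (Fin.ext (by simp only [Fin.val_mk]; omega))
      · by_cases h : (j:ℕ) < r
        · have hj := j.isLt
          simp only [hπ, hπ', Sum.elim_inl, Sum.elim_inr, dif_pos h,
            dif_pos (show (r - 1 - (j:ℕ) : ℕ) < r by omega)]
          exact congrArg Sum.inr (Fin.ext (by simp only [Fin.val_mk]; omega))
        · simp only [hπ, hπ', Sum.elim_inr, dif_neg h]
    exact Function.bijective_iff_has_inverse.mpr ⟨π', hli, hri⟩
  have hFG : ∀ z, F z = G (π z) := by
    rintro (q | j)
    · by_cases h : (q:ℕ) < r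
      · have hq := q.isLt
        simp only [hF, hG, hπ, Sum.elim_inl, Sum.elim_inr, dif_pos h, Fin.val_mk]
        exact mzc rfl (by omega)
      · have hq := q.isLt
        simp only [hF, hG, hπ, Sum.elim_inl, dif_neg h, Fin.val_mk]
        exact mzc rfl (by omega)
    · by_cases h : (j:ℕ) < r
      · have hj := j.isLt
        simp only [hF, hG, hπ, Sum.elim_inl, Sum.elim_inr, dif_pos h,
          if_neg (by omega : ¬ r ≤ (j:ℕ)), Fin.val_mk]
        exact mzc rfl (by omega)
      · simp only [hF, hG, hπ, Sum.elim_inr, dif_neg h, if_pos (by omega : r ≤ (j:ℕ))]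
  have hsum := Fintype.sum_bijective π hbij F G hFG
  rw [Fintype.sum_sum_type, Fintype.sum_sum_type] at hsum
  simp only [hF, hG, Sum.elim_inl, Sum.elim_inr] at hsum
  rw [hsum, add_comm]

lemma transfer_bwd {n N r : ℕ} (hrN : r ≤ N) (hNn : N ≤ n) (t : ℝ)
    (w : Fin n → ℝ) (v : Fin N → ℝ) :
    (∑ q : Fin n, (if h : (q:ℕ) < n - r then w ⟨(q:ℕ) + r, by omega⟩
        else v ⟨n - 1 - (q:ℕ), by have := q.isLt; omega⟩) * t ^ ((n:ℤ) - 1 - (q:ℕ)))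
    + (∑ j : Fin N, (if h : (j:ℕ) < r then w ⟨r - 1 - (j:ℕ), by omega⟩ else v j)
        * t ^ ((n:ℤ) + (j:ℕ)))
    = (∑ j : Fin N, if r ≤ (j:ℕ) then v j * t ^ ((n:ℤ) + (j:ℕ)) else v j * t ^ (((j:ℕ):ℤ)))
      + ∑ q : Fin n, w q * t ^ ((n:ℤ) - 1 - (q:ℕ) + (r:ℕ)) := by
  classical
  set F : Fin n ⊕ Fin N → ℝ := Sum.elim
    (fun q => (if h : (q:ℕ) < n - r then w ⟨(q:ℕ) + r, by omega⟩
        else v ⟨n - 1 - (q:ℕ), by have := q.isLt; omega⟩) * t ^ ((n:ℤ) - 1 - (q:ℕ)))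
    (fun j => (if h : (j:ℕ) < r then w ⟨r - 1 - (j:ℕ), by omega⟩ else v j)
        * t ^ ((n:ℤ) + (j:ℕ))) with hF
  set G : Fin n ⊕ Fin N → ℝ := Sum.elim
    (fun q => w q * t ^ ((n:ℤ) - 1 - (q:ℕ) + (r:ℕ)))
    (fun j => if r ≤ (j:ℕ) then v j * t ^ ((n:ℤ) + (j:ℕ)) else v j * t ^ (((j:ℕ):ℤ))) with hG
  set π : Fin n ⊕ Fin N → Fin n ⊕ Fin N := Sum.elim
    (fun q => if h : (q:ℕ) < n - r then Sum.inl ⟨(q:ℕ) + r, by omega⟩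
          else Sum.inr ⟨n - 1 - (q:ℕ), by have := q.isLt; omega⟩)
    (fun j => if h : (j:ℕ) < r then Sum.inl ⟨r - 1 - (j:ℕ), by omega⟩
          else Sum.inr j) with hπ
  set π' : Fin n ⊕ Fin N → Fin n ⊕ Fin N := Sum.elim
    (fun q => if h : (q:ℕ) < r then Sum.inr ⟨r - 1 - (q:ℕ), by omega⟩
          else Sum.inl ⟨(q:ℕ) - r, by have := q.isLt; omega⟩)
    (fun j => if h : (j:ℕ) < r then Sum.inl ⟨n - 1 - (j:ℕ), by have := j.isLt; omega⟩
          else Sum.inr j) with hπ'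
  have hbij : Function.Bijective π := by
    have hli : ∀ z, π' (π z) = z := by
      rintro (q | j)
      · by_cases h : (q:ℕ) < n - r
        · have hq := q.isLt
          simp only [hπ, hπ', Sum.elim_inl, dif_pos h,
            dif_neg (show ¬ ((q:ℕ) + r < r) by omega)]
          exact congrArg Sum.inl (Fin.ext (by simp only [Fin.val_mk]; omega))
        · have hq := q.isLt
          simp only [hπ, hπ', Sum.elim_inl, Sum.elim_inr, dif_neg h,
            dif_pos (show (n - 1 - (q:ℕ) : ℕ) < r by omega)]
          exact congrArg Sum.inl (Fin.ext (by simp only [Fin.val_mk]; omega))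
      · by_cases h : (j:ℕ) < r
        · have hj := j.isLt
          simp only [hπ, hπ', Sum.elim_inl, Sum.elim_inr, dif_pos h,
            dif_pos (show (r - 1 - (j:ℕ) : ℕ) < r by omega)]
          exact congrArg Sum.inr (Fin.ext (by simp only [Fin.val_mk]; omega))
        · simp only [hπ, hπ', Sum.elim_inr, dif_neg h]
    have hri : ∀ z, π (π' z) = z := by
      rintro (q | j)
      · by_cases h : (q:ℕ) < r
        · have hq := q.isLt
          simp only [hπ, hπ', Sum.elim_inl, Sum.elim_inr, dif_pos h,
            dif_pos (show (r - 1 - (q:ℕ) : ℕ) < r by omega)]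
          exact congrArg Sum.inl (Fin.ext (by simp only [Fin.val_mk]; omega))
        · have hq := q.isLt
          simp only [hπ, hπ', Sum.elim_inl, dif_neg h,
            dif_pos (show ((q:ℕ) - r : ℕ) < n - r by omega)]
          exact congrArg Sum.inl (Fin.ext (by simp only [Fin.val_mk]; omega))
      · by_cases h : (j:ℕ) < r
        · have hj := j.isLt
          simp only [hπ, hπ', Sum.elim_inl, Sum.elim_inr, dif_pos h,
            dif_neg (show ¬ ((n - 1 - (j:ℕ) : ℕ) < n - r) by omega)]
          exact congrArg Sum.inr (Fin.ext (by simp only [Fin.val_mk]; omega))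
        · simp only [hπ, hπ', Sum.elim_inr, dif_neg h]
    exact Function.bijective_iff_has_inverse.mpr ⟨π', hli, hri⟩
  have hFG : ∀ z, F z = G (π z) := by
    rintro (q | j)
    · by_cases h : (q:ℕ) < n - r
      · have hq := q.isLt
        simp only [hF, hG, hπ, Sum.elim_inl, dif_pos h, Fin.val_mk]
        exact mzc rfl (by omega)
      · have hq := q.isLt
        simp only [hF, hG, hπ, Sum.elim_inl, Sum.elim_inr, dif_neg h,
          if_neg (by omega : ¬ r ≤ (n - 1 - (q:ℕ) : ℕ)), Fin.val_mk]
        exact mzc rfl (by omega)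
    · by_cases h : (j:ℕ) < r
      · have hj := j.isLt
        simp only [hF, hG, hπ, Sum.elim_inl, Sum.elim_inr, dif_pos h, Fin.val_mk]
        exact mzc rfl (by omega)
      · simp only [hF, hG, hπ, Sum.elim_inr, dif_neg h, if_pos (by omega : r ≤ (j:ℕ))]
  have hsum := Fintype.sum_bijective π hbij F G hFG
  rw [Fintype.sum_sum_type, Fintype.sum_sum_type] at hsum
  simp only [hF, hG, Sum.elim_inl, Sum.elim_inr] at hsum
  rw [hsum, add_comm]

lemma key_fwd {n N : ℕ} {f σ : LaurentPolynomial ℝ} {r : ℕ} (hr : r ≤ N) (hNn : N ≤ n)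
    {H0 Hr : (Fin n → ℝ) → (Fin n → ℝ) → (Fin N → ℝ) → Fin n → ℝ}
    (hH0 : SepSol n N f σ 0 H0) (hHr : SepSol n N f σ r Hr)
    {lam : Fin n → ℝ} (hlam : lam ∈ Omega n) (mu : Fin n → ℝ) (c : Fin N → ℝ)
    (mu' : Fin n → ℝ) (c' : Fin N → ℝ)
    (hmu' : ∀ i, mu' i = lam i ^ (-(r:ℤ)) * mu i)
    (hc' : ∀ j : Fin N, c' j = if h : (j:ℕ) < r then
        H0 lam mu c ⟨n - 1 - (j:ℕ), by have := j.isLt; omega⟩ else c j) :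
    Hr lam mu' c' = fun q : Fin n => if h : (q:ℕ) < r then c ⟨r - 1 - (q:ℕ), by omega⟩
      else H0 lam mu c ⟨(q:ℕ) - r, by have := q.isLt; omega⟩ := by
  apply sep_unique_s8 hlam
  intro i
  set t := lam i with hti
  have ht : t ≠ 0 := hlam.1 i
  have hT : t ^ ((r:ℕ):ℤ) ≠ 0 := zpow_ne_zero _ ht
  have A := hHr lam hlam mu' c' i
  have B0 := hH0 lam hlam mu c i
  simp only [Nat.cast_zero, neg_zero, zpow_zero, mul_one, sub_zero, Nat.zero_le, if_true] at B0
  have B : leval σ t * t ^ (-(r:ℤ))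
      + (∑ j : Fin N, c j * t ^ ((n:ℤ) + (j:ℕ) - (r:ℕ)))
      + (∑ q : Fin n, H0 lam mu c q * t ^ ((n:ℤ) - 1 - (q:ℕ) - (r:ℕ)))
      = leval f t * t ^ ((r:ℕ):ℤ) * mu' i ^ 2 := by
    have e1 : ∀ j : Fin N, c j * t ^ ((n:ℤ) + (j:ℕ) - (r:ℕ))
        = c j * t ^ ((n:ℤ) + (j:ℕ)) * (t ^ ((r:ℕ):ℤ))⁻¹ := by
      intro j; rw [zpow_sub₀ ht]; ring
    have e2 : ∀ q : Fin n, H0 lam mu c q * t ^ ((n:ℤ) - 1 - (q:ℕ) - (r:ℕ))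
        = H0 lam mu c q * t ^ ((n:ℤ) - 1 - (q:ℕ)) * (t ^ ((r:ℕ):ℤ))⁻¹ := by
      intro q; rw [zpow_sub₀ ht]; ring
    have e3 : leval σ t * t ^ (-(r:ℤ)) = leval σ t * (t ^ ((r:ℕ):ℤ))⁻¹ := by
      rw [zpow_neg]
    have e4 : leval f t * t ^ ((r:ℕ):ℤ) * mu' i ^ 2
        = leval f t * mu i ^ 2 * (t ^ ((r:ℕ):ℤ))⁻¹ := by
      rw [hmu' i, ← hti, zpow_neg]; field_simp
    rw [Finset.sum_congr rfl fun j _ => e1 j, Finset.sum_congr rfl fun q _ => e2 q, e3, e4,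
      ← Finset.sum_mul, ← Finset.sum_mul, ← add_mul, ← add_mul, B0]
  have hS : (∑ j : Fin N, if r ≤ (j:ℕ) then c' j * t ^ ((n:ℤ) + (j:ℕ) - (r:ℕ))
        else c' j * t ^ (((j:ℕ):ℤ) - (r:ℕ)))
      = ∑ j : Fin N, if r ≤ (j:ℕ) then c j * t ^ ((n:ℤ) + (j:ℕ) - (r:ℕ))
        else H0 lam mu c ⟨n - 1 - (j:ℕ), by have := j.isLt; omega⟩
          * t ^ (((j:ℕ):ℤ) - (r:ℕ)) := by
    refine Finset.sum_congr rfl fun j _ => ?_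
    by_cases hj : r ≤ (j:ℕ)
    · rw [if_pos hj, if_pos hj, hc' j, dif_neg (by omega)]
    · rw [if_neg hj, if_neg hj, hc' j, dif_pos (by omega)]
  rw [hS] at A
  have T := transfer_fwd hr hNn t (H0 lam mu c) c
  linarith [A, B, T]

lemma key_bwd {n N : ℕ} {f σ : LaurentPolynomial ℝ} {r : ℕ} (hr : r ≤ N) (hNn : N ≤ n)
    {H0 Hr : (Fin n → ℝ) → (Fin n → ℝ) → (Fin N → ℝ) → Fin n → ℝ}
    (hH0 : SepSol n N f σ 0 H0) (hHr : SepSol n N f σ r Hr)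
    {lam : Fin n → ℝ} (hlam : lam ∈ Omega n) (mub : Fin n → ℝ) (cb : Fin N → ℝ)
    (mu : Fin n → ℝ) (c : Fin N → ℝ)
    (hmu : ∀ i, mu i = lam i ^ ((r:ℕ):ℤ) * mub i)
    (hc : ∀ j : Fin N, c j = if h : (j:ℕ) < r then
        Hr lam mub cb ⟨r - 1 - (j:ℕ), by omega⟩ else cb j) :
    H0 lam mu c = fun q : Fin n => if h : (q:ℕ) < n - r then
        Hr lam mub cb ⟨(q:ℕ) + r, by omega⟩
      else cb ⟨n - 1 - (q:ℕ), by have := q.isLt; omega⟩ := by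
  apply sep_unique_s8 hlam
  intro i
  set t := lam i with hti
  have ht : t ≠ 0 := hlam.1 i
  have hT : t ^ ((r:ℕ):ℤ) ≠ 0 := zpow_ne_zero _ ht
  have A0 := hH0 lam hlam mu c i
  simp only [Nat.cast_zero, neg_zero, zpow_zero, mul_one, sub_zero, Nat.zero_le, if_true] at A0
  have Ar := hHr lam hlam mub cb i
  have B : leval σ t
      + (∑ j : Fin N, if r ≤ (j:ℕ) then cb j * t ^ ((n:ℤ) + (j:ℕ)) else cb j * t ^ (((j:ℕ):ℤ)))
      + (∑ q : Fin n, Hr lam mub cb q * t ^ ((n:ℤ) - 1 - (q:ℕ) + (r:ℕ)))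
      = leval f t * mu i ^ 2 := by
    have e1 : ∀ j : Fin N, (if r ≤ (j:ℕ) then cb j * t ^ ((n:ℤ) + (j:ℕ))
          else cb j * t ^ (((j:ℕ):ℤ)))
        = (if r ≤ (j:ℕ) then cb j * t ^ ((n:ℤ) + (j:ℕ) - (r:ℕ))
          else cb j * t ^ (((j:ℕ):ℤ) - (r:ℕ))) * t ^ ((r:ℕ):ℤ) := by
      intro j
      by_cases hj : r ≤ (j:ℕ)
      · rw [if_pos hj, if_pos hj, zpow_sub₀ ht]; field_simp
      · rw [if_neg hj, if_neg hj, zpow_sub₀ ht]; field_simp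
    have e2 : ∀ q : Fin n, Hr lam mub cb q * t ^ ((n:ℤ) - 1 - (q:ℕ) + (r:ℕ))
        = Hr lam mub cb q * t ^ ((n:ℤ) - 1 - (q:ℕ)) * t ^ ((r:ℕ):ℤ) := by
      intro q; rw [mul_assoc, ← zpow_add₀ ht]
    have e0 : leval σ t = leval σ t * t ^ (-(r:ℤ)) * t ^ ((r:ℕ):ℤ) := by
      rw [mul_assoc, ← zpow_add₀ ht, show (-(r:ℤ) + (r:ℕ)) = 0 by ring, zpow_zero, mul_one]
    rw [Finset.sum_congr rfl fun j _ => e1 j, Finset.sum_congr rfl fun q _ => e2 q, e0,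
      ← Finset.sum_mul, ← Finset.sum_mul, ← add_mul, ← add_mul, Ar, hmu i]
    ring
  have hS : (∑ j : Fin N, c j * t ^ ((n:ℤ) + (j:ℕ)))
      = ∑ j : Fin N, (if h : (j:ℕ) < r then Hr lam mub cb ⟨r - 1 - (j:ℕ), by omega⟩ else cb j)
          * t ^ ((n:ℤ) + (j:ℕ)) := by
    refine Finset.sum_congr rfl fun j _ => ?_
    rw [hc j]
  rw [hS] at A0
  have T := transfer_bwd hr hNn t (Hr lam mub cb) cb
  linarith [A0, B, T]

lemma key_fwd' {n N : ℕ} (hn : 1 ≤ n) {f σ : LaurentPolynomial ℝ} {r : ℕ}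
    (hr : r ≤ N) (hNn : N ≤ n)
    {H0 Hr : (Fin n → ℝ) → (Fin n → ℝ) → (Fin N → ℝ) → Fin n → ℝ}
    (hH0 : SepSol n N f σ 0 H0) (hHr : SepSol n N f σ r Hr)
    (x : PhaseP n N) (hx : x.1 ∈ Omega n) :
    Hr x.1 (Mrs n N hn 0 r H0 x).2.1 (Mrs n N hn 0 r H0 x).2.2
      = fun q : Fin n => if h : (q:ℕ) < r then x.2.2 ⟨r - 1 - (q:ℕ), by omega⟩
        else H0 x.1 x.2.1 x.2.2 ⟨(q:ℕ) - r, by have := q.isLt; omega⟩ := by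
  apply key_fwd hr hNn hH0 hHr hx x.2.1 x.2.2 _ _ ?_ ?_
  · intro i; simp only [Mrs]; norm_num
  · intro j
    simp only [Mrs]
    by_cases hj : (j:ℕ) < r
    · rw [dif_pos ⟨Nat.zero_le _, hj⟩, dif_pos hj]
      congr 1
      exact Fin.ext (by simp only [Fin.val_mk]; omega)
    · rw [dif_neg (fun hh => hj hh.2), dif_neg hj]

/-- for `0 ≤ r < s ≤ N`, `M_{r→s} = M_{0→s} ∘ (M_{0→r})⁻¹` as maps of
`Ω × ℝⁿ × ℝᴺ`, where `M_{0→r}` is a bijection of `Ω × ℝⁿ × ℝᴺ` onto itself (and `M_{0→0}`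
is the identity).  Equivalently (composing with the bijection `M_{0→r}`):
`M_{r→s} ∘ M_{0→r} = M_{0→s}` on `Ω × ℝⁿ × ℝᴺ`. -/
theorem miura_map_composition
    (n N : ℕ) (hn : 1 ≤ n) (hN1 : 1 ≤ N) (hNn : N ≤ n)
    (f σ : LaurentPolynomial ℝ) (r s : ℕ) (hrs : r < s) (hsN : s ≤ N)
    (H0 Hr : (Fin n → ℝ) → (Fin n → ℝ) → (Fin N → ℝ) → Fin n → ℝ)
    (hH0 : SepSol n N f σ 0 H0) (hHr : SepSol n N f σ r Hr) :
    Set.BijOn (Mrs n N hn 0 r H0)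
        {x : PhaseP n N | x.1 ∈ Omega n} {x : PhaseP n N | x.1 ∈ Omega n}
    ∧ ∀ x : PhaseP n N, x.1 ∈ Omega n →
        Mrs n N hn r s Hr (Mrs n N hn 0 r H0 x) = Mrs n N hn 0 s H0 x := by
  have hrN : r ≤ N := hrs.le.trans hsN
  have hsn : s ≤ n := hsN.trans hNn
  constructor
  · refine ⟨fun x hx => hx, ?_, ?_⟩
    · -- injectivity
      intro x hx y hy hxy
      simp only [Set.mem_setOf_eq] at hx hy
      have h1 : x.1 = y.1 := by
        have h := congrArg (fun z : PhaseP n N => z.1) hxy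
        exact h
      have h21 : (Mrs n N hn 0 r H0 x).2.1 = (Mrs n N hn 0 r H0 y).2.1 :=
        congrArg (fun z => z.2.1) hxy
      have h22 : (Mrs n N hn 0 r H0 x).2.2 = (Mrs n N hn 0 r H0 y).2.2 :=
        congrArg (fun z => z.2.2) hxy
      have hmu : x.2.1 = y.2.1 := by
        funext i
        have h2 := congrFun h21 i
        simp only [Mrs] at h2
        rw [h1] at h2
        exact mul_left_cancel₀ (zpow_ne_zero _ (hy.1 i)) h2
      have Kx := key_fwd' hn hrN hNn hH0 hHr x hx
      have Ky := key_fwd' hn hrN hNn hH0 hHr y hy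
      have hc : x.2.2 = y.2.2 := by
        funext j
        by_cases hj : (j:ℕ) < r
        · have hq : (r - 1 - (j:ℕ) : ℕ) < n := by omega
          have ex := congrFun Kx ⟨r - 1 - (j:ℕ), hq⟩
          have ey := congrFun Ky ⟨r - 1 - (j:ℕ), hq⟩
          rw [dif_pos (show ((⟨r - 1 - (j:ℕ), hq⟩ : Fin n) : ℕ) < r by
            simp only [Fin.val_mk]; omega)] at ex ey
          rw [h1, h21, h22, ey] at ex
          have hfin : ∀ (g : Fin N → ℝ) (z : Fin N), (z : ℕ) = (j:ℕ) → g z = g j :=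
            fun g z hz => by rw [Fin.ext hz]
          calc x.2.2 j = x.2.2 _ := (hfin x.2.2 _ (by simp only [Fin.val_mk]; omega)).symm
            _ = y.2.2 _ := ex.symm
            _ = y.2.2 j := hfin y.2.2 _ (by simp only [Fin.val_mk]; omega)
        · have h2 := congrFun h22 j
          simp only [Mrs] at h2
          rw [dif_neg (fun hh => hj hh.2), dif_neg (fun hh => hj hh.2)] at h2
          exact h2
      exact Prod.ext_iff.mpr ⟨h1, Prod.ext_iff.mpr ⟨hmu, hc⟩⟩
    · -- surjectivity
      intro y hy
      simp only [Set.mem_setOf_eq] at hy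
      refine ⟨(y.1, fun i => y.1 i ^ ((r:ℕ):ℤ) * y.2.1 i,
          fun j => if h : (j:ℕ) < r then Hr y.1 y.2.1 y.2.2 ⟨r - 1 - (j:ℕ), by omega⟩
            else y.2.2 j), hy, ?_⟩
      have KB := key_bwd hrN hNn hH0 hHr hy y.2.1 y.2.2
        (fun i => y.1 i ^ ((r:ℕ):ℤ) * y.2.1 i)
        (fun j => if h : (j:ℕ) < r then Hr y.1 y.2.1 y.2.2 ⟨r - 1 - (j:ℕ), by omega⟩
            else y.2.2 j) (fun i => rfl) (fun j => rfl)
      refine Prod.ext_iff.mpr ⟨rfl, Prod.ext_iff.mpr ⟨?_, ?_⟩⟩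
      · funext i
        show y.1 i ^ (((0:ℕ):ℤ) - (r:ℕ)) * (y.1 i ^ ((r:ℕ):ℤ) * y.2.1 i) = y.2.1 i
        rw [← mul_assoc, ← zpow_add₀ (hy.1 i),
          show ((((0:ℕ):ℤ)) - (r:ℕ) + ((r:ℕ):ℤ)) = 0 by push_cast; ring, zpow_zero, one_mul]
      · funext j
        simp only [Mrs]
        by_cases hj : (j:ℕ) < r
        · rw [dif_pos ⟨Nat.zero_le _, hj⟩]
          have hq : (n + 0 - (j:ℕ) - 1 : ℕ) < n := by omega
          have e := congrFun KB ⟨n + 0 - (j:ℕ) - 1, hq⟩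
          rw [dif_neg (show ¬ ((⟨n + 0 - (j:ℕ) - 1, hq⟩ : Fin n) : ℕ) < n - r by
            simp only [Fin.val_mk]; omega)] at e
          rw [e]
          exact congrArg _ (Fin.ext (by simp only [Fin.val_mk]; omega))
        · rw [dif_neg (fun hh => hj hh.2), dif_neg hj]
  · -- composition
    intro x hx
    have K := key_fwd' hn hrN hNn hH0 hHr x hx
    refine Prod.ext_iff.mpr ⟨rfl, Prod.ext_iff.mpr ⟨?_, ?_⟩⟩
    · funext i
      simp only [Mrs]
      rw [← mul_assoc, ← zpow_add₀ (hx.1 i),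
        show ((r:ℤ) - (s:ℕ) + (((0:ℕ):ℤ) - (r:ℕ))) = (((0:ℕ):ℤ) - (s:ℕ)) by push_cast; ring]
    · funext j
      simp only [Mrs]
      by_cases hjr : (j:ℕ) < r
      · rw [dif_neg (fun hh : r ≤ (j:ℕ) ∧ (j:ℕ) < s => by omega),
          dif_pos ⟨Nat.zero_le _, hjr⟩, dif_pos ⟨Nat.zero_le _, lt_of_lt_of_le hjr hrs.le⟩]
      · by_cases hjs : (j:ℕ) < s
        · rw [dif_pos ⟨not_lt.mp hjr, hjs⟩, dif_pos ⟨Nat.zero_le _, hjs⟩]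
          have hq : (n + r - (j:ℕ) - 1 : ℕ) < n := by omega
          have e := congrFun K ⟨n + r - (j:ℕ) - 1, hq⟩
          simp only [Mrs] at e
          rw [dif_neg (show ¬ ((⟨n + r - (j:ℕ) - 1, hq⟩ : Fin n) : ℕ) < r by
            simp only [Fin.val_mk]; omega)] at e
          rw [e]
          exact congrArg _ (Fin.ext (by simp only [Fin.val_mk]; omega))
        · rw [dif_neg (fun hh : r ≤ (j:ℕ) ∧ (j:ℕ) < s => hjs hh.2),
            dif_neg (fun hh : 0 ≤ (j:ℕ) ∧ (j:ℕ) < s => hjs hh.2),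
            dif_neg (fun hh : 0 ≤ (j:ℕ) ∧ (j:ℕ) < r => hjr hh.2)]
end
end
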